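/- arXiv:1607.00071 — 11 statements merged into one kernel-verified Lean document; each statement's English description precedes it below -/
import Mathlib

section
/- Let n > 1 and let h_1, ..., h_n be nonzero elements of a real (or complex) Hilbert space H such that no two of them are collinear (i.e., h_i is not a scalar multiple of h_j for i ≠ j). Then the tensor powers h_1^{⊗(n-1)}, ..., h_n^{⊗(n-1)} are linearly independent in H^{⊗(n-1)}. -/
open scoped TensorProduct

/-- A vector avoiding finitely many hyperplanes: given finitely many nonzero vectors `a i`
in a real inner product space, there is `x` with `⟪a i, x⟫ ≠ 0` for all `i`. -/
lemma exists_inner_ne_zero {H : Type*} [NormedAddCommGroup H] [InnerProductSpace ℝ H]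
    {ι : Type*} [Finite ι] (a : ι → H) (ha : ∀ i, a i ≠ 0) :
    ∃ x : H, ∀ i, inner ℝ (a i) x ≠ (0 : ℝ) := by
  by_contra hcon
  push_neg at hcon
  have hcov : ⋃ i, ((LinearMap.ker (innerₛₗ ℝ (a i)) : Submodule ℝ H) : Set H) = Set.univ := by
    ext x
    simp only [Set.mem_iUnion, Set.mem_univ, iff_true, SetLike.mem_coe, LinearMap.mem_ker]
    obtain ⟨i, hi⟩ := hcon x
    exact ⟨i, hi⟩
  obtain ⟨i, hi⟩ := Subspace.exists_eq_top_of_iUnion_eq_univ hcov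
  have : inner ℝ (a i) (a i) = (0 : ℝ) := by
    have : a i ∈ LinearMap.ker (innerₛₗ ℝ (a i)) := hi ▸ Submodule.mem_top
    simpa using this
  exact ha i (inner_self_eq_zero.mp this)

lemma card_filter_fin_lt (k m : ℕ) (hm : m ≤ k) :
    (Finset.filter (fun j : Fin k => (j : ℕ) < m) Finset.univ).card = m := by
  have : Finset.filter (fun j : Fin k => (j : ℕ) < m) Finset.univ
      = (Finset.range m).attachFin (fun x hx => lt_of_lt_of_le (Finset.mem_range.mp hx) hm) := by
    ext j
    simp [Finset.mem_attachFin, Finset.mem_range]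
  rw [this, Finset.card_attachFin, Finset.card_range]

/-- If `h 1, …, h n` (`n > 1`) are nonzero, pairwise non-collinear elements of a real Hilbert
space `H`, then the tensor powers `(h 1)^{⊗(n-1)}, …, (h n)^{⊗(n-1)}` are linearly
independent in `H^{⊗(n-1)}`. (Linear independence of these algebraic tensors is equivalent to
linear independence in the Hilbert space tensor power, since the algebraic tensor power embeds
in its completion.) -/
theorem tensor_powers_linearIndependent
    {H : Type*} [NormedAddCommGroup H] [InnerProductSpace ℝ H] [CompleteSpace H]
    (n : ℕ) (hn : 1 < n) (h : Fin n → H)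
    (hz : ∀ i, h i ≠ 0)
    (hcol : ∀ i j, i ≠ j → ∀ c : ℝ, h i ≠ c • h j) :
    LinearIndependent ℝ
      (fun i : Fin n => PiTensorProduct.tprod ℝ (fun _ : Fin (n - 1) => h i)) := by
  set k := n - 1 with hk
  -- choose y with ⟪h i, y⟫ ≠ 0 for all i
  obtain ⟨y, hy⟩ := exists_inner_ne_zero h hz
  -- choose x separating the ratios
  set a : {p : Fin n × Fin n // p.1 ≠ p.2} → H :=
    fun p => (inner ℝ (h p.1.2) y : ℝ) • h p.1.1 - (inner ℝ (h p.1.1) y : ℝ) • h p.1.2 with ha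
  have ha0 : ∀ p, a p ≠ 0 := by
    intro p hp
    have h1 : (inner ℝ (h p.1.2) y : ℝ) • h p.1.1 = (inner ℝ (h p.1.1) y : ℝ) • h p.1.2 :=
      sub_eq_zero.mp hp
    have h2 : h p.1.1 = ((inner ℝ (h p.1.1) y : ℝ) / (inner ℝ (h p.1.2) y : ℝ)) • h p.1.2 := by
      rw [div_eq_inv_mul, ← smul_smul, ← h1, smul_smul,
        inv_mul_cancel₀ (hy p.1.2), one_smul]
    exact hcol p.1.1 p.1.2 p.2 _ h2
  obtain ⟨x, hx⟩ := exists_inner_ne_zero a ha0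
  -- notation for the two coordinates
  set f : Fin n → ℝ := fun i => inner ℝ (h i) x with hf
  set g : Fin n → ℝ := fun i => inner ℝ (h i) y with hg
  have hg0 : ∀ i, g i ≠ 0 := hy
  -- the ratios r i are pairwise distinct
  set r : Fin n → ℝ := fun i => f i / g i with hr
  have hrinj : Function.Injective r := by
    intro i j hij
    by_contra hne
    have hcross : g j * f i = g i * f j := by
      have h1 : f i * g j = f j * g i := (div_eq_div_iff (hg0 i) (hg0 j)).mp hij
      linear_combination h1
    apply hx ⟨(i, j), hne⟩
    have : a ⟨(i, j), hne⟩ = (inner ℝ (h j) y : ℝ) • h i - (inner ℝ (h i) y : ℝ) • h j := rfl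
    rw [this, inner_sub_left, inner_smul_left]
    simp only [RCLike.ofReal_real_eq_id, id_eq, real_inner_smul_left, conj_trivial]
    show g j * f i - g i * f j = 0
    linear_combination hcross
  -- now prove linear independence
  rw [Fintype.linearIndependent_iff]
  intro c hc i₀
  -- moments: for each m ≤ k, ∑ c i * f i ^ m * g i ^ (k - m) = 0
  have moments : ∀ m : ℕ, m ≤ k →
      ∑ i, c i * (f i ^ m * g i ^ (k - m)) = 0 := by
    intro m hm
    classical
    set w : Fin k → H := fun j => if (j : ℕ) < m then x else y with hw
    set L : (⨂[ℝ] _ : Fin k, H) →ₗ[ℝ] ℝ :=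
      PiTensorProduct.lift
        ((MultilinearMap.mkPiAlgebra ℝ (Fin k) ℝ).compLinearMap
          (fun j => innerₛₗ ℝ (w j))) with hL
    have h0 := congrArg L hc
    rw [map_sum, map_zero] at h0
    have hterm : ∀ i, L (c i • PiTensorProduct.tprod ℝ (fun _ : Fin k => h i))
        = c i * (f i ^ m * g i ^ (k - m)) := by
      intro i
      rw [map_smul, smul_eq_mul]
      congr 1
      rw [hL, PiTensorProduct.lift.tprod]
      simp only [MultilinearMap.compLinearMap_apply, MultilinearMap.mkPiAlgebra_apply]
      have heach : ∀ j : Fin k, (innerₛₗ ℝ (w j)) (h i) = if (j : ℕ) < m then f i else g i := by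
        intro j
        rw [hw]
        by_cases hj : (j : ℕ) < m <;> simp [hj, hf, hg, real_inner_comm]
      rw [Finset.prod_congr rfl (fun j _ => heach j), Finset.prod_ite,
        Finset.prod_const, Finset.prod_const, card_filter_fin_lt k m hm]
      congr 1
      rw [Finset.filter_not, Finset.card_sdiff_of_subset (Finset.filter_subset _ _),
        card_filter_fin_lt k m hm, Finset.card_univ, Fintype.card_fin]
    rw [Finset.sum_congr rfl (fun i _ => hterm i)] at h0
    exact h0
  -- Vandermonde step
  set d : Fin n → ℝ := fun i => c i * g i ^ k with hd
  have hdm : ∀ m : Fin n, ∑ i, d i * r i ^ (m : ℕ) = 0 := by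
    intro m
    have hmk : (m : ℕ) ≤ k := Nat.le_pred_of_lt m.isLt
    rw [← moments m hmk]
    refine Finset.sum_congr rfl fun i _ => ?_
    have hpow : g i ^ ((k : ℕ) - (m : ℕ)) = g i ^ k / g i ^ (m : ℕ) :=
      pow_sub₀ (g i) (hg0 i) hmk
    rw [hd, hr, div_pow, hpow]
    field_simp
  have hd0 : d = 0 :=
    Matrix.eq_zero_of_forall_pow_sum_mul_pow_eq_zero hrinj hdm
  have : c i₀ * g i₀ ^ k = 0 := congrFun hd0 i₀
  rcases mul_eq_zero.mp this with h0 | h0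
  · exact h0
  · exact absurd h0 (pow_ne_zero k (hg0 i₀))
end

section
/- Any mixture of measures with m components is (2m−1)-identifiable: if P = Σ_{i=1}^m a_i δ_{μ_i} and P' = Σ_{j=1}^l b_j δ_{ν_j} are mixtures of measures on an arbitrary measurable space with l ≤ m, and Σ_{i=1}^m a_i μ_i^{×(2m−1)} = Σ_{j=1}^l b_j ν_j^{×(2m−1)} as measures on the (2m−1)-fold product space, then P = P' (i.e., l = m and there is a permutation σ with ν_j = μ_{σ(j)} and b_j = a_{σ(j)}). -/
open MeasureTheory

/-- A mixture of measures on a measurable space `Ω`: a finite convex combination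
`∑ i, w i • δ_{μ i}` of Dirac masses at distinct probability measures, with
strictly positive weights summing to one. -/
structure MixtureOfMeasures (Ω : Type*) [MeasurableSpace Ω] where
  m : ℕ
  w : Fin m → ℝ
  μ : Fin m → Measure Ω
  prob : ∀ i, IsProbabilityMeasure (μ i)
  pos : ∀ i, 0 < w i
  sum_one : ∑ i, w i = 1
  inj : Function.Injective μ

namespace MixtureOfMeasures

variable {Ω : Type*} [MeasurableSpace Ω]

/-- `V n P = ∑ i, w i • (μ i)^{×n}`, the measure on the `n`-fold product space induced by
drawing `μ ∼ P` and then `n` iid samples from `μ`. -/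
noncomputable def V (P : MixtureOfMeasures Ω) (n : ℕ) : Measure (Fin n → Ω) :=
  ∑ i, ENNReal.ofReal (P.w i) • Measure.pi (fun _ : Fin n => P.μ i)

/-- Two mixtures of measures are equal (as mixtures) if their components and weights agree
up to a permutation. -/
def Equal (P P' : MixtureOfMeasures Ω) : Prop :=
  ∃ σ : Fin P'.m ≃ Fin P.m, ∀ j, P'.μ j = P.μ (σ j) ∧ P'.w j = P.w (σ j)

end MixtureOfMeasures

section AuxLemmas
section Aux
variable {Ω : Type*} [MeasurableSpace Ω]

lemma aux_integral_sum_indicator (μ : Measure Ω) [IsFiniteMeasure μ] {ι' : Type*} [Fintype ι']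
    (A : ι' → Set Ω) (hA : ∀ p, MeasurableSet (A p)) (r : ι' → ℝ) :
    ∫ ω, (∑ p, (A p).indicator (fun _ => r p) ω) ∂μ = ∑ p, (μ (A p)).toReal * r p := by
  rw [integral_finset_sum]
  · refine Finset.sum_congr rfl fun p _ => ?_
    rw [integral_indicator_const _ (hA p), smul_eq_mul]; rfl
  · exact fun p _ => (integrable_const (r p)).indicator (hA p)

lemma exists_separating {ι : Type*} [Fintype ι] (κ : ι → Measure Ω)
    (hκ : ∀ x, IsProbabilityMeasure (κ x)) :
    ∃ f : Ω → ℝ, Measurable f ∧ (∃ C : ℝ, ∀ ω, |f ω| ≤ C) ∧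
      ∀ x y, κ x ≠ κ y → ∫ ω, f ω ∂(κ x) ≠ ∫ ω, f ω ∂(κ y) := by
  classical
  haveI : ∀ x, IsFiniteMeasure (κ x) := fun x => haveI := hκ x; inferInstance
  have hA : ∀ p : ι × ι, ∃ A : Set Ω, MeasurableSet A ∧ (κ p.1 ≠ κ p.2 → κ p.1 A ≠ κ p.2 A) := by
    intro p
    by_cases h : κ p.1 = κ p.2
    · exact ⟨∅, MeasurableSet.empty, fun hc => absurd h hc⟩
    · have h' : ¬ ∀ s, MeasurableSet s → κ p.1 s = κ p.2 s := fun hc => h (Measure.ext hc)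
      push_neg at h'
      obtain ⟨s, hs, hne⟩ := h'
      exact ⟨s, hs, fun _ => hne⟩
  choose A hAm hAne using hA
  set e : ι × ι → ℕ := fun p => (Fintype.equivFin (ι × ι) p : ℕ) with he
  have he_inj : Function.Injective e := fun p q h =>
    (Fintype.equivFin (ι × ι)).injective (Fin.val_injective h)
  set d : ι × ι → ι × ι → ℝ :=
    fun q p => (κ q.1 (A p)).toReal - (κ q.2 (A p)).toReal with hd
  set Q : ι × ι → Polynomial ℝ :=
    fun q => ∑ p, Polynomial.C (d q p) * Polynomial.X ^ (e p) with hQ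
  have hQne : ∀ q : ι × ι, κ q.1 ≠ κ q.2 → Q q ≠ 0 := by
    intro q hq
    have hco : (Q q).coeff (e q) = d q q := by
      rw [hQ]
      simp only [Polynomial.finset_sum_coeff, Polynomial.coeff_C_mul, Polynomial.coeff_X_pow]
      rw [Finset.sum_eq_single q]
      · simp
      · intro p _ hp
        have hne : e q ≠ e p := fun hc => hp (he_inj hc).symm
        simp [hne]
      · simp
    have hdq : d q q ≠ 0 := by
      intro hc
      apply hAne q hq
      have h1 : κ q.1 (A q) ≠ ⊤ := measure_ne_top _ _
      have h2 : κ q.2 (A q) ≠ ⊤ := measure_ne_top _ _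
      rw [hd] at hc
      exact (ENNReal.toReal_eq_toReal_iff' h1 h2).mp (sub_eq_zero.mp hc)
    intro hc
    rw [hc] at hco
    exact hdq (by simpa using hco.symm)
  have hbad : (⋃ q ∈ {q : ι × ι | κ q.1 ≠ κ q.2}, {x : ℝ | (Q q).IsRoot x}).Finite := by
    apply Set.Finite.biUnion (Set.toFinite _)
    intro q hq
    exact Polynomial.finite_setOf_isRoot (hQne q hq)
  obtain ⟨ε, hε⟩ := hbad.infinite_compl.nonempty
  refine ⟨fun ω => ∑ p, (A p).indicator (fun _ => ε ^ e p) ω, ?_, ?_, ?_⟩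
  · exact Finset.measurable_sum _ fun p _ => (measurable_const).indicator (hAm p)
  · refine ⟨∑ p : ι × ι, |ε| ^ e p, fun ω => ?_⟩
    calc |∑ p, (A p).indicator (fun _ => ε ^ e p) ω|
        ≤ ∑ p, |(A p).indicator (fun _ => ε ^ e p) ω| := Finset.abs_sum_le_sum_abs _ _
      _ ≤ ∑ p : ι × ι, |ε| ^ e p := by
          refine Finset.sum_le_sum fun p _ => ?_
          rw [← abs_pow]
          by_cases h : ω ∈ A p <;> simp [Set.indicator_apply, h, abs_nonneg]
  · intro x y hxy hc
    have hint : ∀ z : ι, ∫ ω, (∑ p, (A p).indicator (fun _ => ε ^ e p) ω) ∂ κ z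
        = ∑ p, (κ z (A p)).toReal * ε ^ e p :=
      fun z => aux_integral_sum_indicator (κ z) A hAm _
    have hroot : (Q (x, y)).eval ε = 0 := by
      rw [hQ]
      simp only [Polynomial.eval_finset_sum, Polynomial.eval_mul, Polynomial.eval_C,
        Polynomial.eval_pow, Polynomial.eval_X]
      have hz := sub_eq_zero.mpr hc
      rw [hint x, hint y, ← Finset.sum_sub_distrib] at hz
      rw [← hz]
      refine Finset.sum_congr rfl fun p _ => ?_
      rw [hd]; ring
    exact hε (Set.mem_biUnion (show (x, y) ∈ {q : ι × ι | κ q.1 ≠ κ q.2} from hxy) hroot)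



lemma aux_card_filter_lt (n j : ℕ) (hj : j ≤ n) :
    (Finset.univ.filter fun t : Fin n => (t : ℕ) < j).card = j := by
  classical
  have himg : (Finset.univ.filter fun t : Fin n => (t : ℕ) < j)
      = Finset.image (Fin.castLE hj) Finset.univ := by
    ext t
    simp only [Finset.mem_filter, Finset.mem_univ, true_and, Finset.mem_image]
    constructor
    · intro ht; exact ⟨⟨(t : ℕ), ht⟩, Fin.ext rfl⟩
    · rintro ⟨u, -, rfl⟩; exact u.2
  rw [himg, Finset.card_image_of_injective _ (Fin.castLE_injective hj)]
  simp

lemma aux_integral_pi_pow (μ : Measure Ω) [hμ : IsProbabilityMeasure μ] (f : Ω → ℝ)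
    (n j : ℕ) (hj : j ≤ n) :
    ∫ x : Fin n → Ω, (∏ t : Fin n, if (t : ℕ) < j then f (x t) else 1)
      ∂ Measure.pi (fun _ : Fin n => μ) = (∫ ω, f ω ∂μ) ^ j := by
  classical
  letI : MeasureSpace Ω := ⟨μ⟩
  haveI : IsProbabilityMeasure (volume : Measure Ω) := hμ
  have hvol : Measure.pi (fun _ : Fin n => μ) = (volume : Measure (Fin n → Ω)) :=
    (MeasureTheory.volume_pi).symm
  rw [hvol]
  have hfn : ∀ x : Fin n → Ω, (∏ t : Fin n, if (t : ℕ) < j then f (x t) else 1)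
      = ∏ t : Fin n, (if (t : ℕ) < j then f else fun _ => 1) (x t) := by
    intro x; refine Finset.prod_congr rfl fun t _ => ?_; split <;> rfl
  simp_rw [hfn]
  rw [MeasureTheory.volume_pi, MeasureTheory.integral_fintype_prod_eq_prod (ι := Fin n) (μ := fun _ => volume)
    (f := fun (t : Fin n) => (if (t : ℕ) < j then f else fun _ => 1))]
  have heval : ∀ t : Fin n, (∫ x, (if (t : ℕ) < j then f else fun _ => (1:ℝ)) x)
      = (if (t : ℕ) < j then ∫ ω, f ω ∂μ else 1) := by
    intro t; split
    · rfl
    · simp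
  rw [Finset.prod_congr rfl (fun t _ => heval t), Finset.prod_ite, Finset.prod_const,
    Finset.prod_const, one_pow, mul_one, aux_card_filter_lt n j hj]

lemma aux_integrable_prod_ite (μ : Measure Ω) [hμ : IsProbabilityMeasure μ] {f : Ω → ℝ}
    (hf : Measurable f) {C : ℝ} (hC : ∀ ω, |f ω| ≤ C) (n j : ℕ) :
    Integrable (fun x : Fin n → Ω => ∏ t : Fin n, if (t : ℕ) < j then f (x t) else 1)
      (Measure.pi (fun _ : Fin n => μ)) := by
  classical
  have hmeas : Measurable fun x : Fin n → Ω =>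
      ∏ t : Fin n, if (t : ℕ) < j then f (x t) else 1 := by
    apply Finset.measurable_prod
    intro t _
    by_cases h : (t : ℕ) < j
    · simpa [h, Function.comp_def] using hf.comp (measurable_pi_apply t)
    · simp only [h, if_false]; exact measurable_const
  refine (integrable_const ((max 1 C) ^ n)).mono' hmeas.aestronglyMeasurable ?_
  filter_upwards with x
  rw [Real.norm_eq_abs, Finset.abs_prod]
  calc (∏ t : Fin n, |if (t : ℕ) < j then f (x t) else 1|)
      ≤ ∏ _t : Fin n, max 1 C := by
        refine Finset.prod_le_prod (fun t _ => abs_nonneg _) (fun t _ => ?_)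
        by_cases h : (t : ℕ) < j
        · rw [if_pos h]; exact le_max_of_le_right (hC _)
        · rw [if_neg h, abs_one]; exact le_max_left _ _
    _ = (max 1 C) ^ n := by simp

end Aux
end AuxLemmas

/-- Any mixture of measures with `m` components is `(2m-1)`-identifiable. -/
theorem mixture_identifiable_two_m_sub_one {Ω : Type*} [MeasurableSpace Ω]
    (P P' : MixtureOfMeasures Ω) (hord : P'.m ≤ P.m)
    (hV : P'.V (2 * P.m - 1) = P.V (2 * P.m - 1)) :
    P'.Equal P := by
  classical
  set n := 2 * P.m - 1 with hn
  have hm : 0 < P.m := by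
    rcases Nat.eq_zero_or_pos P.m with h | h
    · exfalso
      have h1 := P.sum_one
      haveI : IsEmpty (Fin P.m) := by rw [h]; infer_instance
      rw [Finset.univ_eq_empty, Finset.sum_empty] at h1
      exact absurd h1 (by norm_num)
    · exact h
  -- combined family
  set κ : Fin P.m ⊕ Fin P'.m → Measure Ω := Sum.elim P.μ P'.μ with hκdef
  have hκprob : ∀ x, IsProbabilityMeasure (κ x) := by
    rintro (i | j)
    · exact P.prob i
    · exact P'.prob j
  obtain ⟨f, hfm, ⟨C, hfC⟩, hsep⟩ := exists_separating κ hκprob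
  set φ : Fin P.m ⊕ Fin P'.m → ℝ := fun x => ∫ ω, f ω ∂ κ x with hφdef
  have hφeq : ∀ x y, φ x = φ y → κ x = κ y := by
    intro x y h
    by_contra hc
    exact hsep x y hc h
  set c : Fin P.m ⊕ Fin P'.m → ℝ := Sum.elim P.w fun j' => -P'.w j' with hcdef
  -- the moment computation for a mixture
  have hint : ∀ (Q : MixtureOfMeasures Ω) (j : ℕ), j ≤ n →
      ∫ x : Fin n → Ω, (∏ t : Fin n, if (t : ℕ) < j then f (x t) else 1) ∂ Q.V n
      = ∑ i, Q.w i * (∫ ω, f ω ∂ Q.μ i) ^ j := by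
    intro Q j hj
    rw [MixtureOfMeasures.V, integral_finset_sum_measure ?_]
    · refine Finset.sum_congr rfl fun i _ => ?_
      haveI := Q.prob i
      rw [integral_smul_measure, aux_integral_pi_pow (Q.μ i) f n j hj,
        ENNReal.toReal_ofReal (Q.pos i).le, smul_eq_mul]
    · intro i _
      haveI := Q.prob i
      exact (aux_integrable_prod_ite (Q.μ i) hfm hfC n j).smul_measure ENNReal.ofReal_ne_top
  -- the moment identity
  have hmom : ∀ j : ℕ, j ≤ n →
      (∑ x : Fin P.m ⊕ Fin P'.m, c x * φ x ^ j) = 0 := by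
    intro j hj
    have h1 := hint P j hj
    have h2 := hint P' j hj
    rw [hV] at h2
    have h3 : ∑ i, P.w i * (∫ ω, f ω ∂ P.μ i) ^ j
        = ∑ i, P'.w i * (∫ ω, f ω ∂ P'.μ i) ^ j := h1.symm.trans h2
    rw [Fintype.sum_sum_type]
    simp only [hcdef, hφdef, hκdef, Sum.elim_inl, Sum.elim_inr, neg_mul,
      Finset.sum_neg_distrib]
    rw [h3, add_neg_cancel]
  -- grouping by values of φ
  set s : Finset ℝ := Finset.image φ Finset.univ with hsdef
  set k := s.card with hkdef
  have hks : k ≤ n + 1 := by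
    have h1 : k ≤ Fintype.card (Fin P.m ⊕ Fin P'.m) := by
      rw [hkdef, hsdef]
      exact (Finset.card_image_le).trans (by simp)
    have h2 : Fintype.card (Fin P.m ⊕ Fin P'.m) = P.m + P'.m := by simp
    omega
  set v : Fin k → ℝ := fun u => (s.orderIsoOfFin rfl u : ℝ) with hvdef
  have hv_inj : Function.Injective v := fun a b h =>
    (s.orderIsoOfFin rfl).injective (Subtype.ext h)
  have hv_surj : ∀ t ∈ s, ∃ u, v u = t := by
    intro t ht
    obtain ⟨u, hu⟩ := (s.orderIsoOfFin rfl).surjective ⟨t, ht⟩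
    exact ⟨u, congrArg Subtype.val hu⟩
  set Cc : ℝ → ℝ := fun t => ∑ x ∈ Finset.univ.filter (fun x : Fin P.m ⊕ Fin P'.m => φ x = t), c x
    with hCdef
  have hgroup : ∀ j : ℕ, j ≤ n → ∑ t ∈ s, Cc t * t ^ j = 0 := by
    intro j hj
    rw [← hmom j hj]
    have hexp : ∀ t ∈ s, Cc t * t ^ j
        = ∑ x ∈ Finset.univ.filter (fun x : Fin P.m ⊕ Fin P'.m => φ x = t), c x * φ x ^ j := by
      intro t _
      rw [hCdef, Finset.sum_mul]
      refine Finset.sum_congr rfl fun x hx => ?_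
      rw [(Finset.mem_filter.mp hx).2]
    rw [Finset.sum_congr rfl hexp]
    exact Finset.sum_fiberwise_of_maps_to (fun x _ => Finset.mem_image_of_mem φ (Finset.mem_univ x)) _
  have hCzero : ∀ t ∈ s, Cc t = 0 := by
    have hz : (fun u : Fin k => Cc (v u)) = 0 := by
      apply Matrix.eq_zero_of_forall_pow_sum_mul_pow_eq_zero hv_inj
      intro i
      have hi : (i : ℕ) ≤ n := by have := i.2; omega
      have hsum : ∑ u : Fin k, Cc (v u) * v u ^ (i : ℕ) = ∑ t ∈ s, Cc t * t ^ (i : ℕ) := by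
        rw [← Finset.sum_coe_sort s (fun t => Cc t * t ^ (i : ℕ))]
        exact Fintype.sum_equiv (s.orderIsoOfFin rfl).toEquiv _ _ (fun u => rfl)
      rw [hsum]
      exact hgroup (i : ℕ) hi
    intro t ht
    obtain ⟨u, hu⟩ := hv_surj t ht
    rw [← hu]
    exact congrFun hz u
  -- conclude the matching
  have key : ∀ i : Fin P.m, ∃ j, P'.μ j = P.μ i ∧ P'.w j = P.w i := by
    intro i
    have hmemi : φ (Sum.inl i) ∈ s := Finset.mem_image_of_mem φ (Finset.mem_univ _)
    have h0 := hCzero _ hmemi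
    rw [hCdef] at h0
    beta_reduce at h0
    rw [Finset.sum_filter, Fintype.sum_sum_type] at h0
    have e1 : ∀ i' : Fin P.m,
        (if φ (Sum.inl i') = φ (Sum.inl i) then c (Sum.inl i') else 0)
        = if i' = i then P.w i' else 0 := by
      intro i'
      have hiff : φ (Sum.inl i') = φ (Sum.inl i) ↔ i' = i := by
        constructor
        · intro h
          have h' := hφeq _ _ h
          simp only [hκdef, Sum.elim_inl] at h'
          exact P.inj h'
        · rintro rfl; rfl
      rw [if_congr hiff rfl rfl, hcdef]
      simp
    by_cases hex : ∃ j', P'.μ j' = P.μ i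
    · obtain ⟨j0, hj0⟩ := hex
      have e2 : ∀ j' : Fin P'.m,
          (if φ (Sum.inr j') = φ (Sum.inl i) then c (Sum.inr j') else 0)
          = if j' = j0 then -P'.w j' else 0 := by
        intro j'
        have hiff : φ (Sum.inr j') = φ (Sum.inl i) ↔ j' = j0 := by
          constructor
          · intro h
            have h' := hφeq _ _ h
            simp only [hκdef, Sum.elim_inl, Sum.elim_inr] at h'
            exact P'.inj (h'.trans hj0.symm)
          · intro hjj
            have hκeq : κ (Sum.inr j') = κ (Sum.inl i) := by
              simp only [hκdef, Sum.elim_inl, Sum.elim_inr]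
              rw [hjj]; exact hj0
            rw [hφdef]
            simp only
            rw [hκeq]
        rw [if_congr hiff rfl rfl, hcdef]
        simp
      rw [Finset.sum_congr rfl (fun i' _ => e1 i'),
        Finset.sum_congr rfl (fun j' _ => e2 j'),
        Finset.sum_ite_eq' Finset.univ i, Finset.sum_ite_eq' Finset.univ j0] at h0
      simp only [Finset.mem_univ, if_true] at h0
      exact ⟨j0, hj0, by linarith⟩
    · push_neg at hex
      have e2 : ∀ j' : Fin P'.m,
          (if φ (Sum.inr j') = φ (Sum.inl i) then c (Sum.inr j') else 0) = 0 := by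
        intro j'
        rw [if_neg]
        intro h
        have h' := hφeq _ _ h
        simp only [hκdef, Sum.elim_inl, Sum.elim_inr] at h'
        exact hex j' h'
      rw [Finset.sum_congr rfl (fun i' _ => e1 i'),
        Finset.sum_congr rfl (fun j' _ => e2 j'),
        Finset.sum_ite_eq' Finset.univ i] at h0
      simp only [Finset.mem_univ, if_true, Finset.sum_const_zero, add_zero] at h0
      exact absurd h0 (P.pos i).ne'
  choose e he1 he2 using key
  have he_inj : Function.Injective e := by
    intro i1 i2 h
    apply P.inj
    rw [← he1 i1, ← he1 i2, h]
  have hcard : P'.m = P.m :=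
    le_antisymm hord (by simpa using Fintype.card_le_of_injective e he_inj)
  have hbij : Function.Bijective e :=
    (Fintype.bijective_iff_injective_and_card e).mpr ⟨he_inj, by simp [hcard]⟩
  exact ⟨Equiv.ofBijective e hbij, fun j => ⟨(he1 j).symm, (he2 j).symm⟩⟩
end

section
/- Any mixture of measures with m components is 2m-determined: if P = Σ_{i=1}^m a_i δ_{μ_i} is a mixture of measures with m components and P' = Σ_{j=1}^l b_j δ_{ν_j} is any mixture of measures (with l arbitrary) on the same measurable space such that Σ_{i=1}^m a_i μ_i^{×2m} = Σ_{j=1}^l b_j ν_j^{×2m}, then P = P'. -/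
open MeasureTheory

namespace MixtureOfMeasures

variable {Ω : Type*} [MeasurableSpace Ω]

lemma V_apply_pi (Q : MixtureOfMeasures Ω) (n : ℕ) (B : Fin n → Set Ω) :
    Q.V n (Set.univ.pi B) = ∑ i, ENNReal.ofReal (Q.w i) * ∏ s, Q.μ i (B s) := by
  rw [V, Measure.finset_sum_apply]
  refine Finset.sum_congr rfl fun i _ => ?_
  haveI := Q.prob i
  rw [Measure.smul_apply, smul_eq_mul, Measure.pi_pi]

lemma V_apply_pi_toReal (Q : MixtureOfMeasures Ω) (n : ℕ) (B : Fin n → Set Ω) :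
    (Q.V n (Set.univ.pi B)).toReal = ∑ i, Q.w i * ∏ s, (Q.μ i (B s)).toReal := by
  rw [V_apply_pi]
  rw [ENNReal.toReal_sum]
  · refine Finset.sum_congr rfl fun i _ => ?_
    haveI := Q.prob i
    rw [ENNReal.toReal_mul, ENNReal.toReal_ofReal (Q.pos i).le, ENNReal.toReal_prod]
  · intro i _
    haveI := Q.prob i
    exact ENNReal.mul_ne_top ENNReal.ofReal_ne_top
      (ENNReal.prod_lt_top (fun s _ => measure_lt_top _ _)).ne

lemma moment_eq (P P' : MixtureOfMeasures Ω) {n : ℕ} (hV : P'.V n = P.V n)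
    (B : Fin n → Set Ω) :
    ∑ j, P'.w j * ∏ s, (P'.μ j (B s)).toReal
      = ∑ i, P.w i * ∏ s, (P.μ i (B s)).toReal := by
  rw [← V_apply_pi_toReal, ← V_apply_pi_toReal, hV]

lemma prod_padded (lam : Measure Ω) [IsProbabilityMeasure lam] {n : ℕ}
    (B : Fin n → Set Ω) (S : Finset (Fin n)) :
    ∏ s, (lam (if s ∈ S then B s else Set.univ)).toReal
      = ∏ s ∈ S, (lam (B s)).toReal := by
  rw [← Finset.prod_sdiff (Finset.subset_univ S)]
  have h2 : ∏ s ∈ Finset.univ \ S, (lam (if s ∈ S then B s else Set.univ)).toReal = 1 := by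
    refine Finset.prod_eq_one fun s hs => ?_
    rw [Finset.mem_sdiff] at hs
    simp [hs.2, measure_univ]
  rw [h2, one_mul]
  exact Finset.prod_congr rfl fun s hs => by simp [hs]

lemma moment_eq_subset (P P' : MixtureOfMeasures Ω) {n : ℕ} (hV : P'.V n = P.V n)
    (B : Fin n → Set Ω) (S : Finset (Fin n)) :
    ∑ j, P'.w j * ∏ s ∈ S, (P'.μ j (B s)).toReal
      = ∑ i, P.w i * ∏ s ∈ S, (P.μ i (B s)).toReal := by
  have := moment_eq P P' hV (fun s => if s ∈ S then B s else Set.univ)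
  calc ∑ j, P'.w j * ∏ s ∈ S, (P'.μ j (B s)).toReal
      = ∑ j, P'.w j * ∏ s, (P'.μ j (if s ∈ S then B s else Set.univ)).toReal := by
        refine Finset.sum_congr rfl fun j _ => ?_
        haveI := P'.prob j
        rw [prod_padded]
    _ = ∑ i, P.w i * ∏ s, (P.μ i (if s ∈ S then B s else Set.univ)).toReal := this
    _ = ∑ i, P.w i * ∏ s ∈ S, (P.μ i (B s)).toReal := by
        refine Finset.sum_congr rfl fun i _ => ?_
        haveI := P.prob i
        rw [prod_padded]

lemma poly_eq (P P' : MixtureOfMeasures Ω) {n : ℕ} (hV : P'.V n = P.V n)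
    (B : Fin n → Set Ω) (c : Fin n → ℝ) :
    ∑ j, P'.w j * ∏ s, ((P'.μ j (B s)).toReal - c s)
      = ∑ i, P.w i * ∏ s, ((P.μ i (B s)).toReal - c s) := by
  have expand : ∀ (Q : MixtureOfMeasures Ω),
      ∑ i, Q.w i * ∏ s, ((Q.μ i (B s)).toReal - c s)
      = ∑ S ∈ (Finset.univ : Finset (Fin n)).powerset,
          (∑ i, Q.w i * ∏ s ∈ S, (Q.μ i (B s)).toReal) * ∏ s ∈ Finset.univ \ S, (-c s) := by
    intro Q
    simp_rw [sub_eq_add_neg, Finset.prod_add, Finset.mul_sum]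
    rw [Finset.sum_comm]
    refine Finset.sum_congr rfl fun S _ => ?_
    rw [Finset.sum_mul]
    refine Finset.sum_congr rfl fun i _ => ?_
    ring
  rw [expand P, expand P']
  refine Finset.sum_congr rfl fun S _ => ?_
  rw [moment_eq_subset P P' hV B S]

lemma prod_double {m : ℕ} (f : Fin m → ℝ) :
    (∏ s : Fin (2 * m), f ((((finCongr (mul_comm m 2)).symm.trans
        finProdFinEquiv.symm) s).1))
      = ∏ t, f t ^ 2 := by
  set e : Fin m × Fin 2 ≃ Fin (2 * m) :=
    finProdFinEquiv.trans (finCongr (mul_comm m 2)) with he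
  have : (∏ s : Fin (2 * m), f ((e.symm s).1)) = ∏ p : Fin m × Fin 2, f p.1 := by
    rw [← Equiv.prod_comp e (fun s => f ((e.symm s).1))]
    refine Finset.prod_congr rfl fun p _ => ?_
    rw [Equiv.symm_apply_apply]
  rw [show (((finCongr (mul_comm m 2)).symm.trans finProdFinEquiv.symm)) = e.symm from rfl]
  rw [this, Fintype.prod_prod_type]
  refine Finset.prod_congr rfl fun t _ => ?_
  simp [Fin.prod_univ_two, sq]

/-- Key lemma: equality of degree-`2m` "square polynomial" moments. -/
lemma key_sq (P P' : MixtureOfMeasures Ω) (hV : P'.V (2 * P.m) = P.V (2 * P.m))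
    (D : Fin P.m → Set Ω) (d : Fin P.m → ℝ) :
    ∑ j, P'.w j * ∏ t, ((P'.μ j (D t)).toReal - d t) ^ 2
      = ∑ i, P.w i * ∏ t, ((P.μ i (D t)).toReal - d t) ^ 2 := by
  have h := poly_eq P P' hV
    (fun s => D ((((finCongr (mul_comm P.m 2)).symm.trans finProdFinEquiv.symm) s).1))
    (fun s => d ((((finCongr (mul_comm P.m 2)).symm.trans finProdFinEquiv.symm) s).1))
  calc ∑ j, P'.w j * ∏ t, ((P'.μ j (D t)).toReal - d t) ^ 2
      = ∑ j, P'.w j * ∏ s : Fin (2 * P.m),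
          ((P'.μ j (D ((((finCongr (mul_comm P.m 2)).symm.trans finProdFinEquiv.symm) s).1))).toReal
            - d ((((finCongr (mul_comm P.m 2)).symm.trans finProdFinEquiv.symm) s).1)) := by
        refine Finset.sum_congr rfl fun j _ => ?_
        rw [prod_double (fun t => (P'.μ j (D t)).toReal - d t)]
    _ = _ := h
    _ = ∑ i, P.w i * ∏ t, ((P.μ i (D t)).toReal - d t) ^ 2 := by
        refine Finset.sum_congr rfl fun i _ => ?_
        rw [prod_double (fun t => (P.μ i (D t)).toReal - d t)]

lemma exists_sep (μ ν : Measure Ω) [IsFiniteMeasure μ] [IsFiniteMeasure ν]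
    (h : μ ≠ ν) : ∃ A : Set Ω, (μ A).toReal ≠ (ν A).toReal := by
  by_contra hc
  push_neg at hc
  refine h (Measure.ext fun s _ => ?_)
  exact (ENNReal.toReal_eq_toReal_iff' (measure_ne_top _ _) (measure_ne_top _ _)).mp (hc s)

end MixtureOfMeasures

/-- Any mixture of measures with `m` components is `2m`-determined. -/
theorem mixture_determined_two_m {Ω : Type*} [MeasurableSpace Ω]
    (P P' : MixtureOfMeasures Ω)
    (hV : P'.V (2 * P.m) = P.V (2 * P.m)) :
    P'.Equal P := by
  classical
  have key := MixtureOfMeasures.key_sq P P' hV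
  -- Step 1: every component of P' is a component of P
  have step1 : ∀ j, ∃ i, P'.μ j = P.μ i := by
    intro j0
    by_contra hcon
    push_neg at hcon
    have hsep : ∀ i, ∃ A : Set Ω, ((P.μ i) A).toReal ≠ ((P'.μ j0) A).toReal := by
      intro i
      haveI := P.prob i; haveI := P'.prob j0
      exact MixtureOfMeasures.exists_sep _ _ (fun h => hcon i h.symm)
    choose A hA using hsep
    have hkey := key A (fun t => ((P.μ t) (A t)).toReal)
    have hR : ∑ i, P.w i * ∏ t, (((P.μ i) (A t)).toReal - ((P.μ t) (A t)).toReal) ^ 2 = 0 := by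
      refine Finset.sum_eq_zero fun i _ => ?_
      have : (∏ t, (((P.μ i) (A t)).toReal - ((P.μ t) (A t)).toReal) ^ 2) = 0 :=
        Finset.prod_eq_zero (Finset.mem_univ i) (by simp)
      rw [this, mul_zero]
    have hpos : 0 < ∑ j, P'.w j * ∏ t,
        (((P'.μ j) (A t)).toReal - ((P.μ t) (A t)).toReal) ^ 2 := by
      have hterm : 0 < P'.w j0 * ∏ t,
          (((P'.μ j0) (A t)).toReal - ((P.μ t) (A t)).toReal) ^ 2 := by
        refine mul_pos (P'.pos j0) (Finset.prod_pos fun t _ => ?_)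
        exact pow_two_pos_of_ne_zero (sub_ne_zero.mpr (hA t).symm)
      refine lt_of_lt_of_le hterm ?_
      refine Finset.single_le_sum
        (f := fun j => P'.w j * ∏ t, (((P'.μ j) (A t)).toReal - ((P.μ t) (A t)).toReal) ^ 2)
        (fun j _ => ?_) (Finset.mem_univ j0)
      exact mul_nonneg (P'.pos j).le (Finset.prod_nonneg fun t _ => sq_nonneg _)
    rw [hkey, hR] at hpos
    exact lt_irrefl 0 hpos
  choose τ hτ using step1
  have hτinj : Function.Injective τ := by
    intro j j' h
    apply P'.inj
    rw [hτ j, hτ j', h]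
  -- Step 3: weights of fibers match
  have hW : ∀ i, (∑ j ∈ Finset.univ.filter (fun j => τ j = i), P'.w j) = P.w i := by
    intro i
    have hsep : ∀ t, t ≠ i → ∃ A : Set Ω, ((P.μ i) A).toReal ≠ ((P.μ t) A).toReal := by
      intro t ht
      haveI := P.prob i; haveI := P.prob t
      exact MixtureOfMeasures.exists_sep _ _ (fun h => ht (P.inj h.symm))
    set A : Fin P.m → Set Ω :=
      fun t => if h : t = i then Set.univ else (hsep t h).choose with hAdef
    set d : Fin P.m → ℝ :=
      fun t => if t = i then 0 else ((P.μ t) (A t)).toReal with hddef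
    have hkey := key A d
    set Qi : ℝ := ∏ t, (((P.μ i) (A t)).toReal - d t) ^ 2 with hQidef
    have hQipos : 0 < Qi := by
      refine Finset.prod_pos fun t _ => ?_
      by_cases h : t = i
      · subst h
        haveI := P.prob t
        simp [hAdef, hddef, measure_univ]
      · refine pow_two_pos_of_ne_zero (sub_ne_zero.mpr ?_)
        have hspec := (hsep t h).choose_spec
        simp only [hAdef, hddef, if_neg h, dif_neg h]
        exact hspec
    have hq0 : ∀ t, t ≠ i → (∏ s, (((P.μ t) (A s)).toReal - d s) ^ 2) = 0 := by
      intro t ht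
      refine Finset.prod_eq_zero (Finset.mem_univ t) ?_
      simp [hddef, if_neg ht]
    have hLHS : ∑ j, P'.w j * ∏ t, (((P'.μ j) (A t)).toReal - d t) ^ 2
        = (∑ j ∈ Finset.univ.filter (fun j => τ j = i), P'.w j) * Qi := by
      rw [Finset.sum_mul]
      rw [Finset.sum_filter]
      refine Finset.sum_congr rfl fun j _ => ?_
      rw [hτ j]
      by_cases h : τ j = i
      · rw [if_pos h, h, hQidef]
      · rw [if_neg h, hq0 (τ j) h, mul_zero]
    have hRHS : ∑ t, P.w t * ∏ s, (((P.μ t) (A s)).toReal - d s) ^ 2 = P.w i * Qi := by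
      refine Finset.sum_eq_single i (fun t _ ht => ?_) (fun h => absurd (Finset.mem_univ i) h)
      rw [hq0 t ht, mul_zero]
    rw [hLHS, hRHS] at hkey
    exact mul_right_cancel₀ (ne_of_gt hQipos) hkey
  have hτsurj : Function.Surjective τ := by
    intro i
    by_contra hc
    push_neg at hc
    have hempty : Finset.univ.filter (fun j => τ j = i) = ∅ :=
      Finset.filter_eq_empty_iff.mpr (fun j _ => hc j)
    have := hW i
    rw [hempty, Finset.sum_empty] at this
    exact absurd this.symm (ne_of_gt (P.pos i))
  have hwj : ∀ j' : Fin P'.m, P'.w j' = P.w (τ j') := by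
    intro j'
    have hW' := hW (τ j')
    have hfib : Finset.univ.filter (fun x => τ x = τ j') = {j'} := by
      refine Finset.eq_singleton_iff_unique_mem.mpr ⟨by simp, fun x hx => ?_⟩
      rw [Finset.mem_filter] at hx
      exact hτinj hx.2
    rw [hfib, Finset.sum_singleton] at hW'
    exact hW'
  set eb : Fin P'.m ≃ Fin P.m := Equiv.ofBijective τ ⟨hτinj, hτsurj⟩ with heb
  refine ⟨eb.symm, fun j => ?_⟩
  have h1 : τ (eb.symm j) = j := eb.apply_symm_apply j
  constructor
  · rw [hτ (eb.symm j), h1]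
  · rw [hwj (eb.symm j), h1]
end

section
/- Let (Ω, F) be a measurable space with F ≠ {∅, Ω}. For every m ≥ 2 there exists a mixture of measures with m components that is not (2m−2)-identifiable: that is, there exist two distinct mixtures of measures P ≠ P', each with exactly m components, such that V_{2m−2}(P) = V_{2m−2}(P'). -/
open MeasureTheory

open Finset
open scoped Classical

lemma altStep (N : ℕ) (g : ℕ → ℝ) :
    ∑ k ∈ range (N+2), (-1:ℝ)^k * ((N+1).choose k) * g k
      = ∑ k ∈ range (N+1), (-1:ℝ)^k * (N.choose k) * (g k - g (k+1)) := by
  have h1 : ∑ k ∈ range (N+2), (-1:ℝ)^k * ((N+1).choose k) * g k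
      = (-1:ℝ)^0 * ((N+1).choose 0) * g 0
        + ∑ k ∈ range (N+1), (-1:ℝ)^(k+1) * ((N+1).choose (k+1)) * g (k+1) := by
    rw [Finset.sum_range_succ' (fun k => (-1:ℝ)^k * ((N+1).choose k) * g k) (N+1)]
    ring
  have h2 : ∀ k, ((N+1).choose (k+1) : ℝ) = (N.choose k : ℝ) + (N.choose (k+1) : ℝ) := by
    intro k
    rw [Nat.choose_succ_succ]
    push_cast; ring
  have h3 : ∑ k ∈ range (N+1), (-1:ℝ)^(k+1) * ((N+1).choose (k+1)) * g (k+1)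
      = ∑ k ∈ range (N+1), (-1:ℝ)^(k+1) * (N.choose k) * g (k+1)
        + ∑ k ∈ range (N+1), (-1:ℝ)^(k+1) * (N.choose (k+1)) * g (k+1) := by
    rw [← Finset.sum_add_distrib]
    refine Finset.sum_congr rfl fun k _ => ?_
    rw [h2]; ring
  have h4 : (-1:ℝ)^0 * ((N+1).choose 0) * g 0
        + ∑ k ∈ range (N+1), (-1:ℝ)^(k+1) * (N.choose (k+1)) * g (k+1)
      = ∑ k ∈ range (N+1), (-1:ℝ)^k * (N.choose k) * g k := by
    rw [Finset.sum_range_succ' (fun k => (-1:ℝ)^k * (N.choose k) * g k) N]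
    have : ((N.choose (N+1) : ℝ)) = 0 := by
      simp [Nat.choose_eq_zero_of_lt (Nat.lt_succ_self N)]
    rw [Finset.sum_range_succ]
    simp [this]
    ring
  rw [h1, h3]
  rw [show (-1:ℝ)^0 * ((N+1).choose 0) * g 0
        + (∑ k ∈ range (N+1), (-1:ℝ)^(k+1) * (N.choose k) * g (k+1)
        + ∑ k ∈ range (N+1), (-1:ℝ)^(k+1) * (N.choose (k+1)) * g (k+1))
      = ((-1:ℝ)^0 * ((N+1).choose 0) * g 0
        + ∑ k ∈ range (N+1), (-1:ℝ)^(k+1) * (N.choose (k+1)) * g (k+1))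
        + ∑ k ∈ range (N+1), (-1:ℝ)^(k+1) * (N.choose k) * g (k+1) by ring]
  rw [h4, ← Finset.sum_add_distrib]
  refine Finset.sum_congr rfl fun k _ => ?_
  ring

lemma altPow (N : ℕ) : ∀ d < N, ∑ k ∈ range (N+1), (-1:ℝ)^k * (N.choose k) * (k:ℝ)^d = 0 := by
  induction N with
  | zero => intro d hd; omega
  | succ N ih =>
    intro d hd
    have hstep := altStep N (fun k => (k:ℝ)^d)
    rw [show N + 2 = N + 1 + 1 from rfl] at hstep
    push_cast at hstep
    rw [hstep]
    have expand : ∀ k : ℕ, (k:ℝ)^d - ((k:ℝ)+1)^d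
        = -∑ j ∈ range d, (d.choose j) * (k:ℝ)^j := by
      intro k
      rw [add_pow, Finset.sum_range_succ]
      simp only [one_pow, mul_one, Nat.choose_self, Nat.cast_one, Nat.sub_self, pow_zero]
      rw [Finset.sum_congr rfl (fun j _ => by ring : ∀ j ∈ range d,
        (k:ℝ)^j * (d.choose j) = (d.choose j : ℝ) * (k:ℝ)^j)]
      ring
    calc ∑ k ∈ range (N+1), (-1:ℝ)^k * (N.choose k) * ((k:ℝ)^d - ((k:ℝ)+1)^d)
        = ∑ k ∈ range (N+1), ∑ j ∈ range d,
            -((d.choose j : ℝ) * ((-1:ℝ)^k * (N.choose k) * (k:ℝ)^j)) := by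
          refine Finset.sum_congr rfl fun k _ => ?_
          rw [expand k, mul_neg, Finset.mul_sum, ← Finset.sum_neg_distrib]
          exact Finset.sum_congr rfl fun j _ => by ring
      _ = ∑ j ∈ range d, -((d.choose j : ℝ)
            * ∑ k ∈ range (N+1), (-1:ℝ)^k * (N.choose k) * (k:ℝ)^j) := by
          rw [Finset.sum_comm]
          refine Finset.sum_congr rfl fun j _ => ?_
          rw [Finset.mul_sum, ← Finset.sum_neg_distrib]
      _ = 0 := by
          refine Finset.sum_eq_zero fun j hj => ?_
          have hj' := Finset.mem_range.mp hj
          rw [ih j (by omega), mul_zero, neg_zero]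

lemma altPoly (N : ℕ) (p : Polynomial ℝ) (h : p.natDegree < N) :
    ∑ k ∈ range (N+1), (-1:ℝ)^k * (N.choose k) * p.eval (k:ℝ) = 0 := by
  calc ∑ k ∈ range (N+1), (-1:ℝ)^k * (N.choose k) * p.eval (k:ℝ)
      = ∑ k ∈ range (N+1), ∑ j ∈ range (p.natDegree + 1),
          p.coeff j * ((-1:ℝ)^k * (N.choose k) * (k:ℝ)^j) := by
        refine Finset.sum_congr rfl fun k _ => ?_
        rw [Polynomial.eval_eq_sum_range, Finset.mul_sum]
        exact Finset.sum_congr rfl fun j _ => by ring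
    _ = ∑ j ∈ range (p.natDegree + 1), p.coeff j
          * ∑ k ∈ range (N+1), (-1:ℝ)^k * (N.choose k) * (k:ℝ)^j := by
        rw [Finset.sum_comm]
        exact Finset.sum_congr rfl fun j _ => (Finset.mul_sum _ _ _).symm
    _ = 0 := by
        refine Finset.sum_eq_zero fun j hj => ?_
        have hj' := Finset.mem_range.mp hj
        rw [altPow N j (by omega), mul_zero]

lemma altTU (N t u : ℕ) (h : t + u < N) :
    ∑ k ∈ range (N+1), (-1:ℝ)^k * (N.choose k) * ((k:ℝ)^t * ((N:ℝ)-k)^u) = 0 := by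
  have := altPoly N (Polynomial.X ^ t * (Polynomial.C (N:ℝ) - Polynomial.X) ^ u) ?_
  · simpa using this
  · calc (Polynomial.X ^ t * (Polynomial.C (N:ℝ) - Polynomial.X) ^ u).natDegree
        ≤ (Polynomial.X ^ t : Polynomial ℝ).natDegree
          + ((Polynomial.C (N:ℝ) - Polynomial.X) ^ u).natDegree := Polynomial.natDegree_mul_le
      _ ≤ t + u := by
          gcongr
          · simp
          · calc ((Polynomial.C (N:ℝ) - Polynomial.X) ^ u).natDegree
                ≤ u * (Polynomial.C (N:ℝ) - Polynomial.X).natDegree :=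
                  Polynomial.natDegree_pow_le
              _ ≤ u * 1 := by
                  gcongr
                  rw [show Polynomial.C (N:ℝ) - Polynomial.X
                      = -(Polynomial.X - Polynomial.C (N:ℝ)) by ring, Polynomial.natDegree_neg,
                    Polynomial.natDegree_X_sub_C]
              _ = u := mul_one u
      _ < N := h

lemma sumEvenOdd {M : Type*} [AddCommMonoid M] (m : ℕ) (h : ℕ → M) :
    ∑ k ∈ range (2*m), h k = ∑ i ∈ range m, h (2*i) + ∑ i ∈ range m, h (2*i+1) := by
  induction m with
  | zero => simp
  | succ m ih =>
    rw [show 2*(m+1) = 2*m+1+1 from by ring, Finset.sum_range_succ, Finset.sum_range_succ,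
      ih, Finset.sum_range_succ, Finset.sum_range_succ]
    abel

open MeasureTheory

noncomputable def ber {Ω : Type*} [MeasurableSpace Ω] (ω₀ ω₁ : Ω) (r : ℝ) : Measure Ω :=
  ENNReal.ofReal r • Measure.dirac ω₀ + ENNReal.ofReal (1-r) • Measure.dirac ω₁

lemma ber_apply {Ω : Type*} [MeasurableSpace Ω] (ω₀ ω₁ : Ω) (r : ℝ) (h0 : 0 ≤ r) (h1 : r ≤ 1)
    {A : Set Ω} (hA : MeasurableSet A) :
    ber ω₀ ω₁ r A
      = ENNReal.ofReal ((if ω₀ ∈ A then r else 0) + (if ω₁ ∈ A then 1-r else 0)) := by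
  rw [ber, Measure.add_apply, Measure.smul_apply, Measure.smul_apply,
    Measure.dirac_apply' _ hA, Measure.dirac_apply' _ hA]
  unfold Set.indicator
  have h1' : (0:ℝ) ≤ 1 - r := by linarith
  split_ifs <;>
    simp [ENNReal.ofReal_add, h0, h1', smul_eq_mul] <;>
    · rw [← ENNReal.ofReal_add h0 h1']; norm_num

lemma ber_prob {Ω : Type*} [MeasurableSpace Ω] (ω₀ ω₁ : Ω) (r : ℝ) (h0 : 0 ≤ r) (h1 : r ≤ 1) :
    IsProbabilityMeasure (ber ω₀ ω₁ r) := by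
  constructor
  rw [ber_apply ω₀ ω₁ r h0 h1 MeasurableSet.univ]
  simp

lemma phi_nonneg (r : ℝ) (h0 : 0 ≤ r) (h1 : r ≤ 1) (b c : Prop) [Decidable b] [Decidable c] :
    0 ≤ (if b then r else 0) + (if c then 1-r else 0) := by
  split_ifs <;> simp_all <;> linarith

lemma V_box {Ω : Type*} [MeasurableSpace Ω] (ω₀ ω₁ : Ω) {m n : ℕ}
    (w p : Fin m → ℝ) (hw : ∀ i, 0 ≤ w i) (hp0 : ∀ i, 0 ≤ p i) (hp1 : ∀ i, p i ≤ 1)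
    (s : Fin n → Set Ω) (hs : ∀ j, MeasurableSet (s j)) :
    (∑ i, ENNReal.ofReal (w i) • Measure.pi fun _ : Fin n => ber ω₀ ω₁ (p i))
        (Set.pi Set.univ s)
      = ENNReal.ofReal (∑ i, w i *
          ∏ j, ((if ω₀ ∈ s j then p i else 0) + (if ω₁ ∈ s j then 1 - p i else 0))) := by
  have hφ : ∀ i j, (0:ℝ) ≤ (if ω₀ ∈ s j then p i else 0) + (if ω₁ ∈ s j then 1 - p i else 0) :=
    fun i j => phi_nonneg (p i) (hp0 i) (hp1 i) _ _
  rw [Measure.finset_sum_apply]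
  rw [ENNReal.ofReal_sum_of_nonneg (fun i _ =>
    mul_nonneg (hw i) (Finset.prod_nonneg fun j _ => hφ i j))]
  refine Finset.sum_congr rfl fun i _ => ?_
  haveI : IsProbabilityMeasure (ber ω₀ ω₁ (p i)) := ber_prob ω₀ ω₁ (p i) (hp0 i) (hp1 i)
  rw [Measure.smul_apply, Measure.pi_pi, smul_eq_mul,
    ENNReal.ofReal_mul (hw i), ENNReal.ofReal_prod_of_nonneg (fun j _ => hφ i j)]
  congr 1
  exact Finset.prod_congr rfl fun j _ =>
    ber_apply ω₀ ω₁ (p i) (hp0 i) (hp1 i) (hs j)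

lemma box_sum_eq {Ω : Type*} (ω₀ ω₁ : Ω) {m m' n : ℕ}
    (w p : Fin m → ℝ) (w' p' : Fin m' → ℝ)
    (hmom : ∀ t u : ℕ, t + u ≤ n →
      ∑ i, w i * (p i)^t * (1 - p i)^u = ∑ i, w' i * (p' i)^t * (1 - p' i)^u)
    (s : Fin n → Set Ω) :
    ∑ i, w i * ∏ j, ((if ω₀ ∈ s j then p i else 0) + (if ω₁ ∈ s j then 1 - p i else 0))
      = ∑ i, w' i * ∏ j, ((if ω₀ ∈ s j then p' i else 0) + (if ω₁ ∈ s j then 1 - p' i else 0)) := by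
  by_cases hz : ∃ j, ω₀ ∉ s j ∧ ω₁ ∉ s j
  · obtain ⟨j, hj0, hj1⟩ := hz
    have hzero : ∀ r : ℝ,
        (if ω₀ ∈ s j then r else 0) + (if ω₁ ∈ s j then 1 - r else 0) = 0 := by
      intro r; simp [hj0, hj1]
    rw [Finset.sum_eq_zero fun i _ => by
        rw [Finset.prod_eq_zero (Finset.mem_univ j) (hzero (p i)), mul_zero],
      Finset.sum_eq_zero fun i _ => by
        rw [Finset.prod_eq_zero (Finset.mem_univ j) (hzero (p' i)), mul_zero]]
  · push_neg at hz
    set a : Fin n → ℕ := fun j => if ω₀ ∈ s j ∧ ω₁ ∉ s j then 1 else 0 with ha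
    set b : Fin n → ℕ := fun j => if ω₁ ∈ s j ∧ ω₀ ∉ s j then 1 else 0 with hb
    have hfac : ∀ (r : ℝ) (j : Fin n),
        (if ω₀ ∈ s j then r else 0) + (if ω₁ ∈ s j then 1 - r else 0)
          = r ^ (a j) * (1 - r) ^ (b j) := by
      intro r j
      by_cases h0 : ω₀ ∈ s j <;> by_cases h1 : ω₁ ∈ s j <;>
        simp [ha, hb, h0, h1] <;> first | exact absurd (hz j h0) h1 | ring
    have hprod : ∀ (r : ℝ),
        ∏ j, ((if ω₀ ∈ s j then r else 0) + (if ω₁ ∈ s j then 1 - r else 0))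
          = r ^ (∑ j, a j) * (1 - r) ^ (∑ j, b j) := by
      intro r
      rw [Finset.prod_congr rfl fun j _ => hfac r j, Finset.prod_mul_distrib,
        Finset.prod_pow_eq_pow_sum, Finset.prod_pow_eq_pow_sum]
    have hle : (∑ j, a j) + (∑ j, b j) ≤ n := by
      rw [← Finset.sum_add_distrib]
      calc ∑ j : Fin n, (a j + b j) ≤ ∑ _j : Fin n, 1 := by
            refine Finset.sum_le_sum fun j _ => ?_
            by_cases h0 : ω₀ ∈ s j <;> by_cases h1 : ω₁ ∈ s j <;> simp [ha, hb, h0, h1]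
        _ = n := by simp
    simp only [hprod]
    have := hmom _ _ hle
    simpa [mul_assoc] using this

lemma evenOddNat (m : ℕ) (hm : 1 ≤ m) (t u : ℕ) (h : t + u ≤ 2*m-2) :
    ∑ i ∈ range m, ((2*m-1).choose (2*i) : ℝ) * (2*i:ℕ)^t * ((2*m-1:ℕ) - (2*i:ℕ) : ℝ)^u
      = ∑ i ∈ range m, ((2*m-1).choose (2*i+1) : ℝ) * (2*i+1:ℕ)^t
          * ((2*m-1:ℕ) - (2*i+1:ℕ) : ℝ)^u := by
  have h0 := altTU (2*m-1) t u (by omega)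
  rw [show 2*m-1+1 = 2*m from by omega] at h0
  rw [sumEvenOdd m (fun k => (-1:ℝ)^k * ((2*m-1).choose k) * ((k:ℝ)^t * ((2*m-1:ℕ) - (k:ℕ) : ℝ)^u))] at h0
  have he : ∀ i : ℕ, (-1:ℝ)^(2*i) = 1 := fun i => by
    rw [pow_mul]; norm_num
  have ho : ∀ i : ℕ, (-1:ℝ)^(2*i+1) = -1 := fun i => by
    rw [pow_succ, he i]; norm_num
  have hA : ∑ i ∈ range m, (-1:ℝ)^(2*i) * ((2*m-1).choose (2*i))
        * ((2*i:ℕ)^t * ((2*m-1:ℕ) - (2*i:ℕ) : ℝ)^u)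
      = ∑ i ∈ range m, ((2*m-1).choose (2*i) : ℝ) * (2*i:ℕ)^t
        * ((2*m-1:ℕ) - (2*i:ℕ) : ℝ)^u :=
    Finset.sum_congr rfl fun i _ => by rw [he i]; push_cast; ring
  have hB : ∑ i ∈ range m, (-1:ℝ)^(2*i+1) * ((2*m-1).choose (2*i+1))
        * ((2*i+1:ℕ)^t * ((2*m-1:ℕ) - (2*i+1:ℕ) : ℝ)^u)
      = -∑ i ∈ range m, ((2*m-1).choose (2*i+1) : ℝ) * (2*i+1:ℕ)^t
        * ((2*m-1:ℕ) - (2*i+1:ℕ) : ℝ)^u := by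
    rw [← Finset.sum_neg_distrib]
    exact Finset.sum_congr rfl fun i _ => by rw [ho i]; push_cast; ring
  push_cast at h0 hA hB ⊢
  linarith [h0, hA, hB]

lemma V_mk {Ω : Type*} [MeasurableSpace Ω] (m : ℕ) (w : Fin m → ℝ) (μ : Fin m → Measure Ω)
    (h1 : ∀ i, IsProbabilityMeasure (μ i)) (h2 : ∀ i, 0 < w i) (h3 : ∑ i, w i = 1)
    (h4 : Function.Injective μ) (n : ℕ) :
    (MixtureOfMeasures.mk m w μ h1 h2 h3 h4).V n
      = ∑ i, ENNReal.ofReal (w i) • Measure.pi fun _ : Fin n => μ i := rfl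

/-- On any measurable space with a nontrivial σ-algebra, for every `m ≥ 2` there is a
mixture of measures with `m` components that is not `(2m-2)`-identifiable: there are two
distinct mixtures, each with exactly `m` components, with the same `V_{2m-2}`. -/
theorem exists_mixture_not_identifiable {Ω : Type*} [MeasurableSpace Ω]
    (hF : ∃ S : Set Ω, MeasurableSet S ∧ S ≠ ∅ ∧ S ≠ Set.univ)
    (m : ℕ) (hm : 2 ≤ m) :
    ∃ P P' : MixtureOfMeasures Ω, P.m = m ∧ P'.m = m ∧ ¬ P'.Equal P ∧
      P'.V (2 * m - 2) = P.V (2 * m - 2) := by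
  obtain ⟨S, hSmeas, hSne, hSuniv⟩ := hF
  obtain ⟨ω₀, hω₀⟩ := Set.nonempty_iff_ne_empty.mpr hSne
  obtain ⟨ω₁, hω₁⟩ : ∃ x, x ∉ S := by
    by_contra h; push_neg at h; exact hSuniv (Set.eq_univ_iff_forall.mpr h)
  set N : ℕ := 2*m-1 with hN
  have hNpos : (0:ℝ) < (N:ℝ) := by
    have : 1 ≤ N := by omega
    exact_mod_cast Nat.lt_of_lt_of_le Nat.zero_lt_one this
  set pE : Fin m → ℝ := fun i => (2*(i:ℕ) : ℝ) / (N:ℝ) with hpE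
  set pO : Fin m → ℝ := fun i => (2*(i:ℕ)+1 : ℝ) / (N:ℝ) with hpO
  set wE : Fin m → ℝ := fun i => (N.choose (2*(i:ℕ)) : ℝ) / 2^(2*m-2) with hwE
  set wO : Fin m → ℝ := fun i => (N.choose (2*(i:ℕ)+1) : ℝ) / 2^(2*m-2) with hwO
  have h2iN : ∀ i : Fin m, 2*(i:ℕ) ≤ N := fun i => by have := i.2; omega
  have h2i1N : ∀ i : Fin m, 2*(i:ℕ)+1 ≤ N := fun i => by have := i.2; omega
  have hpE0 : ∀ i, 0 ≤ pE i := fun i => div_nonneg (by positivity) hNpos.le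
  have hpO0 : ∀ i, 0 ≤ pO i := fun i => div_nonneg (by positivity) hNpos.le
  have hpE1 : ∀ i, pE i ≤ 1 := fun i => by
    rw [hpE, div_le_one hNpos]; exact_mod_cast h2iN i
  have hpO1 : ∀ i, pO i ≤ 1 := fun i => by
    rw [hpO, div_le_one hNpos]; exact_mod_cast h2i1N i
  have hwEpos : ∀ i, 0 < wE i := fun i => by
    apply div_pos _ (by positivity)
    exact_mod_cast Nat.choose_pos (h2iN i)
  have hwOpos : ∀ i, 0 < wO i := fun i => by
    apply div_pos _ (by positivity)
    exact_mod_cast Nat.choose_pos (h2i1N i)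
  -- sums of binomial coefficients
  have hEO : ∑ i ∈ range m, (N.choose (2*i) : ℝ) = ∑ i ∈ range m, (N.choose (2*i+1) : ℝ) := by
    have := evenOddNat m (by omega) 0 0 (by omega)
    simpa using this
  have htot : ∑ i ∈ range m, (N.choose (2*i) : ℝ) + ∑ i ∈ range m, (N.choose (2*i+1) : ℝ)
      = 2^(2*m-1) := by
    have h1 : ∑ k ∈ range (2*m), (N.choose k : ℝ) = 2^(2*m-1) := by
      have := Nat.sum_range_choose N
      rw [show N + 1 = 2*m from by omega] at this
      exact_mod_cast congrArg (Nat.cast : ℕ → ℝ) this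
    rw [← h1, sumEvenOdd m (fun k => (N.choose k : ℝ))]
  have hEsum : ∑ i ∈ range m, (N.choose (2*i) : ℝ) = 2^(2*m-2) := by
    have h2 : (2:ℝ)^(2*m-1) = 2 * 2^(2*m-2) := by
      rw [← pow_succ']
      congr 1
      omega
    nlinarith [hEO, htot]
  have hwEsum : ∑ i, wE i = 1 := by
    rw [Fin.sum_univ_eq_sum_range (fun i => (N.choose (2*i) : ℝ) / 2^(2*m-2)) m,
      ← Finset.sum_div, hEsum]
    field_simp
  have hwOsum : ∑ i, wO i = 1 := by
    rw [Fin.sum_univ_eq_sum_range (fun i => (N.choose (2*i+1) : ℝ) / 2^(2*m-2)) m,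
      ← Finset.sum_div, ← hEO, hEsum]
    field_simp
  -- moments
  have hmom : ∀ t u : ℕ, t + u ≤ 2*m-2 →
      ∑ i, wE i * (pE i)^t * (1 - pE i)^u = ∑ i, wO i * (pO i)^t * (1 - pO i)^u := by
    intro t u htu
    have key := evenOddNat m (by omega) t u htu
    have hterm : ∀ c x : ℝ, c/2^(2*m-2) * (x/N)^t * (1-x/N)^u
        = c * x^t * ((N:ℝ)-x)^u * ((2:ℝ)^(2*m-2) * (N:ℝ)^t * (N:ℝ)^u)⁻¹ := by
      intro c x
      have h1 : 1 - x/N = ((N:ℝ)-x)/N := by field_simp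
      rw [h1, div_pow, div_pow]
      field_simp
      try ring
    have hLE : ∑ i, wE i * (pE i)^t * (1 - pE i)^u
        = (∑ i ∈ range m, (N.choose (2*i) : ℝ) * (2*(i:ℝ))^t * ((N:ℝ)-2*(i:ℝ))^u)
          * ((2:ℝ)^(2*m-2) * (N:ℝ)^t * (N:ℝ)^u)⁻¹ := by
      simp only [hwE, hpE]
      rw [Fin.sum_univ_eq_sum_range
        (fun k => (N.choose (2*k) : ℝ)/2^(2*m-2) * ((2*(k:ℝ))/N)^t * (1-(2*(k:ℝ))/N)^u) m,
        Finset.sum_mul]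
      exact Finset.sum_congr rfl fun k _ => hterm _ _
    have hLO : ∑ i, wO i * (pO i)^t * (1 - pO i)^u
        = (∑ i ∈ range m, (N.choose (2*i+1) : ℝ) * (2*(i:ℝ)+1)^t * ((N:ℝ)-(2*(i:ℝ)+1))^u)
          * ((2:ℝ)^(2*m-2) * (N:ℝ)^t * (N:ℝ)^u)⁻¹ := by
      simp only [hwO, hpO]
      rw [Fin.sum_univ_eq_sum_range
        (fun k => (N.choose (2*k+1) : ℝ)/2^(2*m-2) * ((2*(k:ℝ)+1)/N)^t * (1-(2*(k:ℝ)+1)/N)^u) m,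
        Finset.sum_mul]
      exact Finset.sum_congr rfl fun k _ => hterm _ _
    rw [hLE, hLO]
    congr 1
    calc ∑ i ∈ range m, (N.choose (2*i) : ℝ) * (2*(i:ℝ))^t * ((N:ℝ)-2*(i:ℝ))^u
        = ∑ i ∈ range m, (N.choose (2*i) : ℝ) * ((2*i:ℕ):ℝ)^t * ((N:ℝ) - ((2*i:ℕ):ℝ))^u :=
          Finset.sum_congr rfl fun i _ => by push_cast; ring
      _ = ∑ i ∈ range m, (N.choose (2*i+1) : ℝ) * ((2*i+1:ℕ):ℝ)^t
            * ((N:ℝ) - ((2*i+1:ℕ):ℝ))^u := key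
      _ = ∑ i ∈ range m, (N.choose (2*i+1) : ℝ) * (2*(i:ℝ)+1)^t * ((N:ℝ)-(2*(i:ℝ)+1))^u :=
          Finset.sum_congr rfl fun i _ => by push_cast; ring
  -- injectivity of parameters
  have ber_S : ∀ r : ℝ, 0 ≤ r → r ≤ 1 → ber ω₀ ω₁ r S = ENNReal.ofReal r := by
    intro r h0 h1
    rw [ber_apply ω₀ ω₁ r h0 h1 hSmeas]
    simp [hω₀, hω₁]
  have hParam : ∀ p q : ℝ, 0 ≤ p → p ≤ 1 → 0 ≤ q → q ≤ 1 →
      ber ω₀ ω₁ p = ber ω₀ ω₁ q → p = q := by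
    intro p q hp0 hp1 hq0 hq1 h
    have h2 := congrArg (fun μ : Measure Ω => μ S) h
    simp only [ber_S p hp0 hp1, ber_S q hq0 hq1] at h2
    exact (ENNReal.ofReal_eq_ofReal_iff hp0 hq0).mp h2
  have hNne : (N:ℝ) ≠ 0 := ne_of_gt hNpos
  have hinjE : Function.Injective (fun i => ber ω₀ ω₁ (pE i)) := by
    intro i j hij
    have h3 := hParam _ _ (hpE0 i) (hpE1 i) (hpE0 j) (hpE1 j) hij
    simp only [hpE] at h3
    rw [div_eq_div_iff hNne hNne] at h3
    have h5 : ((i:ℕ):ℝ) = ((j:ℕ):ℝ) := by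
      have := mul_right_cancel₀ hNne h3
      linarith
    exact Fin.ext (Nat.cast_injective h5)
  have hinjO : Function.Injective (fun i => ber ω₀ ω₁ (pO i)) := by
    intro i j hij
    have h3 := hParam _ _ (hpO0 i) (hpO1 i) (hpO0 j) (hpO1 j) hij
    simp only [hpO] at h3
    rw [div_eq_div_iff hNne hNne] at h3
    have h5 : ((i:ℕ):ℝ) = ((j:ℕ):ℝ) := by
      have := mul_right_cancel₀ hNne h3
      linarith
    exact Fin.ext (Nat.cast_injective h5)
  refine ⟨⟨m, wE, fun i => ber ω₀ ω₁ (pE i),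
      fun i => ber_prob _ _ _ (hpE0 i) (hpE1 i), hwEpos, hwEsum, hinjE⟩,
    ⟨m, wO, fun i => ber ω₀ ω₁ (pO i),
      fun i => ber_prob _ _ _ (hpO0 i) (hpO1 i), hwOpos, hwOsum, hinjO⟩,
    rfl, rfl, ?_, ?_⟩
  · rintro ⟨σ, hσ⟩
    have hm0 : 0 < m := by omega
    have h1 : ber ω₀ ω₁ (pE ⟨0, hm0⟩) = ber ω₀ ω₁ (pO (σ ⟨0, hm0⟩)) := (hσ ⟨0, hm0⟩).1
    have h3 := hParam _ _ (hpE0 _) (hpE1 _) (hpO0 _) (hpO1 _) h1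
    simp only [hpO, hpE] at h3
    rw [div_eq_div_iff hNne hNne] at h3
    have h4 := mul_right_cancel₀ hNne h3
    have h5 : ((0:ℕ):ℝ) = ((2*((σ ⟨0, hm0⟩ : Fin m) : ℕ) + 1 : ℕ):ℝ) := by
      push_cast at h4 ⊢
      linarith
    have h6 := Nat.cast_injective (R := ℝ) h5
    omega
  · -- V equality
    haveI hfin : IsFiniteMeasure (∑ i, ENNReal.ofReal (wO i) •
        Measure.pi fun _ : Fin (2*m-2) => ber ω₀ ω₁ (pO i)) := by
      constructor
      rw [← Set.pi_univ (Set.univ : Set (Fin (2*m-2))),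
        V_box ω₀ ω₁ wO pO (fun i => (hwOpos i).le) hpO0 hpO1 _
          (fun j => MeasurableSet.univ)]
      exact ENNReal.ofReal_lt_top
    have hbox : ∀ s : Fin (2*m-2) → Set Ω, (∀ j, MeasurableSet (s j)) →
        (∑ i, ENNReal.ofReal (wO i) •
            Measure.pi fun _ : Fin (2*m-2) => ber ω₀ ω₁ (pO i)) (Set.pi Set.univ s)
          = (∑ i, ENNReal.ofReal (wE i) •
            Measure.pi fun _ : Fin (2*m-2) => ber ω₀ ω₁ (pE i)) (Set.pi Set.univ s) := by
      intro s hs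
      rw [V_box ω₀ ω₁ wO pO (fun i => (hwOpos i).le) hpO0 hpO1 s hs,
        V_box ω₀ ω₁ wE pE (fun i => (hwEpos i).le) hpE0 hpE1 s hs]
      congr 1
      exact (box_sum_eq ω₀ ω₁ wE pE wO pO hmom s).symm
    rw [V_mk, V_mk]
    refine MeasureTheory.ext_of_generate_finite
      (Set.pi Set.univ '' Set.pi Set.univ fun _ : Fin (2*m-2) => {A : Set Ω | MeasurableSet A})
      generateFrom_pi.symm isPiSystem_pi ?_ ?_
    · rintro _ ⟨s, hs, rfl⟩
      exact hbox s fun j => hs j (Set.mem_univ j)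
    · rw [← Set.pi_univ (Set.univ : Set (Fin (2*m-2)))]
      exact hbox _ fun j => MeasurableSet.univ
end

section
/- Let (Ω, F) be a measurable space with F ≠ {∅, Ω}. For every m ≥ 1 there exists a mixture of measures with m components that is not (2m−1)-determined: there exist mixtures of measures P with m components and P' with m+1 components, P ≠ P', such that V_{2m−1}(P) = V_{2m−1}(P'). -/
open MeasureTheory

section AuxPoly

open Finset Polynomial

private lemma fwdDiff_eval_comp' (P : Polynomial ℝ) :
    fwdDiff (1:ℝ) (fun x : ℝ => P.eval x) = fun x : ℝ => (P.comp (X + 1) - P).eval x := by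
  funext x
  simp [fwdDiff, Polynomial.eval_comp]

private lemma fwdDiff_iter_poly' (n : ℕ) (P : Polynomial ℝ) (h : P.natDegree < n) :
    (fwdDiff (1:ℝ))^[n] (fun x : ℝ => P.eval x) = 0 := by
  induction n generalizing P with
  | zero => omega
  | succ n IH =>
    rw [Function.iterate_succ_apply, fwdDiff_eval_comp']
    rcases Nat.eq_zero_or_pos P.natDegree with h0 | h0
    · obtain ⟨c, rfl⟩ := Polynomial.natDegree_eq_zero.mp h0
      have : (C c).comp (X + 1) - C c = 0 := by simp
      rw [this]
      simp only [Polynomial.eval_zero]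
      exact Function.iterate_fixed (by funext x; simp [fwdDiff]) n
    · set Q := P.comp (X + 1) - P with hQ
      have hP0 : P ≠ 0 := fun h' => by simp [h'] at h0
      have hXA : (X + 1 : Polynomial ℝ) = X + C 1 := by simp
      have hdcomp : (P.comp (X + 1)).natDegree = P.natDegree := by
        rw [Polynomial.natDegree_comp, hXA, Polynomial.natDegree_X_add_C, mul_one]
      have hcomp0 : P.comp (X + 1) ≠ 0 := by
        intro h'
        rw [h'] at hdcomp
        simp at hdcomp
        omega
      have hlt : Q.natDegree < P.natDegree := by
        rcases eq_or_ne Q 0 with hq0 | hq0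
        · rw [hq0]; simpa using h0
        · refine Polynomial.natDegree_lt_natDegree hq0 ?_
          have hdeq : (P.comp (X + 1)).degree = P.degree := by
            rw [Polynomial.degree_eq_natDegree hcomp0, Polynomial.degree_eq_natDegree hP0]
            exact_mod_cast hdcomp
          have hlc : (P.comp (X + 1)).leadingCoeff = P.leadingCoeff := by
            rw [hXA, Polynomial.leadingCoeff_comp (by rw [Polynomial.natDegree_X_add_C]; omega)]
            simp [hXA, (Polynomial.monic_X_add_C (1:ℝ)).leadingCoeff]
          have := Polynomial.degree_sub_lt hdeq hcomp0 hlc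
          rwa [hdeq] at this
      exact IH Q (by omega)

private lemma alt_sum_poly' (N : ℕ) (hN : Even N) (P : Polynomial ℝ) (h : P.natDegree < N) :
    ∑ j ∈ Finset.range (N+1), (-1:ℝ)^j * (N.choose j) * P.eval (j:ℝ) = 0 := by
  have key := fwdDiff_iter_eq_sum_shift (1:ℝ) (fun x : ℝ => P.eval x) N 0
  rw [fwdDiff_iter_poly' N P h] at key
  simp only [Pi.zero_apply, zero_add, nsmul_eq_mul, mul_one, zsmul_eq_mul] at key
  push_cast at key
  rw [eq_comm] at key
  rw [← key]
  refine Finset.sum_congr rfl fun j hj => ?_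
  rw [Finset.mem_range] at hj
  have hj' : j ≤ N := by omega
  have heq : Even (N - j) ↔ Even j := by
    rw [Nat.even_sub hj']; tauto
  have hsign : (-1:ℝ)^(N - j) = (-1:ℝ)^j := by
    rcases Nat.even_or_odd j with hje | hjo
    · rw [(heq.mpr hje).neg_one_pow, hje.neg_one_pow]
    · have hod : Odd (N - j) := by
        rcases Nat.even_or_odd (N - j) with he | ho
        · exact absurd (heq.mp he) (Nat.not_even_iff_odd.mpr hjo)
        · exact ho
      rw [hod.neg_one_pow, hjo.neg_one_pow]
  rw [hsign]

private lemma sum_range_even_odd' {M : Type*} [AddCommMonoid M] (F : ℕ → M) (m : ℕ) :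
    ∑ j ∈ Finset.range (2*m+1), F j
      = ∑ i ∈ Finset.range (m+1), F (2*i) + ∑ i ∈ Finset.range m, F (2*i+1) := by
  induction m with
  | zero => simp
  | succ m IH =>
    have h1 : 2*(m+1)+1 = (2*m+1)+1+1 := by ring
    rw [h1, Finset.sum_range_succ, Finset.sum_range_succ, IH,
      Finset.sum_range_succ (fun i => F (2*i)) (m+1), Finset.sum_range_succ (fun i => F (2*i+1)) m]
    have h2 : 2*m+1+1 = 2*(m+1) := by ring
    rw [h2]
    abel

private lemma quad_key' (m : ℕ) (G : Polynomial ℝ) (hG : G.natDegree < 2*m) :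
    ∑ i ∈ Finset.range (m+1), ((2*m).choose (2*i) : ℝ) * G.eval ((2*m:ℝ)⁻¹ * (2*i))
      = ∑ i ∈ Finset.range m, ((2*m).choose (2*i+1) : ℝ) * G.eval ((2*m:ℝ)⁻¹ * (2*i+1)) := by
  set H := G.comp (C (2*m:ℝ)⁻¹ * X) with hH
  have hHdeg : H.natDegree < 2*m := by
    calc H.natDegree = G.natDegree * (C (2*m:ℝ)⁻¹ * X).natDegree := Polynomial.natDegree_comp
    _ ≤ G.natDegree * 1 := by
        exact Nat.mul_le_mul_left _ ((Polynomial.natDegree_C_mul_le _ _).trans (by simp))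
    _ ≤ G.natDegree := by omega
    _ < 2*m := hG
  have key := alt_sum_poly' (2*m) (even_two_mul m) H hHdeg
  rw [sum_range_even_odd' (fun j => (-1:ℝ)^j * ((2*m).choose j) * H.eval (j:ℝ)) m] at key
  have hHe : ∀ j : ℕ, H.eval (j:ℝ) = G.eval ((2*m:ℝ)⁻¹ * j) := by
    intro j; rw [hH, Polynomial.eval_comp]; simp
  have he : ∀ i ∈ Finset.range (m+1),
      (-1:ℝ)^(2*i) * ((2*m).choose (2*i)) * H.eval ((2*i : ℕ):ℝ)
        = ((2*m).choose (2*i) : ℝ) * G.eval ((2*m:ℝ)⁻¹ * (2*i)) := by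
    intro i _
    rw [hHe, pow_mul]
    push_cast
    ring
  have ho : ∀ i ∈ Finset.range m,
      (-1:ℝ)^(2*i+1) * ((2*m).choose (2*i+1)) * H.eval ((2*i+1 : ℕ):ℝ)
        = -(((2*m).choose (2*i+1) : ℝ) * G.eval ((2*m:ℝ)⁻¹ * (2*i+1))) := by
    intro i _
    rw [hHe, pow_succ, pow_mul]
    push_cast
    ring
  rw [Finset.sum_congr rfl he, Finset.sum_congr rfl ho, Finset.sum_neg_distrib] at key
  linarith

end AuxPoly

section AuxMeasure

open Finset
open scoped ENNReal

variable {Ω : Type*} [MeasurableSpace Ω]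

private lemma pi_two_point' (x y : Ω) (a b : ℝ≥0∞) (ha : a ≠ ⊤) (hb : b ≠ ⊤) (n : ℕ) :
    Measure.pi (fun _ : Fin n => a • Measure.dirac x + b • Measure.dirac y)
      = ∑ s : Fin n → Bool,
          (∏ i, (bif s i then a else b)) • Measure.dirac (fun i => bif s i then x else y) := by
  classical
  have hfin : IsFiniteMeasure (a • Measure.dirac x + b • Measure.dirac y) := by
    constructor
    simp only [Measure.add_apply, Measure.smul_apply, smul_eq_mul]
    exact ENNReal.add_lt_top.mpr ⟨ENNReal.mul_lt_top ha.lt_top (by simp),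
      ENNReal.mul_lt_top hb.lt_top (by simp)⟩
  apply Measure.pi_eq
  intro t ht
  rw [Measure.finset_sum_apply]
  have hmeas : MeasurableSet (Set.pi Set.univ t) := MeasurableSet.univ_pi ht
  have step : ∀ s : Fin n → Bool,
      ((∏ i, (bif s i then a else b)) • Measure.dirac (fun i => bif s i then x else y))
        (Set.pi Set.univ t)
      = ∏ i, ((bif s i then a else b) * (if (bif s i then x else y) ∈ t i then 1 else 0)) := by
    intro s
    rw [Measure.smul_apply, Measure.dirac_apply' _ hmeas, smul_eq_mul, Set.indicator_apply]
    rw [Finset.prod_mul_distrib, Finset.prod_boole]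
    congr 1
    simp [Set.mem_univ_pi, Pi.one_apply]
  rw [Finset.sum_congr rfl fun s _ => step s]
  have swap := Finset.prod_univ_sum (t := fun _ : Fin n => (Finset.univ : Finset Bool))
    (f := fun i c => (bif c then a else b) * if (bif c then x else y) ∈ t i then (1:ℝ≥0∞) else 0)
  rw [Fintype.piFinset_univ] at swap
  rw [← swap]
  refine Finset.prod_congr rfl fun i _ => ?_
  rw [Fintype.sum_bool]
  simp only [cond_true, cond_false]
  rw [Measure.add_apply, Measure.smul_apply, Measure.smul_apply, smul_eq_mul, smul_eq_mul,
    Measure.dirac_apply' _ (ht i), Measure.dirac_apply' _ (ht i), Set.indicator_apply,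
    Set.indicator_apply]
  simp [Pi.one_apply]

/-- Measure `t δ_x + (1-t) δ_y`. -/
noncomputable def bernAux (x y : Ω) (t : ℝ) : Measure Ω :=
  ENNReal.ofReal t • Measure.dirac x + ENNReal.ofReal (1-t) • Measure.dirac y

private lemma bernAux_prob (x y : Ω) (t : ℝ) (h0 : 0 ≤ t) (h1 : t ≤ 1) :
    IsProbabilityMeasure (bernAux x y t) := by
  constructor
  rw [bernAux, Measure.add_apply, Measure.smul_apply, Measure.smul_apply, smul_eq_mul, smul_eq_mul,
    measure_univ, measure_univ, mul_one, mul_one, ← ENNReal.ofReal_add h0 (by linarith)]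
  norm_num

private lemma bernAux_apply_S (x y : Ω) {S : Set Ω} (hS : MeasurableSet S) (hx : x ∈ S)
    (hy : y ∉ S) (t : ℝ) : bernAux x y t S = ENNReal.ofReal t := by
  classical
  rw [bernAux, Measure.add_apply, Measure.smul_apply, Measure.smul_apply, smul_eq_mul, smul_eq_mul,
    Measure.dirac_apply' _ hS, Measure.dirac_apply' _ hS, Set.indicator_apply, Set.indicator_apply,
    if_pos hx, if_neg hy]
  simp

private lemma bernAux_inj (x y : Ω) {S : Set Ω} (hS : MeasurableSet S) (hx : x ∈ S) (hy : y ∉ S)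
    {t t' : ℝ} (h0 : 0 ≤ t) (h0' : 0 ≤ t') (h : bernAux x y t = bernAux x y t') : t = t' := by
  have := congrArg (fun μ : Measure Ω => μ S) h
  simp only [bernAux_apply_S x y hS hx hy] at this
  rwa [ENNReal.ofReal_eq_ofReal_iff h0 h0'] at this

private lemma V_expand (x y : Ω) (n k : ℕ) (w p : Fin k → ℝ) (hw : ∀ i, 0 ≤ w i)
    (h0 : ∀ i, 0 ≤ p i) (h1 : ∀ i, p i ≤ 1) :
    (∑ i, ENNReal.ofReal (w i) • Measure.pi (fun _ : Fin n => bernAux x y (p i)))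
      = ∑ s : Fin n → Bool,
          ENNReal.ofReal (∑ i, w i * ∏ j, (bif s j then p i else 1 - p i)) •
            Measure.dirac (fun j => bif s j then x else y) := by
  have hpi : ∀ i : Fin k, Measure.pi (fun _ : Fin n => bernAux x y (p i))
      = ∑ s : Fin n → Bool,
          (∏ j, (bif s j then ENNReal.ofReal (p i) else ENNReal.ofReal (1 - p i))) •
            Measure.dirac (fun j => bif s j then x else y) := fun i =>
    pi_two_point' x y _ _ ENNReal.ofReal_ne_top ENNReal.ofReal_ne_top n
  rw [Finset.sum_congr rfl fun i _ => by rw [hpi i]]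
  rw [Finset.sum_congr rfl fun i (_ : i ∈ Finset.univ) => Finset.smul_sum]
  rw [Finset.sum_comm]
  refine Finset.sum_congr rfl fun s _ => ?_
  rw [Finset.sum_congr rfl fun i (_ : i ∈ Finset.univ) => smul_smul _ _ _, ← Finset.sum_smul]
  congr 1
  have hterm : ∀ i : Fin k,
      ENNReal.ofReal (w i) * ∏ j, (bif s j then ENNReal.ofReal (p i) else ENNReal.ofReal (1 - p i))
        = ENNReal.ofReal (w i * ∏ j, (bif s j then p i else 1 - p i)) := by
    intro i
    have : ∀ j : Fin n, (bif s j then ENNReal.ofReal (p i) else ENNReal.ofReal (1 - p i))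
        = ENNReal.ofReal (bif s j then p i else 1 - p i) := by
      intro j; cases s j <;> rfl
    rw [Finset.prod_congr rfl fun j _ => this j,
      ← ENNReal.ofReal_prod_of_nonneg (fun j _ => by cases s j <;> simp [h0 i, sub_nonneg.mpr (h1 i)]),
      ← ENNReal.ofReal_mul (hw i)]
  rw [Finset.sum_congr rfl fun i _ => hterm i,
    ← ENNReal.ofReal_sum_of_nonneg (fun i _ => mul_nonneg (hw i)
      (Finset.prod_nonneg fun j _ => by cases s j <;> simp [h0 i, sub_nonneg.mpr (h1 i)]))]

end AuxMeasure

/-- On any measurable space with a nontrivial σ-algebra, for every `m ≥ 1` there is a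
mixture of measures with `m` components that is not `(2m-1)`-determined: there are mixtures
`P` with `m` components and `P'` with `m+1` components, `P ≠ P'`, with the same `V_{2m-1}`. -/
theorem exists_mixture_not_determined {Ω : Type*} [MeasurableSpace Ω]
    (hF : ∃ S : Set Ω, MeasurableSet S ∧ S ≠ ∅ ∧ S ≠ Set.univ)
    (m : ℕ) (hm : 1 ≤ m) :
    ∃ P P' : MixtureOfMeasures Ω, P.m = m ∧ P'.m = m + 1 ∧ ¬ P'.Equal P ∧
      P'.V (2 * m - 1) = P.V (2 * m - 1) := by
  classical
  obtain ⟨S, hS, hne, hnu⟩ := hF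
  obtain ⟨x, hx⟩ := Set.nonempty_iff_ne_empty.mpr hne
  obtain ⟨y, hy⟩ : ∃ y, y ∉ S := by
    by_contra h
    push_neg at h
    exact hnu (Set.eq_univ_of_forall h)
  have h2m : (0:ℝ) < 2*m := by
    have : (1:ℝ) ≤ m := by exact_mod_cast hm
    linarith
  set pe : Fin (m+1) → ℝ := fun i => (2*m:ℝ)⁻¹ * (2 * ((i:ℕ):ℝ)) with hpe
  set po : Fin m → ℝ := fun i => (2*m:ℝ)⁻¹ * (2 * ((i:ℕ):ℝ) + 1) with hpo
  set We : ℝ := ∑ i ∈ Finset.range (m+1), ((2*m).choose (2*i) : ℝ) with hWe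
  set Wo : ℝ := ∑ i ∈ Finset.range m, ((2*m).choose (2*i+1) : ℝ) with hWo
  set lwe : Fin (m+1) → ℝ := fun i => ((2*m).choose (2*(i:ℕ)) : ℝ) / We with hlwe
  set lwo : Fin m → ℝ := fun i => ((2*m).choose (2*(i:ℕ)+1) : ℝ) / Wo with hlwo
  have hWe_pos : 0 < We := by
    refine Finset.sum_pos (fun i hi => ?_) ⟨0, by simp⟩
    rw [Finset.mem_range] at hi
    exact_mod_cast Nat.choose_pos (by omega : 2*i ≤ 2*m)
  have hWo_pos : 0 < Wo := by
    refine Finset.sum_pos (fun i hi => ?_) ⟨0, Finset.mem_range.mpr (by omega)⟩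
    rw [Finset.mem_range] at hi
    exact_mod_cast Nat.choose_pos (by omega : 2*i+1 ≤ 2*m)
  have hWeWo : We = Wo := by
    have key := quad_key' m 1 (by simpa using (by omega : 0 < 2*m))
    simpa using key
  have hpe0 : ∀ i, 0 ≤ pe i := fun i => by
    have : (0:ℝ) ≤ (i:ℕ) := Nat.cast_nonneg _
    rw [hpe]
    positivity
  have hpe1 : ∀ i, pe i ≤ 1 := fun i => by
    have hle : (2 * ((i:ℕ):ℝ)) ≤ 2*m := by
      have : (i:ℕ) ≤ m := by omega
      have := (Nat.cast_le (α := ℝ)).mpr this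
      linarith
    calc pe i ≤ (2*m:ℝ)⁻¹ * (2*m) := by
          exact mul_le_mul_of_nonneg_left hle (by positivity)
    _ = 1 := inv_mul_cancel₀ h2m.ne'
  have hpo0 : ∀ i, 0 ≤ po i := fun i => by
    have : (0:ℝ) ≤ (i:ℕ) := Nat.cast_nonneg _
    rw [hpo]
    positivity
  have hpo1 : ∀ i, po i ≤ 1 := fun i => by
    have hle : (2 * ((i:ℕ):ℝ) + 1) ≤ 2*m := by
      have : ((i:ℕ):ℝ) + 1 ≤ m := by exact_mod_cast (by omega : (i:ℕ) + 1 ≤ m)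
      linarith
    calc po i ≤ (2*m:ℝ)⁻¹ * (2*m) := by
          exact mul_le_mul_of_nonneg_left hle (by positivity)
    _ = 1 := inv_mul_cancel₀ h2m.ne'
  have hwe0 : ∀ i, 0 < lwe i := fun i => by
    refine div_pos ?_ hWe_pos
    exact_mod_cast Nat.choose_pos (by omega : 2*(i:ℕ) ≤ 2*m)
  have hwo0 : ∀ i, 0 < lwo i := fun i => by
    refine div_pos ?_ hWo_pos
    exact_mod_cast Nat.choose_pos (by have := i.isLt; omega : 2*(i:ℕ)+1 ≤ 2*m)
  have hinv_ne : ((2*m:ℝ)⁻¹) ≠ 0 := inv_ne_zero h2m.ne'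
  refine ⟨⟨m, lwo, fun i => bernAux x y (po i),
      fun i => bernAux_prob x y _ (hpo0 i) (hpo1 i), hwo0, ?_, ?_⟩,
    ⟨m+1, lwe, fun i => bernAux x y (pe i),
      fun i => bernAux_prob x y _ (hpe0 i) (hpe1 i), hwe0, ?_, ?_⟩, rfl, rfl, ?_, ?_⟩
  · -- sum of odd weights = 1
    rw [show (∑ i : Fin m, lwo i) = (∑ i : Fin m, ((2*m).choose (2*(i:ℕ)+1) : ℝ)) / Wo by
      rw [Finset.sum_div]]
    rw [Fin.sum_univ_eq_sum_range (fun j => ((2*m).choose (2*j+1) : ℝ)) m, ← hWo]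
    exact div_self hWo_pos.ne'
  · -- injectivity (odd)
    intro i i' h
    have := bernAux_inj x y hS hx hy (hpo0 i) (hpo0 i') h
    rw [hpo] at this
    have := mul_left_cancel₀ hinv_ne this
    have : ((i:ℕ):ℝ) = ((i':ℕ):ℝ) := by linarith
    have : (i:ℕ) = (i':ℕ) := by exact_mod_cast this
    exact Fin.ext this
  · -- sum of even weights = 1
    rw [show (∑ i : Fin (m+1), lwe i) = (∑ i : Fin (m+1), ((2*m).choose (2*(i:ℕ)) : ℝ)) / We by
      rw [Finset.sum_div]]
    rw [Fin.sum_univ_eq_sum_range (fun j => ((2*m).choose (2*j) : ℝ)) (m+1), ← hWe]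
    exact div_self hWe_pos.ne'
  · -- injectivity (even)
    intro i i' h
    have := bernAux_inj x y hS hx hy (hpe0 i) (hpe0 i') h
    rw [hpe] at this
    have := mul_left_cancel₀ hinv_ne this
    have : ((i:ℕ):ℝ) = ((i':ℕ):ℝ) := by linarith
    have : (i:ℕ) = (i':ℕ) := by exact_mod_cast this
    exact Fin.ext this
  · -- not equal
    rintro ⟨σ, -⟩
    have := Fintype.card_congr σ
    simp only [Fintype.card_fin] at this
    omega
  · -- the V equality
    show (∑ i, ENNReal.ofReal (lwe i) • Measure.pi (fun _ : Fin (2*m-1) => bernAux x y (pe i)))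
      = ∑ i, ENNReal.ofReal (lwo i) • Measure.pi (fun _ : Fin (2*m-1) => bernAux x y (po i))
    rw [V_expand x y (2*m-1) (m+1) lwe pe (fun i => (hwe0 i).le) hpe0 hpe1,
      V_expand x y (2*m-1) m lwo po (fun i => (hwo0 i).le) hpo0 hpo1]
    refine Finset.sum_congr rfl fun s _ => ?_
    congr 1
    congr 1
    -- the real quadrature identity
    set G : Polynomial ℝ := ∏ j : Fin (2*m-1), (bif s j then Polynomial.X else 1 - Polynomial.X)
      with hG
    have hGdeg : G.natDegree < 2*m := by
      calc G.natDegree ≤ ∑ j : Fin (2*m-1), (bif s j then Polynomial.X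
            else 1 - Polynomial.X : Polynomial ℝ).natDegree := Polynomial.natDegree_prod_le _ _
      _ ≤ ∑ _j : Fin (2*m-1), 1 := by
          refine Finset.sum_le_sum fun j _ => ?_
          cases s j
          · exact (Polynomial.natDegree_sub_le _ _).trans (by simp)
          · simp
      _ < 2*m := by simp; omega
    have hGeval : ∀ t : ℝ, G.eval t = ∏ j, (bif s j then t else 1 - t) := by
      intro t
      rw [hG, Polynomial.eval_prod]
      refine Finset.prod_congr rfl fun j _ => ?_
      cases s j <;> simp
    have key := quad_key' m G hGdeg
    calc (∑ i : Fin (m+1), lwe i * ∏ j, (bif s j then pe i else 1 - pe i))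
        = (∑ i ∈ Finset.range (m+1), ((2*m).choose (2*i) : ℝ)
            * G.eval ((2*m:ℝ)⁻¹ * (2*i))) / We := by
          rw [Finset.sum_div]
          rw [← Fin.sum_univ_eq_sum_range
            (fun j => ((2*m).choose (2*j) : ℝ) * G.eval ((2*m:ℝ)⁻¹ * (2*j)) / We) (m+1)]
          refine Finset.sum_congr rfl fun i _ => ?_
          rw [← hGeval (pe i), hlwe, hpe]
          push_cast
          ring
      _ = (∑ i ∈ Finset.range m, ((2*m).choose (2*i+1) : ℝ)
            * G.eval ((2*m:ℝ)⁻¹ * (2*i+1))) / Wo := by rw [key, hWeWo]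
      _ = ∑ i : Fin m, lwo i * ∏ j, (bif s j then po i else 1 - po i) := by
          rw [Finset.sum_div]
          rw [← Fin.sum_univ_eq_sum_range
            (fun j => ((2*m).choose (2*j+1) : ℝ) * G.eval ((2*m:ℝ)⁻¹ * (2*j+1)) / Wo) m]
          refine Finset.sum_congr rfl fun i _ => ?_
          rw [← hGeval (po i), hlwo, hpo]
          push_cast
          ring
end

section
/- If P = Σ_{i=1}^m w_i δ_{μ_i} is a mixture of measures whose components μ_1, ..., μ_m are linearly independent (as elements of the vector space of finite signed measures), then P is 3-identifiable: any mixture of measures P' of order at most m with Σ_i w_i μ_i^{×3} = V_3(P') must equal P. -/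
open MeasureTheory

section AuxIdentify

open Module

noncomputable def evalLM {α : Type*} (a : α) : (α → ℝ) →ₗ[ℝ] ℝ := LinearMap.proj a

lemma exists_dual_comb {α : Type*} (W : Submodule ℝ (α → ℝ)) [FiniteDimensional ℝ W]
    (ξ : Module.Dual ℝ W) :
    ∃ ψ : (α → ℝ) →ₗ[ℝ] ℝ,
      ψ ∈ Submodule.span ℝ (Set.range (evalLM (α := α))) ∧ ψ.comp W.subtype = ξ := by
  set D := Submodule.span ℝ (Set.range (evalLM (α := α)))
  set ρ := (W.subtype).dualMap
  have hΦ : Submodule.map ρ D = ⊤ := by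
    set Φ := Submodule.map ρ D
    have h1 : Φ.dualCoannihilator = ⊥ := by
      rw [Submodule.eq_bot_iff]
      intro w hw
      rw [Submodule.mem_dualCoannihilator] at hw
      ext a
      have : ρ (evalLM a) ∈ Φ :=
        Submodule.mem_map_of_mem (Submodule.subset_span (Set.mem_range_self a))
      simpa [ρ, evalLM] using hw _ this
    have h2 := Subspace.finrank_add_finrank_dualCoannihilator_eq Φ
    rw [h1, finrank_bot, add_zero] at h2
    refine Submodule.eq_top_of_finrank_eq ?_
    rw [h2, Subspace.dual_finrank_eq]
  have : ξ ∈ Submodule.map ρ D := hΦ ▸ Submodule.mem_top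
  obtain ⟨ψ, hψD, hψ⟩ := this
  exact ⟨ψ, hψD, hψ⟩

lemma exists_dual_family {α : Type*} {m : ℕ} {f : Fin m → (α → ℝ)}
    (hf : LinearIndependent ℝ f) :
    ∃ ψ : Fin m → ((α → ℝ) →ₗ[ℝ] ℝ),
      (∀ i, ψ i ∈ Submodule.span ℝ (Set.range (evalLM (α := α)))) ∧
      ∀ i k, ψ i (f k) = if i = k then 1 else 0 := by
  set W := Submodule.span ℝ (Set.range f) with hW
  haveI : FiniteDimensional ℝ W := FiniteDimensional.span_of_finite ℝ (Set.finite_range f)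
  let b : Basis (Fin m) ℝ W := Basis.span hf
  choose ψ hD hcomp using fun i => exists_dual_comb W (b.coord i)
  refine ⟨ψ, hD, ?_⟩
  intro i k
  have hmem : f k ∈ W := Submodule.subset_span (Set.mem_range_self k)
  have hbk : b k = ⟨f k, hmem⟩ := by
    apply Subtype.ext; exact congrArg Subtype.val (Basis.span_apply hf k)
  have := congrFun (congrArg (fun (L : W →ₗ[ℝ] ℝ) => (L : W → ℝ)) (hcomp i)) ⟨f k, hmem⟩
  simp only [LinearMap.coe_comp, Function.comp_apply, Submodule.coe_subtype] at this
  rw [this, ← hbk, Basis.coord_apply, Basis.repr_self]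
  simp [Finsupp.single_apply, eq_comm]

lemma vanish_on_span {α : Type*} {M : Type*} [AddCommGroup M] [Module ℝ M]
    (T : ((α → ℝ) →ₗ[ℝ] ℝ) →ₗ[ℝ] M) (h : ∀ a : α, T (evalLM a) = 0) :
    ∀ ψ ∈ Submodule.span ℝ (Set.range (evalLM (α := α))), T ψ = 0 := by
  intro ψ hψ
  have : Submodule.span ℝ (Set.range (evalLM (α := α))) ≤ LinearMap.ker T := by
    rw [Submodule.span_le]
    rintro _ ⟨a, rfl⟩
    exact h a
  exact this hψ

lemma key_identity {α : Type*} {m m' : ℕ} (w : Fin m → ℝ) (w' : Fin m' → ℝ)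
    (f : Fin m → (α → ℝ)) (g : Fin m' → (α → ℝ))
    (hkey : ∀ a b c : α,
      ∑ j, w' j * g j a * g j b * g j c = ∑ i, w i * f i a * f i b * f i c)
    {φ ψ : (α → ℝ) →ₗ[ℝ] ℝ}
    (hφ : φ ∈ Submodule.span ℝ (Set.range (evalLM (α := α))))
    (hψ : ψ ∈ Submodule.span ℝ (Set.range (evalLM (α := α)))) (c : α) :
    ∑ j, w' j * φ (g j) * ψ (g j) * g j c = ∑ i, w i * φ (f i) * ψ (f i) * f i c := by
  have step1 : ∀ a : α, ∀ ψ' ∈ Submodule.span ℝ (Set.range (evalLM (α := α))), ∀ c : α,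
      ∑ j, w' j * g j a * ψ' (g j) * g j c = ∑ i, w i * f i a * ψ' (f i) * f i c := by
    intro a ψ' hψ' c
    let T : ((α → ℝ) →ₗ[ℝ] ℝ) →ₗ[ℝ] (α → ℝ) :=
      (∑ j, (w' j * g j a) • ((LinearMap.applyₗ (g j)).smulRight (g j)))
        - (∑ i, (w i * f i a) • ((LinearMap.applyₗ (f i)).smulRight (f i)))
    have hT : ∀ b : α, T (evalLM b) = 0 := by
      intro b
      funext c'
      simp only [T, LinearMap.sub_apply, LinearMap.sum_apply, LinearMap.smul_apply,
        LinearMap.smulRight_apply, LinearMap.applyₗ_apply_apply, evalLM, LinearMap.proj_apply,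
        Pi.sub_apply, Finset.sum_apply, Pi.smul_apply, smul_eq_mul, Pi.zero_apply]
      rw [sub_eq_zero]
      calc ∑ j, w' j * g j a * (g j b * g j c')
          = ∑ j, w' j * g j a * g j b * g j c' := Finset.sum_congr rfl fun _ _ => by ring
        _ = ∑ i, w i * f i a * f i b * f i c' := hkey a b c'
        _ = ∑ i, w i * f i a * (f i b * f i c') := Finset.sum_congr rfl fun _ _ => by ring
    have := congrFun (vanish_on_span T hT ψ' hψ') c
    simp only [T, LinearMap.sub_apply, LinearMap.sum_apply, LinearMap.smul_apply,
      LinearMap.smulRight_apply, LinearMap.applyₗ_apply_apply,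
      Pi.sub_apply, Finset.sum_apply, Pi.smul_apply, smul_eq_mul, Pi.zero_apply] at this
    rw [sub_eq_zero] at this
    calc ∑ j, w' j * g j a * ψ' (g j) * g j c
        = ∑ j, w' j * g j a * (ψ' (g j) * g j c) := Finset.sum_congr rfl fun _ _ => by ring
      _ = ∑ i, w i * f i a * (ψ' (f i) * f i c) := this
      _ = ∑ i, w i * f i a * ψ' (f i) * f i c := Finset.sum_congr rfl fun _ _ => by ring
  let S : ((α → ℝ) →ₗ[ℝ] ℝ) →ₗ[ℝ] (α → ℝ) :=
    (∑ j, (w' j * ψ (g j)) • ((LinearMap.applyₗ (g j)).smulRight (g j)))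
      - (∑ i, (w i * ψ (f i)) • ((LinearMap.applyₗ (f i)).smulRight (f i)))
  have hS : ∀ a : α, S (evalLM a) = 0 := by
    intro a
    funext c'
    simp only [S, LinearMap.sub_apply, LinearMap.sum_apply, LinearMap.smul_apply,
      LinearMap.smulRight_apply, LinearMap.applyₗ_apply_apply, evalLM, LinearMap.proj_apply,
      Pi.sub_apply, Finset.sum_apply, Pi.smul_apply, smul_eq_mul, Pi.zero_apply]
    rw [sub_eq_zero]
    calc ∑ j, w' j * ψ (g j) * (g j a * g j c')
        = ∑ j, w' j * g j a * ψ (g j) * g j c' := Finset.sum_congr rfl fun _ _ => by ring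
      _ = ∑ i, w i * f i a * ψ (f i) * f i c' := step1 a ψ hψ c'
      _ = ∑ i, w i * ψ (f i) * (f i a * f i c') := Finset.sum_congr rfl fun _ _ => by ring
  have := congrFun (vanish_on_span S hS φ hφ) c
  simp only [S, LinearMap.sub_apply, LinearMap.sum_apply, LinearMap.smul_apply,
    LinearMap.smulRight_apply, LinearMap.applyₗ_apply_apply,
    Pi.sub_apply, Finset.sum_apply, Pi.smul_apply, smul_eq_mul, Pi.zero_apply] at this
  rw [sub_eq_zero] at this
  calc ∑ j, w' j * φ (g j) * ψ (g j) * g j c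
      = ∑ j, w' j * ψ (g j) * (φ (g j) * g j c) := Finset.sum_congr rfl fun _ _ => by ring
    _ = ∑ i, w i * ψ (f i) * (φ (f i) * f i c) := this
    _ = ∑ i, w i * φ (f i) * ψ (f i) * f i c := Finset.sum_congr rfl fun _ _ => by ring

theorem abstract_identify {α : Type*} {m m' : ℕ} (hord : m' ≤ m)
    (w : Fin m → ℝ) (w' : Fin m' → ℝ) (hw : ∀ i, 0 < w i) (hw' : ∀ j, 0 < w' j)
    (f : Fin m → (α → ℝ)) (g : Fin m' → (α → ℝ))
    (hf : LinearIndependent ℝ f)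
    (a₀ : α) (hf1 : ∀ i, f i a₀ = 1) (hg1 : ∀ j, g j a₀ = 1)
    (hkey : ∀ a b c : α,
      ∑ j, w' j * g j a * g j b * g j c = ∑ i, w i * f i a * f i b * f i c) :
    ∃ τ : Fin m' → Fin m, Function.Bijective τ ∧ ∀ j, g j = f (τ j) ∧ w' j = w (τ j) := by
  classical
  obtain ⟨ψ, hψD, hψδ⟩ := exists_dual_family hf
  -- the basic identity with φ = ψ = ψ i
  have hVi : ∀ i c, ∑ j, (w' j * ψ i (g j) * ψ i (g j)) * g j c = w i * f i c := by
    intro i c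
    have := key_identity w w' f g hkey (hψD i) (hψD i) c
    rw [Finset.sum_eq_single i (fun k _ hk => by
        rw [hψδ i k, if_neg (fun h => hk h.symm)]; ring)
      (fun h => absurd (Finset.mem_univ i) h)] at this
    rw [hψδ i i, if_pos rfl] at this
    calc ∑ j, (w' j * ψ i (g j) * ψ i (g j)) * g j c
        = ∑ j, w' j * ψ i (g j) * ψ i (g j) * g j c := Finset.sum_congr rfl fun _ _ => by ring
      _ = w i * 1 * 1 * f i c := this
      _ = w i * f i c := by ring
  -- f i lies in the span of g
  have hmemf : ∀ i, f i ∈ Submodule.span ℝ (Set.range g) := by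
    intro i
    have : f i = (w i)⁻¹ • ∑ j, (w' j * ψ i (g j) * ψ i (g j)) • g j := by
      funext c
      rw [Pi.smul_apply, Finset.sum_apply, smul_eq_mul]
      rw [show ∑ j, ((w' j * ψ i (g j) * ψ i (g j)) • g j) c
          = ∑ j, (w' j * ψ i (g j) * ψ i (g j)) * g j c from
        Finset.sum_congr rfl fun _ _ => rfl]
      rw [hVi i c, inv_mul_cancel_left₀ (ne_of_gt (hw i))]
    rw [this]
    exact Submodule.smul_mem _ _ (Submodule.sum_mem _ fun j _ =>
      Submodule.smul_mem _ _ (Submodule.subset_span (Set.mem_range_self j)))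
  -- dimension count
  have hspan_le : Submodule.span ℝ (Set.range f) ≤ Submodule.span ℝ (Set.range g) := by
    rw [Submodule.span_le]
    rintro _ ⟨i, rfl⟩
    exact hmemf i
  haveI : FiniteDimensional ℝ (Submodule.span ℝ (Set.range g)) :=
    FiniteDimensional.span_of_finite ℝ (Set.finite_range g)
  have hrk1 : m ≤ finrank ℝ (Submodule.span ℝ (Set.range g)) := by
    have := Submodule.finrank_mono (R := ℝ) hspan_le
    rwa [finrank_span_eq_card hf, Fintype.card_fin] at this
  have hrk2 : finrank ℝ (Submodule.span ℝ (Set.range g)) ≤ m' := by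
    have := finrank_range_le_card (R := ℝ) g
    rwa [Set.finrank, Fintype.card_fin] at this
  have hmm : m' = m := le_antisymm hord (hrk1.trans hrk2)
  have hg : LinearIndependent ℝ g := by
    rw [linearIndependent_iff_card_eq_finrank_span, Fintype.card_fin, Set.finrank]
    omega
  obtain ⟨χ, hχD, hχδ⟩ := exists_dual_family hg
  set b : Fin m → Fin m' → ℝ := fun i j => w' j * ψ i (g j) * ψ i (g j) / w i with hbdef
  have hb0 : ∀ i j, 0 ≤ b i j := fun i j =>
    div_nonneg (by rw [mul_assoc]; exact mul_nonneg (hw' j).le (mul_self_nonneg _)) (hw i).le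
  have hfg : ∀ i c, f i c = ∑ j, b i j * g j c := by
    intro i c
    have : ∑ j, b i j * g j c = (∑ j, w' j * ψ i (g j) * ψ i (g j) * g j c) / w i := by
      rw [Finset.sum_div]
      exact Finset.sum_congr rfl fun j _ => by rw [hbdef]; ring
    rw [this, hVi i c, mul_div_cancel_left₀ _ (ne_of_gt (hw i))]
  have hVj : ∀ j c, w' j * g j c = ∑ i, w i * χ j (f i) * χ j (f i) * f i c := by
    intro j c
    have := key_identity w w' f g hkey (hχD j) (hχD j) c
    rw [Finset.sum_eq_single j (fun k _ hk => by
        rw [hχδ j k, if_neg (fun h => hk h.symm)]; ring)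
      (fun h => absurd (Finset.mem_univ j) h)] at this
    rw [hχδ j j, if_pos rfl] at this
    calc w' j * g j c = w' j * 1 * 1 * g j c := by ring
      _ = ∑ i, w i * χ j (f i) * χ j (f i) * f i c := this
  set a : Fin m' → Fin m → ℝ := fun j i => w i * χ j (f i) * χ j (f i) / w' j with hadef
  have ha0 : ∀ j i, 0 ≤ a j i := fun j i =>
    div_nonneg (by rw [mul_assoc]; exact mul_nonneg (hw i).le (mul_self_nonneg _)) (hw' j).le
  have hgf : ∀ j c, g j c = ∑ i, a j i * f i c := by
    intro j c
    have h1 : ∑ i, a j i * f i c = (∑ i, w i * χ j (f i) * χ j (f i) * f i c) / w' j := by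
      rw [Finset.sum_div]
      exact Finset.sum_congr rfl fun i _ => by rw [hadef]; ring
    rw [h1, ← hVj j c, mul_div_cancel_left₀ _ (ne_of_gt (hw' j))]
  have hAB : ∀ j k, ∑ i, a j i * b i k = if j = k then 1 else 0 := by
    intro j k
    have hcomb : ∀ c, ∑ k', (∑ i, a j i * b i k') * g k' c = g j c := by
      intro c
      calc ∑ k', (∑ i, a j i * b i k') * g k' c
          = ∑ k', ∑ i, a j i * b i k' * g k' c :=
            Finset.sum_congr rfl fun k' _ => Finset.sum_mul _ _ _
        _ = ∑ i, ∑ k', a j i * b i k' * g k' c := Finset.sum_comm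
        _ = ∑ i, a j i * f i c := by
            refine Finset.sum_congr rfl fun i _ => ?_
            rw [hfg i c, Finset.mul_sum]
            exact Finset.sum_congr rfl fun k' _ => by ring
        _ = g j c := (hgf j c).symm
    have hzero : ∑ k', ((∑ i, a j i * b i k') - if j = k' then 1 else 0) • g k' = 0 := by
      funext c
      rw [Finset.sum_apply, Pi.zero_apply]
      rw [show ∑ k', (((∑ i, a j i * b i k') - if j = k' then 1 else 0) • g k') c
          = ∑ k', ((∑ i, a j i * b i k') - if j = k' then 1 else 0) * g k' c from
        Finset.sum_congr rfl fun _ _ => rfl]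
      have hδ : ∑ k', (if j = k' then (1:ℝ) else 0) * g k' c = g j c := by
        rw [Finset.sum_eq_single j (fun k' _ hk => by rw [if_neg (fun h => hk h.symm)]; ring)
          (fun h => absurd (Finset.mem_univ j) h), if_pos rfl, one_mul]
      calc ∑ k', ((∑ i, a j i * b i k') - if j = k' then 1 else 0) * g k' c
          = (∑ k', (∑ i, a j i * b i k') * g k' c)
            - ∑ k', (if j = k' then (1:ℝ) else 0) * g k' c := by
            rw [← Finset.sum_sub_distrib]
            exact Finset.sum_congr rfl fun _ _ => by ring
        _ = 0 := by rw [hcomb c, hδ, sub_self]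
    have := Fintype.linearIndependent_iff.mp hg _ hzero k
    linarith [this]
  -- main matching
  have hmain : ∀ j, ∃ i, (∀ c, f i c = b i j * g j c) ∧ b i j = 1 := by
    intro j
    have hdiag : ∑ i, a j i * b i j = 1 := by rw [hAB j j, if_pos rfl]
    obtain ⟨i, _, hne⟩ := Finset.exists_ne_zero_of_sum_ne_zero
      (hdiag ▸ (one_ne_zero : (1:ℝ) ≠ 0))
    have hai : a j i ≠ 0 := fun h => hne (by rw [h, zero_mul])
    have hbik0 : ∀ k, k ≠ j → b i k = 0 := by
      intro k hk
      have h0 : ∑ i', a j i' * b i' k = 0 := by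
        rw [hAB j k, if_neg (fun h => hk (h.symm))]
      have := (Finset.sum_eq_zero_iff_of_nonneg
        (fun i' _ => mul_nonneg (ha0 j i') (hb0 i' k))).mp h0 i (Finset.mem_univ i)
      exact (mul_eq_zero.mp this).resolve_left hai
    have hfib : ∀ c, f i c = b i j * g j c := by
      intro c
      rw [hfg i c, Finset.sum_eq_single j (fun k _ hk => by rw [hbik0 k hk, zero_mul])
        (fun h => absurd (Finset.mem_univ j) h)]
    have hb1 : b i j = 1 := by
      have := hfib a₀
      rw [hf1 i, hg1 j, mul_one] at this
      linarith
    exact ⟨i, hfib, hb1⟩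
  have hmain' : ∀ j, ∃ i, g j = f i := by
    intro j
    obtain ⟨i, hfib, hb1⟩ := hmain j
    exact ⟨i, funext fun c => by rw [hfib c, hb1, one_mul]⟩
  choose τ hτ using hmain'
  have hτinj : Function.Injective τ := fun j j' h => hg.injective (by rw [hτ j, hτ j', h])
  have hτbij : Function.Bijective τ := by
    rw [Fintype.bijective_iff_injective_and_card]
    exact ⟨hτinj, by simp [hmm]⟩
  refine ⟨τ, hτbij, fun j => ⟨hτ j, ?_⟩⟩
  -- weights
  have := hVi (τ j) a₀
  rw [Finset.sum_eq_single j (fun k _ hk => by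
      rw [hτ k, hψδ (τ j) (τ k), if_neg (fun h => hk (hτinj h).symm)]; ring)
    (fun h => absurd (Finset.mem_univ j) h)] at this
  rw [hτ j, hψδ (τ j) (τ j), if_pos rfl, hf1 (τ j)] at this
  linarith [this]

lemma V3_box {Ω : Type*} [MeasurableSpace Ω] (P : MixtureOfMeasures Ω)
    (A B C : Set Ω) :
    (P.V 3 (Set.univ.pi ![A, B, C])).toReal
      = ∑ i, P.w i * ((P.μ i A).toReal * (P.μ i B).toReal * (P.μ i C).toReal) := by
  rw [MixtureOfMeasures.V]
  rw [Measure.coe_finset_sum, Finset.sum_apply]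
  rw [ENNReal.toReal_sum]
  · refine Finset.sum_congr rfl fun i _ => ?_
    haveI := P.prob i
    rw [Measure.smul_apply, smul_eq_mul, Measure.pi_pi, Fin.prod_univ_three]
    simp only [Matrix.cons_val_zero, Matrix.cons_val_one, Matrix.head_cons,
      Matrix.cons_val_two, Matrix.tail_cons]
    rw [ENNReal.toReal_mul, ENNReal.toReal_mul, ENNReal.toReal_mul,
      ENNReal.toReal_ofReal (P.pos i).le]
  · intro i _
    haveI := P.prob i
    rw [Measure.smul_apply, smul_eq_mul, Measure.pi_pi, Fin.prod_univ_three]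
    simp only [Matrix.cons_val_zero, Matrix.cons_val_one, Matrix.head_cons,
      Matrix.cons_val_two, Matrix.tail_cons]
    exact ENNReal.mul_ne_top ENNReal.ofReal_ne_top
      (ENNReal.mul_ne_top (ENNReal.mul_ne_top (measure_ne_top _ _) (measure_ne_top _ _))
        (measure_ne_top _ _))

end AuxIdentify

/-- A mixture of measures with linearly independent components (as elements of the space of
finite signed measures) is `3`-identifiable. -/
theorem mixture_linearIndependent_identifiable_three {Ω : Type*} [MeasurableSpace Ω]
    (P : MixtureOfMeasures Ω)
    (hli : ∀ c : Fin P.m → ℝ,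
      (∀ A : Set Ω, MeasurableSet A → ∑ i, c i * (P.μ i A).toReal = 0) → c = 0)
    (P' : MixtureOfMeasures Ω) (hord : P'.m ≤ P.m)
    (hV : P'.V 3 = P.V 3) :
    P'.Equal P := by
  classical
  set α := {A : Set Ω // MeasurableSet A}
  set f : Fin P.m → (α → ℝ) := fun i A => (P.μ i A.1).toReal with hfdef
  set g : Fin P'.m → (α → ℝ) := fun j A => (P'.μ j A.1).toReal with hgdef
  have hf : LinearIndependent ℝ f := by
    rw [Fintype.linearIndependent_iff]
    intro c hc
    have : c = 0 := by
      apply hli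
      intro A hA
      have := congrFun hc ⟨A, hA⟩
      rw [Finset.sum_apply] at this
      simpa [f] using this
    intro i; rw [this]; rfl
  have hf1 : ∀ i, f i ⟨Set.univ, MeasurableSet.univ⟩ = 1 := by
    intro i; haveI := P.prob i; simp [f]
  have hg1 : ∀ j, g j ⟨Set.univ, MeasurableSet.univ⟩ = 1 := by
    intro j; haveI := P'.prob j; simp [g]
  have hkey : ∀ a b c : α,
      ∑ j, P'.w j * g j a * g j b * g j c = ∑ i, P.w i * f i a * f i b * f i c := by
    intro a b c
    have h1 := V3_box P' a.1 b.1 c.1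
    have h2 := V3_box P a.1 b.1 c.1
    rw [hV] at h1
    calc ∑ j, P'.w j * g j a * g j b * g j c
        = ∑ j, P'.w j * (g j a * g j b * g j c) := Finset.sum_congr rfl fun _ _ => by ring
      _ = (P.V 3 (Set.univ.pi ![a.1, b.1, c.1])).toReal := h1.symm
      _ = ∑ i, P.w i * (f i a * f i b * f i c) := h2
      _ = ∑ i, P.w i * f i a * f i b * f i c := Finset.sum_congr rfl fun _ _ => by ring
  obtain ⟨τ, hbij, hτ⟩ := abstract_identify hord P.w P'.w P.pos P'.pos f g hf
    ⟨Set.univ, MeasurableSet.univ⟩ hf1 hg1 hkey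
  set e := Equiv.ofBijective τ hbij with hedef
  have heapp : ∀ j, e j = τ j := fun j => rfl
  refine ⟨e.symm, fun j => ?_⟩
  have hτe : τ (e.symm j) = j := by rw [← heapp, e.apply_symm_apply]
  obtain ⟨hμeq, hweq⟩ := hτ (e.symm j)
  rw [hτe] at hμeq hweq
  constructor
  · haveI := P'.prob (e.symm j)
    haveI := P.prob j
    apply Measure.ext
    intro s hs
    have := congrFun hμeq ⟨s, hs⟩
    simp only [f, g] at this
    exact ((ENNReal.toReal_eq_toReal_iff' (measure_ne_top _ _) (measure_ne_top _ _)).mp this).symm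
  · exact hweq.symm
end

section
/- If P = Σ_{i=1}^m w_i δ_{μ_i} is a mixture of measures whose components μ_1, ..., μ_m are linearly independent, then P is 4-determined: any mixture of measures P' of any order with V_4(P) = V_4(P') must equal P. -/
open MeasureTheory

/- ### Auxiliary lemmas -/

private lemma aux_exists_finset_sep {S : Type*} :
    ∀ (n : ℕ) (U : Submodule ℝ (S → ℝ)), FiniteDimensional ℝ U → Module.finrank ℝ U ≤ n →
      ∃ t : Finset S, ∀ x ∈ U, (∀ s ∈ t, x s = 0) → x = 0 := by
  classical
  intro n
  induction n with
  | zero =>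
    intro U hU hr
    refine ⟨∅, fun x hx _ => ?_⟩
    have : U = ⊥ := Submodule.finrank_eq_zero.mp (Nat.le_zero.mp hr)
    simpa [this, Submodule.mem_bot] using hx
  | succ n ih =>
    intro U hU hr
    by_cases h : ∀ x ∈ U, x = 0
    · exact ⟨∅, fun x hx _ => h x hx⟩
    push_neg at h
    obtain ⟨x, hxU, hx0⟩ := h
    obtain ⟨s0, hs0⟩ : ∃ s, x s ≠ 0 := by
      by_contra h'
      push_neg at h'
      exact hx0 (funext h')
    set U' := U ⊓ LinearMap.ker (LinearMap.proj (R := ℝ) (φ := fun _ : S => ℝ) s0) with hU'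
    have hle : U' ≤ U := inf_le_left
    haveI : FiniteDimensional ℝ U' := Submodule.finiteDimensional_of_le hle
    have hlt : U' < U := by
      refine lt_of_le_of_ne hle fun he => ?_
      have : x ∈ U' := he ▸ hxU
      exact hs0 (this.2)
    have hfr : Module.finrank ℝ U' < Module.finrank ℝ U :=
      Submodule.finrank_lt_finrank_of_lt hlt
    obtain ⟨t', ht'⟩ := ih U' inferInstance (by omega)
    refine ⟨insert s0 t', fun y hy hvan => ?_⟩
    refine ht' y ⟨hy, ?_⟩ fun s hs => hvan s (Finset.mem_insert_of_mem hs)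
    simpa [LinearMap.mem_ker] using hvan s0 (Finset.mem_insert_self _ _)

private lemma aux_exists_sep_coeffs {S : Type*} {m : ℕ} (v : Fin m → (S → ℝ)) (u : S → ℝ)
    (hu : u ∉ Submodule.span ℝ (Set.range v)) :
    ∃ (t : Finset S) (c : S → ℝ),
      (∀ i, ∑ s ∈ t, c s * v i s = 0) ∧ (∑ s ∈ t, c s * u s = 1) := by
  classical
  set U : Submodule ℝ (S → ℝ) := Submodule.span ℝ (insert u (Set.range v)) with hUdef
  haveI : FiniteDimensional ℝ U := FiniteDimensional.span_of_finite ℝ ((Set.finite_range v).insert u)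
  obtain ⟨t, ht⟩ := aux_exists_finset_sep (Module.finrank ℝ U) U inferInstance le_rfl
  set ρ : (S → ℝ) →ₗ[ℝ] (↥t → ℝ) :=
    LinearMap.pi (fun s : ↥t => LinearMap.proj (s : S)) with hρdef
  have hρ : ∀ x : S → ℝ, ∀ s : ↥t, ρ x s = x (s : S) := fun _ _ => rfl
  have huU : u ∈ U := Submodule.subset_span (Set.mem_insert _ _)
  have hvU : ∀ i, v i ∈ U := fun i =>
    Submodule.subset_span (Set.mem_insert_of_mem _ (Set.mem_range_self i))
  have hρu : ρ u ∉ Submodule.span ℝ (Set.range fun i => ρ (v i)) := by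
    intro hmem
    rw [Submodule.mem_span_range_iff_exists_fun] at hmem
    obtain ⟨c, hc⟩ := hmem
    have h1 : ρ (∑ i, c i • v i - u) = 0 := by
      rw [map_sub, map_sum]
      simp only [_root_.map_smul]
      rw [hc, sub_self]
    have h2 : (∑ i, c i • v i - u) ∈ U :=
      sub_mem (Submodule.sum_mem _ fun i _ => Submodule.smul_mem _ _ (hvU i)) huU
    have h3 : ∑ i, c i • v i - u = 0 := by
      refine ht _ h2 fun s hs => ?_
      have := congrFun h1 ⟨s, hs⟩
      simpa [hρ] using this
    have : u ∈ Submodule.span ℝ (Set.range v) := by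
      have : u = ∑ i, c i • v i := by
        rw [sub_eq_zero] at h3; exact h3.symm
      rw [this, Submodule.mem_span_range_iff_exists_fun]
      exact ⟨c, rfl⟩
    exact hu this
  set W : Submodule ℝ (↥t → ℝ) := Submodule.span ℝ (Set.range fun i => ρ (v i)) with hWdef
  have hq : W.mkQ (ρ u) ≠ 0 := by
    rw [Submodule.mkQ_apply, Ne, Submodule.Quotient.mk_eq_zero]
    exact hρu
  obtain ⟨φ, hφ⟩ : ∃ φ : Module.Dual ℝ ((↥t → ℝ) ⧸ W), φ (W.mkQ (ρ u)) ≠ 0 := by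
    by_contra h
    push_neg at h
    exact hq ((Module.forall_dual_apply_eq_zero_iff ℝ _).mp h)
  set L : (S → ℝ) →ₗ[ℝ] ℝ := φ ∘ₗ W.mkQ ∘ₗ ρ with hLdef
  have hLv : ∀ i, L (v i) = 0 := by
    intro i
    have : ρ (v i) ∈ W := Submodule.subset_span (Set.mem_range_self i)
    simp only [hLdef, LinearMap.comp_apply, Submodule.mkQ_apply]
    rw [(Submodule.Quotient.mk_eq_zero W).mpr this, map_zero]
  have hLu : L u ≠ 0 := hφ
  set L' : (↥t → ℝ) →ₗ[ℝ] ℝ := φ ∘ₗ W.mkQ with hL'def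
  set c : S → ℝ := fun s =>
    if h : s ∈ t then (L u)⁻¹ * L' (fun j : ↥t => if (⟨s, h⟩ : ↥t) = j then 1 else 0) else 0
    with hcdef
  have hexp : ∀ x : S → ℝ, ∑ s ∈ t, c s * x s = (L u)⁻¹ * L x := by
    intro x
    have h1 : L x = L' (ρ x) := rfl
    rw [h1, LinearMap.pi_apply_eq_sum_univ L' (ρ x), Finset.univ_eq_attach, Finset.mul_sum,
      ← Finset.sum_attach t (fun s => c s * x s)]
    refine Finset.sum_congr rfl fun s _ => ?_
    simp only [hcdef, hρ, s.2, dif_pos, Subtype.coe_eta, smul_eq_mul]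
    ring
  refine ⟨t, c, fun i => ?_, ?_⟩
  · rw [hexp, hLv i, mul_zero]
  · rw [hexp, inv_mul_cancel₀ hLu]

private lemma aux_V_eval {Ω : Type*} [MeasurableSpace Ω] (P : MixtureOfMeasures Ω)
    (A : Fin 4 → Set Ω) :
    (P.V 4 (Set.univ.pi A)).toReal = ∑ i, P.w i * ∏ k, (P.μ i (A k)).toReal := by
  haveI : ∀ i, IsProbabilityMeasure (P.μ i) := P.prob
  have hterm : ∀ i : Fin P.m,
      (ENNReal.ofReal (P.w i) • Measure.pi (fun _ : Fin 4 => P.μ i)) (Set.univ.pi A)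
        = ENNReal.ofReal (P.w i) * ∏ k, P.μ i (A k) := by
    intro i
    rw [Measure.smul_apply, smul_eq_mul, Measure.pi_pi]
  have hne : ∀ i : Fin P.m, ENNReal.ofReal (P.w i) * ∏ k, P.μ i (A k) ≠ ⊤ := by
    intro i
    exact ENNReal.mul_ne_top ENNReal.ofReal_ne_top
      (by
        refine (ENNReal.prod_lt_top ?_).ne
        intro k _
        exact (measure_lt_top _ _))
  rw [MixtureOfMeasures.V]
  rw [show ((∑ i, ENNReal.ofReal (P.w i) • Measure.pi (fun _ : Fin 4 => P.μ i)) (Set.univ.pi A))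
      = ∑ i, (ENNReal.ofReal (P.w i) • Measure.pi (fun _ : Fin 4 => P.μ i)) (Set.univ.pi A) from by
    rw [Measure.coe_finset_sum]; simp]
  rw [Finset.sum_congr rfl (fun i _ => hterm i), ENNReal.toReal_sum (fun i _ => hne i)]
  refine Finset.sum_congr rfl fun i _ => ?_
  rw [ENNReal.toReal_mul, ENNReal.toReal_ofReal (P.pos i).le, ENNReal.toReal_prod]

/-- The one-variable linear-extension step used for the multilinear identity. -/
private lemma aux_level {r m : ℕ} {S : Type*} (w' : Fin r → ℝ) (w : Fin m → ℝ)
    (c : Fin r → Fin m → ℝ) (ψ : S → (Fin m → ℝ))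
    (htop : Submodule.span ℝ (Set.range ψ) = ⊤)
    (f : Fin r → ℝ) (g : Fin m → ℝ)
    (hbase : ∀ s : S, ∑ j, w' j * (f j * ∑ i, c j i * ψ s i) = ∑ i, w i * (g i * ψ s i)) :
    ∀ x : Fin m → ℝ, ∑ j, w' j * (f j * ∑ i, c j i * x i) = ∑ i, w i * (g i * x i) := by
  intro x
  have hx : x ∈ Submodule.span ℝ (Set.range ψ) := htop ▸ Submodule.mem_top
  induction hx using Submodule.span_induction with
  | mem y hy =>
    obtain ⟨s, rfl⟩ := hy
    exact hbase s
  | zero => simp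
  | add y z hy hz ihy ihz =>
    simp only [Pi.add_apply, mul_add, Finset.sum_add_distrib]
    rw [ihy, ihz]
  | smul a y hy ihy =>
    simp only [Pi.smul_apply, smul_eq_mul]
    calc ∑ j, w' j * (f j * ∑ i, c j i * (a * y i))
        = a * ∑ j, w' j * (f j * ∑ i, c j i * y i) := by
          rw [Finset.mul_sum]
          refine Finset.sum_congr rfl fun j _ => ?_
          rw [show ∑ i, c j i * (a * y i) = a * ∑ i, c j i * y i from by
            rw [Finset.mul_sum]; exact Finset.sum_congr rfl fun i _ => by ring]
          ring
      _ = a * ∑ i, w i * (g i * y i) := by rw [ihy]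
      _ = ∑ i, w i * (g i * (a * y i)) := by
          rw [Finset.mul_sum]
          exact Finset.sum_congr rfl fun i _ => by ring

/-- A mixture of measures with linearly independent components (as elements of the space of
finite signed measures) is `4`-determined. -/
theorem mixture_linearIndependent_determined_four {Ω : Type*} [MeasurableSpace Ω]
    (P : MixtureOfMeasures Ω)
    (hli : ∀ c : Fin P.m → ℝ,
      (∀ A : Set Ω, MeasurableSet A → ∑ i, c i * (P.μ i A).toReal = 0) → c = 0)
    (P' : MixtureOfMeasures Ω)
    (hV : P'.V 4 = P.V 4) :
    P'.Equal P := by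
  classical
  haveI hPprob : ∀ i, IsProbabilityMeasure (P.μ i) := P.prob
  haveI hP'prob : ∀ j, IsProbabilityMeasure (P'.μ j) := P'.prob
  -- Step 1: equality of evaluations on rectangles
  have step1 : ∀ A1 A2 A3 A4 : Set Ω,
      ∑ j, P'.w j * ((P'.μ j A1).toReal * (P'.μ j A2).toReal * (P'.μ j A3).toReal
        * (P'.μ j A4).toReal)
      = ∑ i, P.w i * ((P.μ i A1).toReal * (P.μ i A2).toReal * (P.μ i A3).toReal
        * (P.μ i A4).toReal) := by
    intro A1 A2 A3 A4
    have hVeq := congrArg (fun mm : Measure (Fin 4 → Ω) =>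
      (mm (Set.univ.pi ![A1, A2, A3, A4])).toReal) hV
    rw [aux_V_eval P' _, aux_V_eval P _] at hVeq
    simpa only [Fin.prod_univ_four, Matrix.cons_val_zero, Matrix.cons_val_one, Matrix.head_cons,
      Matrix.cons_val_two, Matrix.cons_val_three, Matrix.tail_cons] using hVeq
  -- Step 2: the functional (4th power) identity
  have h4 : ∀ (t : Finset {A : Set Ω // MeasurableSet A})
      (d : {A : Set Ω // MeasurableSet A} → ℝ),
      ∑ j, P'.w j * (∑ s ∈ t, d s * (P'.μ j s.1).toReal) ^ 4
        = ∑ i, P.w i * (∑ s ∈ t, d s * (P.μ i s.1).toReal) ^ 4 := by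
    intro t d
    have expand : ∀ lam : Measure Ω,
        (∑ s ∈ t, d s * (lam s.1).toReal) ^ 4
          = ∑ p ∈ Fintype.piFinset (fun _ : Fin 4 => t),
              (∏ k, d (p k)) * ((lam (p 0).1).toReal * (lam (p 1).1).toReal
                * (lam (p 2).1).toReal * (lam (p 3).1).toReal) := by
      intro lam
      have h1 : (∑ s ∈ t, d s * (lam s.1).toReal) ^ 4
          = ∏ _k : Fin 4, (∑ s ∈ t, d s * (lam s.1).toReal) := by
        simp [Finset.prod_const]
      rw [h1, Finset.prod_univ_sum]
      refine Finset.sum_congr rfl fun p _ => ?_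
      rw [Finset.prod_mul_distrib, Fin.prod_univ_four (fun k => (lam (p k).1).toReal)]
    simp_rw [expand, Finset.mul_sum]
    rw [Finset.sum_comm]
    conv_rhs => rw [Finset.sum_comm]
    refine Finset.sum_congr rfl fun p _ => ?_
    calc ∑ j, P'.w j * ((∏ k, d (p k)) * ((P'.μ j (p 0).1).toReal * (P'.μ j (p 1).1).toReal
            * (P'.μ j (p 2).1).toReal * (P'.μ j (p 3).1).toReal))
        = (∏ k, d (p k)) * ∑ j, P'.w j * ((P'.μ j (p 0).1).toReal * (P'.μ j (p 1).1).toReal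
            * (P'.μ j (p 2).1).toReal * (P'.μ j (p 3).1).toReal) := by
          rw [Finset.mul_sum]
          exact Finset.sum_congr rfl fun j _ => by ring
      _ = (∏ k, d (p k)) * ∑ i, P.w i * ((P.μ i (p 0).1).toReal * (P.μ i (p 1).1).toReal
            * (P.μ i (p 2).1).toReal * (P.μ i (p 3).1).toReal) := by
          rw [step1 (p 0).1 (p 1).1 (p 2).1 (p 3).1]
      _ = ∑ i, P.w i * ((∏ k, d (p k)) * ((P.μ i (p 0).1).toReal * (P.μ i (p 1).1).toReal
            * (P.μ i (p 2).1).toReal * (P.μ i (p 3).1).toReal)) := by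
          rw [Finset.mul_sum]
          exact Finset.sum_congr rfl fun i _ => by ring
  -- Step 3: each component of P' lies in the span of the components of P
  have hmem : ∀ j, (fun s : {A : Set Ω // MeasurableSet A} => (P'.μ j s.1).toReal)
      ∈ Submodule.span ℝ (Set.range fun i =>
          (fun s : {A : Set Ω // MeasurableSet A} => (P.μ i s.1).toReal)) := by
    intro j
    by_contra hnot
    obtain ⟨t, d, hd0, hd1⟩ := aux_exists_sep_coeffs _ _ hnot
    have h := h4 t d
    have hrhs : ∑ i, P.w i * (∑ s ∈ t, d s * (P.μ i s.1).toReal) ^ 4 = 0 := by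
      refine Finset.sum_eq_zero fun i _ => ?_
      rw [hd0 i]
      norm_num
    rw [hrhs] at h
    have hzero := (Finset.sum_eq_zero_iff_of_nonneg (fun j' _ =>
      mul_nonneg (P'.pos j').le (by positivity))).mp h j (Finset.mem_univ j)
    rw [hd1] at hzero
    norm_num at hzero
    exact absurd hzero (P'.pos j).ne'
  have hccex : ∀ j, ∃ c : Fin P.m → ℝ, ∀ (A : Set Ω), MeasurableSet A →
      (P'.μ j A).toReal = ∑ i, c i * (P.μ i A).toReal := by
    intro j
    obtain ⟨c, hc⟩ := (Submodule.mem_span_range_iff_exists_fun ℝ).mp (hmem j)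
    refine ⟨c, fun A hA => ?_⟩
    have h := congrFun hc ⟨A, hA⟩
    simp only [Finset.sum_apply, Pi.smul_apply, smul_eq_mul] at h
    exact h.symm
  choose cc hcc using hccex
  set ψ : {A : Set Ω // MeasurableSet A} → (Fin P.m → ℝ) :=
    fun s => fun i => (P.μ i s.1).toReal with hψdef
  -- Step 4: the evaluation vectors of P span all of ℝ^m
  have htop : Submodule.span ℝ (Set.range ψ) = ⊤ := by
    by_contra h
    have h2 : ¬ ∀ x : Fin P.m → ℝ, x ∈ Submodule.span ℝ (Set.range ψ) := fun hall =>
      h (Submodule.eq_top_iff'.mpr hall)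
    push_neg at h2
    obtain ⟨x, hx⟩ := h2
    have hqx : (Submodule.span ℝ (Set.range ψ)).mkQ x ≠ 0 := by
      rw [Submodule.mkQ_apply, Ne, Submodule.Quotient.mk_eq_zero]
      exact hx
    obtain ⟨φf, hφf⟩ : ∃ φf : Module.Dual ℝ ((Fin P.m → ℝ) ⧸ Submodule.span ℝ (Set.range ψ)),
        φf ((Submodule.span ℝ (Set.range ψ)).mkQ x) ≠ 0 := by
      by_contra hcon
      push_neg at hcon
      exact hqx ((Module.forall_dual_apply_eq_zero_iff ℝ _).mp hcon)
    set L : (Fin P.m → ℝ) →ₗ[ℝ] ℝ := φf ∘ₗ (Submodule.span ℝ (Set.range ψ)).mkQ with hLdef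
    have hLψ : ∀ s : {A : Set Ω // MeasurableSet A}, L (ψ s) = 0 := by
      intro s
      have hsmem : ψ s ∈ Submodule.span ℝ (Set.range ψ) :=
        Submodule.subset_span (Set.mem_range_self s)
      simp only [hLdef, LinearMap.comp_apply, Submodule.mkQ_apply]
      rw [(Submodule.Quotient.mk_eq_zero _).mpr hsmem, map_zero]
    set dvec : Fin P.m → ℝ := fun i => L (fun i' => if i = i' then 1 else 0) with hdvecdef
    have hd0 : dvec = 0 := by
      refine hli dvec fun A hA => ?_
      have h5 := (LinearMap.pi_apply_eq_sum_univ L (ψ ⟨A, hA⟩)).symm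
      rw [hLψ ⟨A, hA⟩] at h5
      rw [show ∑ i, dvec i * (P.μ i A).toReal
          = ∑ i, (ψ (⟨A, hA⟩ : {A : Set Ω // MeasurableSet A})) i
              • L (fun i' => if i = i' then 1 else 0) from
        Finset.sum_congr rfl fun i _ => by
          simp only [hψdef, hdvecdef, smul_eq_mul]
          ring]
      exact h5
    have hLx : L x = 0 := by
      rw [LinearMap.pi_apply_eq_sum_univ L x]
      refine Finset.sum_eq_zero fun i _ => ?_
      have hdi : dvec i = 0 := by rw [hd0]; rfl
      rw [show L (fun j => if i = j then 1 else 0) = dvec i from rfl, hdi, smul_zero]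
    exact hφf hLx
  -- Step 5: the multilinear identity, extended from rectangles to all vectors
  have hD : ∀ (j : Fin P'.m) (s : {A : Set Ω // MeasurableSet A}),
      ∑ i, cc j i * ψ s i = (P'.μ j s.1).toReal := by
    intro j s
    simp only [hψdef]
    exact (hcc j s.1 s.2).symm
  have key4 : ∀ s1 s2 s3 : {A : Set Ω // MeasurableSet A}, ∀ x : Fin P.m → ℝ,
      ∑ j, P'.w j * ((∑ i, cc j i * ψ s1 i) * (∑ i, cc j i * ψ s2 i)
          * (∑ i, cc j i * ψ s3 i) * (∑ i, cc j i * x i))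
        = ∑ i, P.w i * (ψ s1 i * ψ s2 i * ψ s3 i * x i) := by
    intro s1 s2 s3
    refine aux_level P'.w P.w cc ψ htop _ _ (fun s4 => ?_)
    refine Eq.trans (Finset.sum_congr rfl fun j _ => ?_)
      ((step1 s1.1 s2.1 s3.1 s4.1).trans (Finset.sum_congr rfl fun i _ => ?_))
    · rw [hD j s1, hD j s2, hD j s3, hD j s4]
    · simp only [hψdef]
  have key3 : ∀ s1 s2 : {A : Set Ω // MeasurableSet A}, ∀ x4 : Fin P.m → ℝ,
      ∀ x : Fin P.m → ℝ,
      ∑ j, P'.w j * ((∑ i, cc j i * ψ s1 i) * (∑ i, cc j i * ψ s2 i)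
          * (∑ i, cc j i * x4 i) * (∑ i, cc j i * x i))
        = ∑ i, P.w i * (ψ s1 i * ψ s2 i * x4 i * x i) := by
    intro s1 s2 x4
    refine aux_level P'.w P.w cc ψ htop _ _ (fun s3 => ?_)
    refine Eq.trans (Finset.sum_congr rfl fun j _ => by ring)
      ((key4 s1 s2 s3 x4).trans (Finset.sum_congr rfl fun i _ => by ring))
  have key2 : ∀ s1 : {A : Set Ω // MeasurableSet A}, ∀ x3 x4 : Fin P.m → ℝ,
      ∀ x : Fin P.m → ℝ,
      ∑ j, P'.w j * ((∑ i, cc j i * ψ s1 i) * (∑ i, cc j i * x3 i)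
          * (∑ i, cc j i * x4 i) * (∑ i, cc j i * x i))
        = ∑ i, P.w i * (ψ s1 i * x3 i * x4 i * x i) := by
    intro s1 x3 x4
    refine aux_level P'.w P.w cc ψ htop _ _ (fun s2 => ?_)
    refine Eq.trans (Finset.sum_congr rfl fun j _ => by ring)
      ((key3 s1 s2 x4 x3).trans (Finset.sum_congr rfl fun i _ => by ring))
  have key : ∀ x1 x2 x3 x4 : Fin P.m → ℝ,
      ∑ j, P'.w j * ((∑ i, cc j i * x1 i) * (∑ i, cc j i * x2 i)
          * (∑ i, cc j i * x3 i) * (∑ i, cc j i * x4 i))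
        = ∑ i, P.w i * (x1 i * x2 i * x3 i * x4 i) := by
    intro x1 x2 x3 x4
    have key1 : ∀ x : Fin P.m → ℝ,
        ∑ j, P'.w j * ((∑ i, cc j i * x2 i) * (∑ i, cc j i * x3 i)
            * (∑ i, cc j i * x4 i) * (∑ i, cc j i * x i))
          = ∑ i, P.w i * (x2 i * x3 i * x4 i * x i) := by
      refine aux_level P'.w P.w cc ψ htop _ _ (fun s1 => ?_)
      refine Eq.trans (Finset.sum_congr rfl fun j _ => by ring)
        ((key2 s1 x3 x4 x2).trans (Finset.sum_congr rfl fun i _ => by ring))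
    refine Eq.trans (Finset.sum_congr rfl fun j _ => by ring)
      ((key1 x1).trans (Finset.sum_congr rfl fun i _ => by ring))
  -- Step 6: combinatorial identification
  have hDev : ∀ (j : Fin P'.m) (i0 : Fin P.m),
      (∑ i, cc j i * (if i = i0 then (1:ℝ) else 0)) = cc j i0 := by
    intro j i0
    simp [mul_ite]
  have hsum1 : ∀ j, ∑ i, cc j i = 1 := by
    intro j
    have h := hcc j Set.univ MeasurableSet.univ
    simp only [measure_univ, ENNReal.toReal_one, mul_one] at h
    exact h.symm
  have hsupp : ∀ (j : Fin P'.m) (i0 : Fin P.m), cc j i0 ≠ 0 →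
      ∀ i1, i1 ≠ i0 → cc j i1 = 0 := by
    intro j i0 h0 i1 h1
    set y : Fin P.m → ℝ := fun i => if i = i0 then 0 else cc j i with hydef
    have hk := key (fun i => if i = i0 then (1:ℝ) else 0)
      (fun i => if i = i0 then (1:ℝ) else 0) y y
    have hr : ∑ i, P.w i * ((if i = i0 then (1:ℝ) else 0) * (if i = i0 then (1:ℝ) else 0)
        * y i * y i) = 0 := by
      refine Finset.sum_eq_zero fun i _ => ?_
      by_cases h : i = i0
      · simp [hydef, h]
      · simp [hydef, h]
    rw [hr] at hk
    have hk' : ∑ j', P'.w j' * (cc j' i0 * (∑ i, cc j' i * y i)) ^ 2 = 0 := by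
      rw [← hk]
      refine Finset.sum_congr rfl fun j' _ => ?_
      rw [hDev j' i0]
      ring
    have hterm := (Finset.sum_eq_zero_iff_of_nonneg (fun j' _ =>
      mul_nonneg (P'.pos j').le (sq_nonneg _))).mp hk' j (Finset.mem_univ j)
    have hDy : ∑ i, cc j i * y i = 0 := by
      have h6 : (cc j i0 * (∑ i, cc j i * y i)) ^ 2 = 0 := by
        rcases mul_eq_zero.mp hterm with h | h
        · exact absurd h (P'.pos j).ne'
        · exact h
      have h7 := pow_eq_zero_iff (n := 2) (by norm_num) |>.mp h6
      rcases mul_eq_zero.mp h7 with h | h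
      · exact absurd h h0
      · exact h
    have h8 : ∑ i, (if i = i0 then (0:ℝ) else cc j i ^ 2) = 0 := by
      have heq : ∀ i, (if i = i0 then (0:ℝ) else cc j i ^ 2) = cc j i * y i := by
        intro i
        by_cases h : i = i0
        · simp [hydef, h]
        · simp only [hydef, if_neg h]
          ring
      rw [Finset.sum_congr rfl fun i _ => heq i]
      exact hDy
    have h9 := (Finset.sum_eq_zero_iff_of_nonneg (fun i _ => by
      by_cases h : i = i0 <;> simp [h, sq_nonneg])).mp h8 i1 (Finset.mem_univ i1)
    rw [if_neg h1] at h9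
    exact pow_eq_zero_iff (n := 2) (by norm_num) |>.mp h9
  have hσex : ∀ j, ∃ i, cc j i ≠ 0 := by
    intro j
    by_contra h
    push_neg at h
    have := hsum1 j
    rw [Finset.sum_eq_zero fun i _ => h i] at this
    norm_num at this
  choose σ hσ using hσex
  have hsingle : ∀ (j : Fin P'.m) (i : Fin P.m), cc j i = if i = σ j then 1 else 0 := by
    intro j i
    by_cases h : i = σ j
    · rw [if_pos h, h]
      have h10 : ∑ i', cc j i' = cc j (σ j) :=
        Finset.sum_eq_single (σ j) (fun i' _ h' => hsupp j (σ j) (hσ j) i' h')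
          (fun habs => absurd (Finset.mem_univ _) habs)
      rw [← h10, hsum1 j]
    · rw [if_neg h]
      exact hsupp j (σ j) (hσ j) i h
  have hν : ∀ j, P'.μ j = P.μ (σ j) := by
    intro j
    haveI := hP'prob j
    haveI := hPprob (σ j)
    refine Measure.ext fun A hA => ?_
    have h := hcc j A hA
    rw [show ∑ i, cc j i * (P.μ i A).toReal = (P.μ (σ j) A).toReal from by
      rw [Finset.sum_eq_single (σ j)
        (fun i _ hne => by rw [hsingle j i, if_neg hne, zero_mul])
        (fun habs => absurd (Finset.mem_univ _) habs),
        hsingle j (σ j), if_pos rfl, one_mul]] at h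
    exact (ENNReal.toReal_eq_toReal_iff' (measure_ne_top _ _) (measure_ne_top _ _)).mp h
  have hinjσ : Function.Injective σ := fun j j' h => P'.inj (by rw [hν j, hν j', h])
  have hwj : ∀ j, P'.w j = P.w (σ j) := by
    intro j
    have hk := key (fun i => if i = σ j then (1:ℝ) else 0) (fun i => if i = σ j then (1:ℝ) else 0)
      (fun i => if i = σ j then (1:ℝ) else 0) (fun i => if i = σ j then (1:ℝ) else 0)
    have hl : ∑ j', P'.w j' * ((∑ i, cc j' i * (if i = σ j then (1:ℝ) else 0))
        * (∑ i, cc j' i * (if i = σ j then (1:ℝ) else 0))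
        * (∑ i, cc j' i * (if i = σ j then (1:ℝ) else 0))
        * (∑ i, cc j' i * (if i = σ j then (1:ℝ) else 0))) = P'.w j := by
      rw [Finset.sum_eq_single j (fun j' _ hne => by
          rw [hDev j' (σ j), hsingle j' (σ j),
            if_neg (fun hc => hne (hinjσ hc.symm))]
          ring)
        (fun habs => absurd (Finset.mem_univ _) habs)]
      rw [hDev j (σ j), hsingle j (σ j), if_pos rfl]
      ring
    have hr : ∑ i, P.w i * ((if i = σ j then (1:ℝ) else 0) * (if i = σ j then (1:ℝ) else 0)
        * (if i = σ j then (1:ℝ) else 0) * (if i = σ j then (1:ℝ) else 0)) = P.w (σ j) := by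
      rw [Finset.sum_eq_single (σ j) (fun i _ hne => by rw [if_neg hne]; ring)
        (fun habs => absurd (Finset.mem_univ _) habs), if_pos rfl]
      ring
    rw [hl, hr] at hk
    exact hk
  have hsurj : Function.Surjective σ := by
    intro i
    by_contra h
    push_neg at h
    have hk := key (fun i' => if i' = i then (1:ℝ) else 0) (fun i' => if i' = i then (1:ℝ) else 0)
      (fun i' => if i' = i then (1:ℝ) else 0) (fun i' => if i' = i then (1:ℝ) else 0)
    have hl : ∑ j', P'.w j' * ((∑ i', cc j' i' * (if i' = i then (1:ℝ) else 0))
        * (∑ i', cc j' i' * (if i' = i then (1:ℝ) else 0))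
        * (∑ i', cc j' i' * (if i' = i then (1:ℝ) else 0))
        * (∑ i', cc j' i' * (if i' = i then (1:ℝ) else 0))) = 0 := by
      refine Finset.sum_eq_zero fun j' _ => ?_
      rw [hDev j' i, hsingle j' i, if_neg (fun hc => h j' hc.symm)]
      ring
    have hr : ∑ i', P.w i' * ((if i' = i then (1:ℝ) else 0) * (if i' = i then (1:ℝ) else 0)
        * (if i' = i then (1:ℝ) else 0) * (if i' = i then (1:ℝ) else 0)) = P.w i := by
      rw [Finset.sum_eq_single i (fun i' _ hne => by rw [if_neg hne]; ring)
        (fun habs => absurd (Finset.mem_univ _) habs), if_pos rfl]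
      ring
    rw [hl, hr] at hk
    exact absurd hk.symm (P.pos i).ne'
  refine ⟨(Equiv.ofBijective σ ⟨hinjσ, hsurj⟩).symm, fun i => ?_⟩
  have happ : σ ((Equiv.ofBijective σ ⟨hinjσ, hsurj⟩).symm i) = i :=
    (Equiv.ofBijective σ ⟨hinjσ, hsurj⟩).apply_symm_apply i
  constructor
  · rw [hν ((Equiv.ofBijective σ ⟨hinjσ, hsurj⟩).symm i), happ]
  · rw [hwj ((Equiv.ofBijective σ ⟨hinjσ, hsurj⟩).symm i), happ]
end

section
/- If P = Σ_{i=1}^m w_i δ_{μ_i} is a mixture of measures whose components μ_1, ..., μ_m are jointly irreducible, then P is 2-determined: any mixture of measures P' of any order with Σ_i w_i μ_i^{×2} = V_2(P') must equal P. -/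
open MeasureTheory

lemma mixV2_apply {Ω : Type*} [MeasurableSpace Ω] (P : MixtureOfMeasures Ω) (A B : Set Ω) :
    (P.V 2 (Set.pi Set.univ ![A, B])).toReal
      = ∑ i, P.w i * ((P.μ i A).toReal * (P.μ i B).toReal) := by
  haveI : ∀ i, IsProbabilityMeasure (P.μ i) := P.prob
  rw [MixtureOfMeasures.V, Measure.finset_sum_apply]
  rw [ENNReal.toReal_sum]
  · refine Finset.sum_congr rfl fun i _ => ?_
    rw [Measure.smul_apply, smul_eq_mul, Measure.pi_pi, Fin.prod_univ_two]
    simp only [Matrix.cons_val_zero, Matrix.cons_val_one, Matrix.head_cons]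
    rw [ENNReal.toReal_mul, ENNReal.toReal_ofReal (P.pos i).le, ENNReal.toReal_mul]
  · intro i _
    rw [Measure.smul_apply, smul_eq_mul]
    exact ENNReal.mul_ne_top ENNReal.ofReal_ne_top (measure_ne_top _ _)

lemma findep {Ω : Type*} [MeasurableSpace Ω] (P : MixtureOfMeasures Ω)
    (hji : ∀ (c : Fin P.m → ℝ) (ρ : Measure Ω), IsProbabilityMeasure ρ →
      (∀ A : Set Ω, MeasurableSet A → (ρ A).toReal = ∑ i, c i * (P.μ i A).toReal) →
      ∀ i, 0 ≤ c i)
    (c : Fin P.m → ℝ)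
    (hc : ∀ A : Set Ω, MeasurableSet A → ∑ i, c i * (P.μ i A).toReal = 0) :
    ∀ i, c i = 0 := by
  intro i0
  by_contra h
  set t : ℝ := -2 / c i0 with ht
  have key := hji (fun i => (if i = i0 then (1:ℝ) else 0) + t * c i) (P.μ i0) (P.prob i0) ?_ i0
  · simp only [if_pos rfl, ht] at key
    rw [div_mul_cancel₀ _ h] at key
    norm_num at key
  · intro A hA
    have : ∑ i, ((if i = i0 then (1:ℝ) else 0) + t * c i) * (P.μ i A).toReal
        = (∑ i, (if i = i0 then (1:ℝ) else 0) * (P.μ i A).toReal)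
          + t * ∑ i, c i * (P.μ i A).toReal := by
      rw [Finset.mul_sum, ← Finset.sum_add_distrib]
      exact Finset.sum_congr rfl fun i _ => by ring
    rw [this, hc A hA]
    simp [ite_mul]

lemma mem_span_of_bilinear {α : Type*} {m m' : ℕ} (w : Fin m → ℝ) (w' : Fin m' → ℝ)
    (hw' : ∀ j, 0 < w' j) (f : Fin m → (α → ℝ)) (g : Fin m' → (α → ℝ))
    (hkey : ∀ A B : α, ∑ j, w' j * (g j A * g j B) = ∑ i, w i * (f i A * f i B)) :
    ∀ j, g j ∈ Submodule.span ℝ (Set.range f) := by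
  have hdual : ∀ φ : Module.Dual ℝ (α → ℝ), (∀ i, φ (f i) = 0) → ∀ j, φ (g j) = 0 := by
    intro φ hφ
    have hstep : ∀ A : α, ∑ j, (w' j * g j A) • g j = ∑ i, (w i * f i A) • f i := by
      intro A; funext B
      simp only [Finset.sum_apply, Pi.smul_apply, smul_eq_mul]
      calc ∑ j, w' j * g j A * g j B = ∑ j, w' j * (g j A * g j B) := by
            exact Finset.sum_congr rfl fun j _ => by ring
        _ = ∑ i, w i * (f i A * f i B) := hkey A B
        _ = ∑ i, w i * f i A * f i B := Finset.sum_congr rfl fun i _ => by ring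
    have h1 : ∀ A : α, ∑ j, (w' j * φ (g j)) * g j A = 0 := by
      intro A
      have h := congrArg φ (hstep A)
      simp only [map_sum, _root_.map_smul, smul_eq_mul, hφ, mul_zero, Finset.sum_const_zero] at h
      rw [← h]
      exact Finset.sum_congr rfl fun j _ => by ring
    have h2 : ∑ j, (w' j * φ (g j)) • g j = 0 := by
      funext A
      simp only [Finset.sum_apply, Pi.smul_apply, smul_eq_mul, Pi.zero_apply]
      exact h1 A
    have h3 := congrArg φ h2
    simp only [map_sum, _root_.map_smul, smul_eq_mul, map_zero] at h3
    intro j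
    have hnn : ∀ j' ∈ Finset.univ, 0 ≤ w' j' * φ (g j') * φ (g j') := by
      intro j' _
      have := mul_self_nonneg (φ (g j'))
      nlinarith [(hw' j').le]
    have hz := (Finset.sum_eq_zero_iff_of_nonneg hnn).mp h3 j (Finset.mem_univ j)
    have hx : φ (g j) * φ (g j) = 0 := by
      rcases mul_eq_zero.mp (by rw [mul_assoc] at hz; exact hz) with h | h
      · exact absurd h (ne_of_gt (hw' j))
      · exact h
    exact mul_self_eq_zero.mp hx
  intro j
  by_contra hj
  set S := Submodule.span ℝ (Set.range f) with hS
  have hne : S.mkQ (g j) ≠ 0 := by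
    intro h0
    exact hj (by rwa [Submodule.mkQ_apply, Submodule.Quotient.mk_eq_zero] at h0)
  obtain ⟨ψ, hψ⟩ : ∃ ψ : Module.Dual ℝ ((α → ℝ) ⧸ S), ψ (S.mkQ (g j)) ≠ 0 := by
    by_contra hall
    push_neg at hall
    exact hne ((Module.forall_dual_apply_eq_zero_iff ℝ _).mp hall)
  apply hψ
  have := hdual (ψ.comp S.mkQ) ?_ j
  · exact this
  · intro i
    simp only [LinearMap.comp_apply, Submodule.mkQ_apply]
    have hfi : (Submodule.Quotient.mk (f i) : (α → ℝ) ⧸ S) = 0 :=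
      (Submodule.Quotient.mk_eq_zero _).mpr (Submodule.subset_span ⟨i, rfl⟩)
    rw [hfi, map_zero]


/-- A mixture of measures with jointly irreducible components is `2`-determined.
Joint irreducibility: whenever a real linear combination of the components is itself a
probability measure, all coefficients are nonnegative. -/
theorem mixture_jointlyIrreducible_determined_two {Ω : Type*} [MeasurableSpace Ω]
    (P : MixtureOfMeasures Ω)
    (hji : ∀ (c : Fin P.m → ℝ) (ρ : Measure Ω), IsProbabilityMeasure ρ →
      (∀ A : Set Ω, MeasurableSet A → (ρ A).toReal = ∑ i, c i * (P.μ i A).toReal) →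
      ∀ i, 0 ≤ c i)
    (P' : MixtureOfMeasures Ω)
    (hV : P'.V 2 = P.V 2) :
    P'.Equal P := by
  classical
  haveI hPi : ∀ i, IsProbabilityMeasure (P.μ i) := P.prob
  haveI hPj : ∀ j, IsProbabilityMeasure (P'.μ j) := P'.prob
  have hkey : ∀ A B : Set Ω,
      ∑ j, P'.w j * ((P'.μ j A).toReal * (P'.μ j B).toReal)
        = ∑ i, P.w i * ((P.μ i A).toReal * (P.μ i B).toReal) := by
    intro A B
    have h := congrArg (fun ν : Measure (Fin 2 → Ω) => (ν (Set.pi Set.univ ![A, B])).toReal) hV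
    rw [mixV2_apply, mixV2_apply] at h
    exact h
  have hmem := mem_span_of_bilinear P.w P'.w P'.pos
    (fun i A => (P.μ i A).toReal) (fun j A => (P'.μ j A).toReal) hkey
  choose c hc using fun j => (Submodule.mem_span_range_iff_exists_fun ℝ).mp (hmem j)
  have hgc : ∀ j (A : Set Ω), (P'.μ j A).toReal = ∑ i, c j i * (P.μ i A).toReal := by
    intro j A
    have h := congrFun (hc j) A
    simp only [Finset.sum_apply, Pi.smul_apply, smul_eq_mul] at h
    exact h.symm
  have hcnn : ∀ j i, 0 ≤ c j i :=
    fun j => hji (c j) (P'.μ j) (P'.prob j) (fun A _ => hgc j A)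
  have hcsum : ∀ j, ∑ i, c j i = 1 := by
    intro j
    have h := hgc j Set.univ
    simp only [measure_univ, ENNReal.toReal_one, mul_one] at h
    exact h.symm
  -- the coefficient-matrix identity
  have expand : ∀ A B : Set Ω,
      ∑ i, (∑ k, (∑ j, P'.w j * (c j i * c j k)) * (P.μ k B).toReal) * (P.μ i A).toReal
        = ∑ j, P'.w j * ((P'.μ j A).toReal * (P'.μ j B).toReal) := by
    intro A B
    have e1 : ∀ j, P'.w j * ((P'.μ j A).toReal * (P'.μ j B).toReal)
        = ∑ i, ∑ k, P'.w j * (c j i * c j k) * ((P.μ k B).toReal * (P.μ i A).toReal) := by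
      intro j
      rw [hgc j A, hgc j B, Finset.sum_mul_sum, Finset.mul_sum]
      refine Finset.sum_congr rfl fun i _ => ?_
      rw [Finset.mul_sum]
      exact Finset.sum_congr rfl fun k _ => by ring
    calc ∑ i, (∑ k, (∑ j, P'.w j * (c j i * c j k)) * (P.μ k B).toReal) * (P.μ i A).toReal
        = ∑ i, ∑ k, ∑ j, P'.w j * (c j i * c j k) * ((P.μ k B).toReal * (P.μ i A).toReal) := by
          refine Finset.sum_congr rfl fun i _ => ?_
          rw [Finset.sum_mul]
          refine Finset.sum_congr rfl fun k _ => ?_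
          rw [Finset.sum_mul, Finset.sum_mul]
          exact Finset.sum_congr rfl fun j _ => by ring
      _ = ∑ i, ∑ j, ∑ k, P'.w j * (c j i * c j k) * ((P.μ k B).toReal * (P.μ i A).toReal) :=
          Finset.sum_congr rfl fun i _ => Finset.sum_comm
      _ = ∑ j, ∑ i, ∑ k, P'.w j * (c j i * c j k) * ((P.μ k B).toReal * (P.μ i A).toReal) :=
          Finset.sum_comm
      _ = ∑ j, P'.w j * ((P'.μ j A).toReal * (P'.μ j B).toReal) :=
          Finset.sum_congr rfl fun j _ => (e1 j).symm
  have hrow : ∀ i (B : Set Ω),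
      ∑ k, (∑ j, P'.w j * (c j i * c j k)) * (P.μ k B).toReal = P.w i * (P.μ i B).toReal := by
    intro i B
    have h0 := findep P hji
      (fun i' => (∑ k, (∑ j, P'.w j * (c j i' * c j k)) * (P.μ k B).toReal)
        - P.w i' * (P.μ i' B).toReal) ?_ i
    · linarith [h0]
    · intro A _
      simp only [sub_mul, Finset.sum_sub_distrib]
      rw [expand A B, hkey A B]
      rw [sub_eq_zero]
      exact Finset.sum_congr rfl fun i' _ => by ring
  have hD : ∀ i k, (∑ j, P'.w j * (c j i * c j k)) = if k = i then P.w i else 0 := by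
    intro i k
    have h0 := findep P hji
      (fun k' => (∑ j, P'.w j * (c j i * c j k')) - (if k' = i then P.w i else 0)) ?_ k
    · linarith [h0]
    · intro A _
      simp only [sub_mul, Finset.sum_sub_distrib]
      rw [hrow i A, sub_eq_zero]
      rw [Finset.sum_congr rfl (fun k' _ => by
        rw [ite_mul, zero_mul] :
        ∀ k' ∈ Finset.univ, (if k' = i then P.w i else 0) * (P.μ k' A).toReal
          = if k' = i then P.w i * (P.μ k' A).toReal else 0)]
      rw [Finset.sum_ite_eq' Finset.univ i (fun k' => P.w i * (P.μ k' A).toReal)]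
      simp
  have hzero : ∀ i k, k ≠ i → ∀ j, c j i * c j k = 0 := by
    intro i k hki j
    have hsum : ∑ j, P'.w j * (c j i * c j k) = 0 := by rw [hD i k, if_neg hki]
    have hterm := (Finset.sum_eq_zero_iff_of_nonneg (fun j' _ =>
      mul_nonneg (P'.pos j').le (mul_nonneg (hcnn j' i) (hcnn j' k)))).mp hsum j (Finset.mem_univ j)
    rcases mul_eq_zero.mp hterm with h | h
    · exact absurd h (ne_of_gt (P'.pos j))
    · exact h
  have hsig : ∀ j, ∃ i, c j i ≠ 0 := by
    intro j
    by_contra hno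
    push_neg at hno
    have h := hcsum j
    simp only [hno, Finset.sum_const_zero] at h
    norm_num at h
  choose σ hσ using hsig
  have hothers : ∀ j i, i ≠ σ j → c j i = 0 := by
    intro j i hi
    rcases mul_eq_zero.mp (hzero (σ j) i hi j) with h | h
    · exact absurd h (hσ j)
    · exact h
  have hone : ∀ j, c j (σ j) = 1 := by
    intro j
    have h := hcsum j
    rwa [Finset.sum_eq_single (σ j) (fun i _ hi => hothers j i hi)
      (fun h => absurd (Finset.mem_univ _) h)] at h
  have hgf : ∀ j, P'.μ j = P.μ (σ j) := by
    intro j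
    ext A hA
    have h := hgc j A
    rw [Finset.sum_eq_single (σ j) (fun i _ hi => by rw [hothers j i hi, zero_mul])
      (fun hh => absurd (Finset.mem_univ _) hh), hone j, one_mul] at h
    exact (ENNReal.toReal_eq_toReal_iff' (measure_ne_top _ _) (measure_ne_top _ _)).mp h
  have hσinj : Function.Injective σ := by
    intro j1 j2 h
    exact P'.inj (by rw [hgf j1, hgf j2, h])
  have hwi : ∀ i, P.w i = ∑ j, if σ j = i then P'.w j else 0 := by
    intro i
    have h := hD i i
    rw [if_pos rfl] at h
    rw [← h]
    refine Finset.sum_congr rfl fun j _ => ?_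
    by_cases hij : σ j = i
    · subst hij
      rw [if_pos rfl, hone j]
      ring
    · rw [if_neg hij, hothers j i (fun hh => hij hh.symm)]
      ring
  have hσsurj : Function.Surjective σ := by
    intro i
    by_contra hno
    push_neg at hno
    have h := hwi i
    rw [Finset.sum_eq_zero (fun j _ => if_neg (hno j))] at h
    exact absurd h (ne_of_gt (P.pos i))
  refine ⟨(Equiv.ofBijective σ ⟨hσinj, hσsurj⟩).symm, fun i => ?_⟩
  set j := (Equiv.ofBijective σ ⟨hσinj, hσsurj⟩).symm i with hjdef
  have hji' : σ j = i := Equiv.apply_symm_apply (Equiv.ofBijective σ ⟨hσinj, hσsurj⟩) i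
  constructor
  · rw [hgf j, hji']
  · have h := hwi i
    rw [Finset.sum_eq_single j (fun j' _ hj' => if_neg (fun hh => hj' (hσinj (hh.trans hji'.symm))))
      (fun hh => absurd (Finset.mem_univ _) hh), if_pos hji'] at h
    exact h
end

section
/- Let Ω = {ω_1, ..., ω_d} be a finite set and μ_1, ..., μ_m distinct probability measures on Ω. Let y_1, ..., y_d be iid uniform random variables on [1,2] and let ξ be the random measure defined by ξ({ω_i}) = y_i. Let p_i = dμ_i/dξ, i.e., p_i(ω_j) = μ_i({ω_j})/y_j. Then with probability one, ∫ p_i² dξ ≠ ∫ p_j² dξ for all i ≠ j, i.e., the L²(ξ)-norms of p_1, ..., p_m are almost surely distinct. -/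
open MeasureTheory

lemma map_div_singleton_null (c : ℝ) (hc : c ≠ 0) (t : ℝ) :
    Measure.map (fun x : ℝ => c / x) (volume.restrict (Set.Icc (1 : ℝ) 2)) {t} = 0 := by
  have hmeas : Measurable (fun x : ℝ => c / x) := measurable_const.div measurable_id
  rw [Measure.map_apply hmeas (measurableSet_singleton t)]
  have h0 : volume.restrict (Set.Icc (1:ℝ) 2) ({c / t, 0} : Set ℝ) = 0 := by
    have hfin : ({c / t, 0} : Set ℝ).Finite := (Set.finite_singleton _).insert _
    refine le_antisymm ?_ (zero_le)
    calc volume.restrict (Set.Icc (1:ℝ) 2) {c / t, 0} ≤ volume {c / t, 0} :=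
          Measure.restrict_le_self _
      _ = 0 := hfin.measure_zero _
  refine measure_mono_null ?_ h0
  intro x hx
  simp only [Set.mem_preimage, Set.mem_singleton_iff] at hx
  rcases eq_or_ne x 0 with hx0 | hx0
  · simp [hx0]
  · have ht : t ≠ 0 := by
      rw [← hx]; exact div_ne_zero hc hx0
    have : x = c / t := by
      field_simp at hx ⊢
      linarith [hx]
    simp [this]

lemma null_of_indep_add {Ω' : Type*} [MeasurableSpace Ω'] (P : Measure Ω')
    [IsProbabilityMeasure P]
    (S T : Ω' → ℝ) (hS : Measurable S) (hT : Measurable T)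
    (hind : ProbabilityTheory.IndepFun S T P)
    (hatom : ∀ t : ℝ, Measure.map T P {t} = 0) :
    P {ω | S ω + T ω = 0} = 0 := by
  have hmap : P.map (fun ω => (S ω, T ω)) = (P.map S).prod (P.map T) :=
    (ProbabilityTheory.indepFun_iff_map_prod_eq_prod_map_map hS.aemeasurable
      hT.aemeasurable).mp hind
  have hA : MeasurableSet {p : ℝ × ℝ | p.1 + p.2 = 0} :=
    measurableSet_eq_fun (measurable_fst.add measurable_snd) measurable_const
  have h1 : P {ω | S ω + T ω = 0}
      = P.map (fun ω => (S ω, T ω)) {p : ℝ × ℝ | p.1 + p.2 = 0} := by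
    rw [Measure.map_apply (hS.prodMk hT) hA]; rfl
  rw [h1, hmap, Measure.prod_apply hA]
  have hslice : ∀ x : ℝ, ({a : ℝ | x + a = 0} : Set ℝ) = {-x} := by
    intro x; ext t; simp [eq_neg_iff_add_eq_zero, add_comm]
  have : ∀ x : ℝ, (P.map T) (Prod.mk x ⁻¹' {p : ℝ × ℝ | p.1 + p.2 = 0}) = 0 := by
    intro x
    have h2 : Prod.mk x ⁻¹' {p : ℝ × ℝ | p.1 + p.2 = 0} = {-x} := by
      ext t; simp [eq_neg_iff_add_eq_zero, add_comm]
    rw [h2]; exact hatom _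
  rw [lintegral_congr this]
  exact lintegral_zero

lemma key_null {Ω' : Type*} [MeasurableSpace Ω'] (P : Measure Ω') [IsProbabilityMeasure P]
    (d : ℕ) (y : Fin d → Ω' → ℝ) (hmeas : ∀ k, Measurable (y k))
    (hindep : ProbabilityTheory.iIndepFun y P)
    (hunif : ∀ k, Measure.map (y k) P = volume.restrict (Set.Icc (1 : ℝ) 2))
    (c : Fin d → ℝ) (k0 : Fin d) (hc : c k0 ≠ 0) :
    P {ω | ∑ k, c k / y k ω = 0} = 0 := by
  classical
  set f : Fin d → Ω' → ℝ := fun k ω => c k / y k ω with hf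
  have hfmeas : ∀ k, Measurable (f k) := fun k => measurable_const.div (hmeas k)
  have hfind : ProbabilityTheory.iIndepFun f P := by
    have := hindep.comp (fun k (x : ℝ) => c k / x)
      (fun k => measurable_const.div measurable_id)
    exact this
  set S : Ω' → ℝ := ∑ k ∈ Finset.univ.erase k0, f k with hSdef
  have hSfun : S = fun ω => ∑ k ∈ Finset.univ.erase k0, f k ω := by
    ext ω; simp [hSdef]
  have hSmeas : Measurable S := by
    rw [hSfun]; exact Finset.measurable_sum _ fun k _ => hfmeas k
  have hind : ProbabilityTheory.IndepFun S (f k0) P :=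
    hfind.indepFun_finsetSum_of_notMem hfmeas (Finset.notMem_erase k0 _)
  have hatom : ∀ t : ℝ, Measure.map (f k0) P {t} = 0 := by
    intro t
    have hgm : Measurable (fun x : ℝ => c k0 / x) := measurable_const.div measurable_id
    have : Measure.map (f k0) P
        = Measure.map (fun x : ℝ => c k0 / x) (Measure.map (y k0) P) := by
      rw [Measure.map_map hgm (hmeas k0)]
      rfl
    rw [this, hunif k0]
    exact map_div_singleton_null _ hc t
  have hset : {ω | ∑ k, c k / y k ω = 0} = {ω | S ω + f k0 ω = 0} := by
    ext ω
    simp only [Set.mem_setOf_eq, hSdef, Finset.sum_apply]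
    rw [← Finset.add_sum_erase _ _ (Finset.mem_univ k0), add_comm]
  rw [hset]
  exact null_of_indep_add P S (f k0) hSmeas (hfmeas k0) hind hatom

/-- Random dominating measure trick: if `μ 1, …, μ m` are distinct probability measures on a
finite set of `d` points (given by their probability vectors), `y 1, …, y d` are iid uniform
random variables on `[1,2]`, and `ξ` is the random measure with `ξ({ω_k}) = y k`, then with
probability one the `L²(ξ)`-norms `∫ p_i² dξ = ∑_k μ_i({ω_k})² / y_k` of the densities
`p_i = dμ_i/dξ` are pairwise distinct. -/
theorem random_dominating_measure_distinct_norms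
    {Ω' : Type*} [MeasurableSpace Ω'] (P : Measure Ω') [IsProbabilityMeasure P]
    (d m : ℕ) (μ : Fin m → Fin d → ℝ)
    (hμ0 : ∀ i k, 0 ≤ μ i k) (hμ1 : ∀ i, ∑ k, μ i k = 1)
    (hdist : Function.Injective μ)
    (y : Fin d → Ω' → ℝ) (hmeas : ∀ k, Measurable (y k))
    (hindep : ProbabilityTheory.iIndepFun y P)
    (hunif : ∀ k, Measure.map (y k) P = volume.restrict (Set.Icc (1 : ℝ) 2)) :
    ∀ᵐ ω ∂P, ∀ i j : Fin m, i ≠ j →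
      (∑ k, (μ i k) ^ 2 / y k ω) ≠ ∑ k, (μ j k) ^ 2 / y k ω := by
  rw [ae_all_iff]
  intro i
  rw [ae_all_iff]
  intro j
  by_cases hij : i = j
  · filter_upwards with ω h; exact absurd hij h
  · set c : Fin d → ℝ := fun k => (μ i k) ^ 2 - (μ j k) ^ 2 with hcdef
    have hμij : μ i ≠ μ j := fun h => hij (hdist h)
    obtain ⟨k0, hk0⟩ : ∃ k, μ i k ≠ μ j k := by
      by_contra h
      push_neg at h
      exact hμij (funext h)
    have hc : c k0 ≠ 0 := by
      intro h
      apply hk0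
      have h1 : (μ i k0) ^ 2 = (μ j k0) ^ 2 := by
        simp only [hcdef] at h; linarith
      have := hμ0 i k0
      have := hμ0 j k0
      nlinarith
    have hnull := key_null P d y hmeas hindep hunif c k0 hc
    rw [ae_iff]
    refine measure_mono_null ?_ hnull
    intro ω hω
    simp only [Set.mem_setOf_eq] at hω ⊢
    push_neg at hω
    obtain ⟨-, heq⟩ := hω
    have : ∑ k, c k / y k ω
        = (∑ k, (μ i k) ^ 2 / y k ω) - ∑ k, (μ j k) ^ 2 / y k ω := by
      rw [← Finset.sum_sub_distrib]
      exact Finset.sum_congr rfl fun k _ => sub_div _ _ _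
    rw [this, heq]
    ring
end

section
/- Fix m, n, q ∈ ℕ₊ with n ≥ 2m − 1. Suppose Σ_{i=1}^m a_i Q_{n,p_i,q} = Σ_{j=1}^s b_j Q_{n,r_j,q} where s ≤ m, the multinomial measures Q_{n,p_1,q},...,Q_{n,p_m,q} are distinct, Q_{n,r_1,q},...,Q_{n,r_s,q} are distinct, all a_i, b_j > 0, and Σ a_i = Σ b_j = 1. Then s = m and there is a permutation σ of {1,...,m} with a_i = b_{σ(i)} and p_i = r_{σ(i)} for all i. -/
open Finset

/-- `C_{n,q} = {x ∈ ℕ^q : ∑ x_i = n}`, the support of the multinomial distribution with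
`n` trials and `q` categories. -/
def Cnq (n q : ℕ) : Finset (Fin q → ℕ) :=
  (Fintype.piFinset fun _ : Fin q => Finset.range (n + 1)).filter fun x => ∑ j, x j = n

/-- Probability mass function of the multinomial distribution `Q_{n,p,q}`:
`Q_{n,p,q}({x}) = n!/(x_1! ⋯ x_q!) · p_1^{x_1} ⋯ p_q^{x_q}`. -/
noncomputable def multinomialMass (n : ℕ) {q : ℕ} (p : Fin q → ℝ) (x : Fin q → ℕ) : ℝ :=
  ((n.factorial : ℝ) / ∏ j, ((x j).factorial : ℝ)) * ∏ j, p j ^ x j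

lemma Cnq_eq_piAntidiag (n q : ℕ) : Cnq n q = Finset.piAntidiag Finset.univ n := by
  ext x
  simp only [Cnq, Finset.mem_filter, Fintype.mem_piFinset, Finset.mem_range,
    Finset.mem_piAntidiag, Nat.lt_succ_iff]
  constructor
  · rintro ⟨-, h⟩; exact ⟨h, fun i _ => Finset.mem_univ i⟩
  · rintro ⟨h, -⟩
    exact ⟨fun j => h ▸ Finset.single_le_sum (fun i _ => Nat.zero_le _) (Finset.mem_univ j), h⟩

/-- The multinomial theorem rewritten in terms of `multinomialMass` and `Cnq`. -/
lemma mult_thm (n q : ℕ) (u z : Fin q → ℝ) :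
    (∑ j, u j * z j) ^ n = ∑ x ∈ Cnq n q, multinomialMass n u x * ∏ j, z j ^ x j := by
  rw [Cnq_eq_piAntidiag, Finset.sum_pow_eq_sum_piAntidiag]
  refine Finset.sum_congr rfl fun x hx => ?_
  rw [Finset.mem_piAntidiag] at hx
  have hfac : (∏ j, ((x j).factorial : ℝ)) ≠ 0 := by positivity
  have hspec := Nat.multinomial_spec Finset.univ x
  have hcast : (∏ j, ((x j).factorial : ℝ)) * (Nat.multinomial Finset.univ x : ℝ)
      = (n.factorial : ℝ) := by
    rw [← Nat.cast_prod, ← Nat.cast_mul, hspec, hx.1]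
  have hmul : (Nat.multinomial Finset.univ x : ℝ)
      = (n.factorial : ℝ) / ∏ j, ((x j).factorial : ℝ) := by
    rw [eq_div_iff hfac, mul_comm]; exact hcast
  simp only [multinomialMass, hmul, mul_pow, Finset.prod_mul_distrib]
  ring

/-- Generic direction: there is a `w` such that `u ↦ ∑ j, u j * w ^ j` is injective on `V`. -/
lemma exists_good_w {q : ℕ} (V : Finset (Fin q → ℝ)) :
    ∃ w : ℝ, ∀ u ∈ V, ∀ v ∈ V, u ≠ v →
      (∑ j, u j * w ^ (j : ℕ)) ≠ ∑ j, v j * w ^ (j : ℕ) := by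
  classical
  set D : (Fin q → ℝ) × (Fin q → ℝ) → Polynomial ℝ :=
    fun pr => ∑ j, Polynomial.C (pr.1 j - pr.2 j) * Polynomial.X ^ (j : ℕ) with hD
  have hDne : ∀ pr : (Fin q → ℝ) × (Fin q → ℝ), pr.1 ≠ pr.2 → D pr ≠ 0 := by
    intro pr hne h0
    obtain ⟨j0, hj0⟩ := Function.ne_iff.mp hne
    have hc := congrArg (fun P => Polynomial.coeff P (j0 : ℕ)) h0
    simp only [hD, Polynomial.finset_sum_coeff, Polynomial.coeff_C_mul,
      Polynomial.coeff_X_pow, Polynomial.coeff_zero] at hc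
    rw [Finset.sum_eq_single j0] at hc
    · simp at hc; exact hj0 (by linarith [sub_eq_zero.mp (by simpa using hc)])
    · intro j _ hj
      have : ¬ ((j0 : ℕ) = (j : ℕ)) := fun h => hj (Fin.ext h.symm)
      simp [this]
    · simp
  set Bad : Set ℝ := ⋃ pr ∈ ((V ×ˢ V).filter fun pr => pr.1 ≠ pr.2),
      {w | (D pr).IsRoot w} with hBad
  have hfin : Bad.Finite := by
    refine Set.Finite.biUnion (Finset.finite_toSet _) fun pr hpr => ?_
    exact Polynomial.finite_setOf_isRoot (hDne pr (Finset.mem_filter.mp hpr).2)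
  obtain ⟨w, hw⟩ := hfin.infinite_compl.nonempty
  refine ⟨w, fun u hu v hv huv heq => ?_⟩
  apply hw
  rw [hBad]
  refine Set.mem_biUnion
    (Finset.mem_coe.mpr (Finset.mem_filter.mpr ⟨Finset.mem_product.mpr ⟨hu, hv⟩, huv⟩))
    (?_ : (D (u, v)).eval w = 0)
  · simp only [hD, Polynomial.eval_finset_sum, Polynomial.eval_mul, Polynomial.eval_C,
      Polynomial.eval_pow, Polynomial.eval_X]
    simp only [sub_mul, Finset.sum_sub_distrib]
    rw [heq, sub_self]

/-- Linear independence of the functions `t ↦ (1 + β i * t)^n` for distinct `β i`,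
`k ≤ n + 1`. -/
lemma poly_indep (n k : ℕ) (hk : k ≤ n + 1) (β c : Fin k → ℝ)
    (hβ : Function.Injective β)
    (h : ∀ t : ℝ, ∑ i, c i * (1 + β i * t) ^ n = 0) : ∀ i, c i = 0 := by
  classical
  have expand : ∀ t : ℝ, ∑ i, c i * (1 + β i * t) ^ n
      = ∑ e ∈ Finset.range (n + 1), (∑ i, c i * ((n.choose e : ℝ) * β i ^ e)) * t ^ e := by
    intro t
    have h1 : ∀ i : Fin k, (1 + β i * t) ^ n
        = ∑ e ∈ Finset.range (n + 1), (β i * t) ^ e * (n.choose e : ℝ) := by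
      intro i
      rw [add_comm, add_pow]
      exact Finset.sum_congr rfl fun e _ => by rw [one_pow, mul_one]
    simp_rw [h1, Finset.mul_sum, Finset.sum_mul]
    rw [Finset.sum_comm]
    exact Finset.sum_congr rfl fun e _ => Finset.sum_congr rfl fun i _ => by ring
  set P : Polynomial ℝ := ∑ e ∈ Finset.range (n + 1),
      Polynomial.C (∑ i, c i * ((n.choose e : ℝ) * β i ^ e)) * Polynomial.X ^ e with hP
  have hPeval : ∀ t : ℝ, P.eval t = 0 := by
    intro t
    simp only [hP, Polynomial.eval_finset_sum, Polynomial.eval_mul, Polynomial.eval_C,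
      Polynomial.eval_pow, Polynomial.eval_X]
    rw [← expand t, h t]
  have hP0 : P = 0 := Polynomial.funext fun t => by rw [hPeval t, Polynomial.eval_zero]
  have hcoeff : ∀ d : ℕ, d ≤ n → ∑ i, c i * ((n.choose d : ℝ) * β i ^ d) = 0 := by
    intro d hd
    have hc := congrArg (fun Q => Polynomial.coeff Q d) hP0
    simp only [hP, Polynomial.finset_sum_coeff, Polynomial.coeff_C_mul,
      Polynomial.coeff_X_pow, Polynomial.coeff_zero] at hc
    rw [Finset.sum_eq_single d] at hc
    · simpa using hc
    · intro e _ he; simp [Ne.symm he]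
    · intro hdm; exact absurd (Finset.mem_range.mpr (Nat.lt_succ_of_le hd)) hdm
  have hvdm : ∀ d : Fin k, ∑ i, c i * β i ^ (d : ℕ) = 0 := by
    intro d
    have hdn : (d : ℕ) ≤ n := Nat.lt_succ_iff.mp (lt_of_lt_of_le d.isLt hk)
    have h0 := hcoeff d hdn
    have hch : (n.choose (d : ℕ) : ℝ) ≠ 0 := by
      exact_mod_cast (Nat.choose_pos hdn).ne'
    have hmm : (n.choose (d : ℕ) : ℝ) * ∑ i, c i * β i ^ (d : ℕ) = 0 := by
      rw [Finset.mul_sum]; rw [← h0]; exact Finset.sum_congr rfl fun i _ => by ring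
    rcases mul_eq_zero.mp hmm with h | h
    · exact absurd h hch
    · exact h
  have := Matrix.eq_zero_of_forall_pow_sum_mul_pow_eq_zero hβ hvdm
  exact fun i => congrFun this i

/-- Identifiability of multinomial mixture models: if `n ≥ 2m - 1`, two mixtures of
multinomial distributions `Q_{n,·,q}` (with distinct components, positive weights summing to
one, and the second mixture of order `s ≤ m`) that are equal as measures on `C_{n,q}` must
coincide up to a permutation. -/
theorem multinomial_mixture_identifiable
    (m s n q : ℕ) (hm : 0 < m) (hq : 0 < q) (hn0 : 0 < n)
    (hn : 2 * m - 1 ≤ n) (hs : s ≤ m)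
    (a : Fin m → ℝ) (b : Fin s → ℝ)
    (p : Fin m → Fin q → ℝ) (r : Fin s → Fin q → ℝ)
    (hp0 : ∀ i j, 0 ≤ p i j) (hp1 : ∀ i, ∑ j, p i j = 1)
    (hr0 : ∀ i j, 0 ≤ r i j) (hr1 : ∀ i, ∑ j, r i j = 1)
    (hpd : ∀ i i', i ≠ i' →
      ∃ x ∈ Cnq n q, multinomialMass n (p i) x ≠ multinomialMass n (p i') x)
    (hrd : ∀ j j', j ≠ j' →
      ∃ x ∈ Cnq n q, multinomialMass n (r j) x ≠ multinomialMass n (r j') x)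
    (ha : ∀ i, 0 < a i) (hb : ∀ j, 0 < b j)
    (hsa : ∑ i, a i = 1) (hsb : ∑ j, b j = 1)
    (heq : ∀ x ∈ Cnq n q,
      ∑ i, a i * multinomialMass n (p i) x = ∑ j, b j * multinomialMass n (r j) x) :
    ∃ σ : Fin m ≃ Fin s, ∀ i, a i = b (σ i) ∧ p i = r (σ i) := by
  classical
  have hpinj : Function.Injective p := by
    intro i i' hpp
    by_contra hne
    obtain ⟨x, -, hx⟩ := hpd i i' hne
    exact hx (by rw [hpp])
  have hrinj : Function.Injective r := by
    intro j j' hrr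
    by_contra hne
    obtain ⟨x, -, hx⟩ := hrd j j' hne
    exact hx (by rw [hrr])
  set V : Finset (Fin q → ℝ) := (Finset.univ.image p) ∪ (Finset.univ.image r) with hV
  set A : (Fin q → ℝ) → ℝ := fun u =>
      (∑ i ∈ Finset.univ.filter fun i => p i = u, a i)
        - ∑ j ∈ Finset.univ.filter fun j => r j = u, b j with hA
  have hsum1 : ∀ x ∈ Cnq n q, ∑ u ∈ V, A u * multinomialMass n u x = 0 := by
    intro x hx
    have h1 : ∑ u ∈ V, (∑ i ∈ Finset.univ.filter fun i => p i = u, a i)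
          * multinomialMass n u x = ∑ i, a i * multinomialMass n (p i) x := by
      rw [← Finset.sum_fiberwise_of_maps_to (g := p) (t := V)
        (fun i _ => Finset.mem_union_left _ (Finset.mem_image_of_mem p (Finset.mem_univ i)))
        (fun i => a i * multinomialMass n (p i) x)]
      refine Finset.sum_congr rfl fun u hu => ?_
      rw [Finset.sum_mul]
      refine Finset.sum_congr rfl fun i hi => ?_
      rw [(Finset.mem_filter.mp hi).2]
    have h2 : ∑ u ∈ V, (∑ j ∈ Finset.univ.filter fun j => r j = u, b j)
          * multinomialMass n u x = ∑ j, b j * multinomialMass n (r j) x := by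
      rw [← Finset.sum_fiberwise_of_maps_to (g := r) (t := V)
        (fun j _ => Finset.mem_union_right _ (Finset.mem_image_of_mem r (Finset.mem_univ j)))
        (fun j => b j * multinomialMass n (r j) x)]
      refine Finset.sum_congr rfl fun u hu => ?_
      rw [Finset.sum_mul]
      refine Finset.sum_congr rfl fun j hj => ?_
      rw [(Finset.mem_filter.mp hj).2]
    simp only [hA, sub_mul, Finset.sum_sub_distrib]
    rw [h1, h2, heq x hx, sub_self]
  have hsum2 : ∀ z : Fin q → ℝ, ∑ u ∈ V, A u * (∑ j, u j * z j) ^ n = 0 := by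
    intro z
    have hswap : ∑ u ∈ V, A u * (∑ j, u j * z j) ^ n
        = ∑ x ∈ Cnq n q, (∑ u ∈ V, A u * multinomialMass n u x) * ∏ j, z j ^ x j := by
      simp_rw [mult_thm, Finset.mul_sum, Finset.sum_mul]
      rw [Finset.sum_comm]
      exact Finset.sum_congr rfl fun x _ => Finset.sum_congr rfl fun u _ => by ring
    rw [hswap]
    exact Finset.sum_eq_zero fun x hx => by rw [hsum1 x hx, zero_mul]
  have hVsum : ∀ u ∈ V, ∑ j, u j = 1 := by
    intro u hu
    rcases Finset.mem_union.mp hu with h | h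
    · obtain ⟨i, -, rfl⟩ := Finset.mem_image.mp h; exact hp1 i
    · obtain ⟨j, -, rfl⟩ := Finset.mem_image.mp h; exact hr1 j
  obtain ⟨w, hw⟩ := exists_good_w V
  set β : (Fin q → ℝ) → ℝ := fun u => ∑ j, u j * w ^ (j : ℕ) with hβ
  have hcard : V.card ≤ n + 1 := by
    have h1 : V.card ≤ m + s := le_trans (Finset.card_union_le _ _)
      (add_le_add (le_trans (Finset.card_image_le) (by simp))
        (le_trans (Finset.card_image_le) (by simp)))
    omega
  have hzero : ∀ u ∈ V, A u = 0 := by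
    intro u hu
    set e := V.equivFin with he
    have hinj : Function.Injective (fun i : Fin V.card => β ((e.symm i : V) : Fin q → ℝ)) := by
      intro i i' hβe
      have h1 : ((e.symm i : V) : Fin q → ℝ) = ((e.symm i' : V) : Fin q → ℝ) := by
        by_contra hne
        exact hw _ (e.symm i).2 _ (e.symm i').2 hne hβe
      exact e.symm.injective (Subtype.ext h1)
    have hhyp : ∀ t : ℝ, ∑ i : Fin V.card,
        A ((e.symm i : V) : Fin q → ℝ) * (1 + β ((e.symm i : V) : Fin q → ℝ) * t) ^ n = 0 := by
      intro t
      have hsv : ∑ i : Fin V.card,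
          A ((e.symm i : V) : Fin q → ℝ) * (1 + β ((e.symm i : V) : Fin q → ℝ) * t) ^ n
          = ∑ v ∈ V, A v * (1 + β v * t) ^ n := by
        exact (Equiv.sum_comp e.symm
            (fun v : V => A (v : Fin q → ℝ) * (1 + β (v : Fin q → ℝ) * t) ^ n)).trans
          (Finset.sum_coe_sort V (fun v => A v * (1 + β v * t) ^ n))
      rw [hsv]
      have := hsum2 (fun j => 1 + w ^ (j : ℕ) * t)
      rw [← this]
      refine Finset.sum_congr rfl fun v hv => ?_
      congr 1
      have : ∑ j, v j * (1 + w ^ (j : ℕ) * t) = ∑ j, v j + (∑ j, v j * w ^ (j : ℕ)) * t := by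
        rw [Finset.sum_mul, ← Finset.sum_add_distrib]
        exact Finset.sum_congr rfl fun j _ => by ring
      rw [this, hVsum v hv, hβ]
    have hall := poly_indep n V.card hcard _ _ hinj hhyp
    have := hall (e ⟨u, hu⟩)
    simpa using this
  have key : ∀ i, A (p i) = 0 := fun i =>
    hzero _ (Finset.mem_union_left _ (Finset.mem_image_of_mem p (Finset.mem_univ i)))
  have hfilp : ∀ i : Fin m, (Finset.univ.filter fun i' => p i' = p i) = {i} := by
    intro i
    ext i'
    simp only [Finset.mem_filter, Finset.mem_univ, true_and, Finset.mem_singleton]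
    exact ⟨fun h => hpinj h, fun h => by rw [h]⟩
  have hex : ∀ i, ∃ j, r j = p i := by
    intro i
    by_contra hno
    push_neg at hno
    have hemp : (Finset.univ.filter fun j => r j = p i) = ∅ := by
      ext j; simp [hno j]
    have := key i
    rw [hA] at this
    simp only [hfilp i, hemp, Finset.sum_singleton, Finset.sum_empty, sub_zero] at this
    exact absurd this (ne_of_gt (ha i))
  choose σ0 hσ0 using hex
  have hfilr : ∀ i, (Finset.univ.filter fun j => r j = p i) = {σ0 i} := by
    intro i
    ext j
    simp only [Finset.mem_filter, Finset.mem_univ, true_and, Finset.mem_singleton]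
    exact ⟨fun h => hrinj (h.trans (hσ0 i).symm), fun h => by rw [h, hσ0 i]⟩
  have hab : ∀ i, a i = b (σ0 i) := by
    intro i
    have := key i
    rw [hA] at this
    simp only [hfilp i, hfilr i, Finset.sum_singleton] at this
    linarith
  have hσinj : Function.Injective σ0 := by
    intro i i' h
    exact hpinj (by rw [← hσ0 i, ← hσ0 i', h])
  have hms : m ≤ s := by simpa using Fintype.card_le_of_injective σ0 hσinj
  have hbij : Function.Bijective σ0 :=
    (Fintype.bijective_iff_injective_and_card σ0).mpr ⟨hσinj, by simp [le_antisymm hs hms]⟩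
  exact ⟨Equiv.ofBijective σ0 hbij, fun i => ⟨hab i, (hσ0 i).symm⟩⟩
end

section
/- Fix m, s, n, q ∈ ℕ₊ with n ≥ 2m. Suppose Σ_{i=1}^m a_i Q_{n,p_i,q} = Σ_{j=1}^s b_j Q_{n,r_j,q} where the Q_{n,p_i,q} are distinct, the Q_{n,r_j,q} are distinct, all a_i, b_j > 0, and Σ a_i = Σ b_j = 1 (with no restriction relating s to m). Then s = m and there is a permutation σ with a_i = b_{σ(i)} and p_i = r_{σ(i)} for all i. -/
open Finset

lemma mem_Cnq {n q : ℕ} {x : Fin q → ℕ} : x ∈ Cnq n q ↔ ∑ j, x j = n := by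
  simp only [Cnq, Finset.mem_filter, Fintype.mem_piFinset, Finset.mem_range]
  constructor
  · exact fun h => h.2
  · intro h
    refine ⟨fun j => ?_, h⟩
    have : x j ≤ ∑ i, x i := Finset.single_le_sum (fun i _ => Nat.zero_le _) (Finset.mem_univ j)
    omega

/-- ℕ-version of the factorial bookkeeping. -/
lemma nat_factorial_identity {q : ℕ} (n k : ℕ) (hk : k ≤ n) (t y : Fin q → ℕ)
    (hy : ∑ j, y j = n - k) (ht : ∑ j, t j = k) :
    n.factorial * ∏ j, (y j + t j).descFactorial (t j)
      = n.descFactorial k * Nat.multinomial Finset.univ y * ∏ j, (y j + t j).factorial := by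
  have h1 : ∀ j : Fin q, (y j).factorial * (y j + t j).descFactorial (t j)
      = (y j + t j).factorial := fun j => by
    have := Nat.factorial_mul_descFactorial (n := y j + t j) (k := t j) (Nat.le_add_left _ _)
    simpa using this
  have h2 : (∏ j, (y j).factorial) * Nat.multinomial Finset.univ y = (n - k).factorial := by
    rw [Nat.multinomial_spec, hy]
  have h3 : (n - k).factorial * n.descFactorial k = n.factorial :=
    Nat.factorial_mul_descFactorial hk
  calc n.factorial * ∏ j, (y j + t j).descFactorial (t j)
      = ((n - k).factorial * n.descFactorial k) * ∏ j, (y j + t j).descFactorial (t j) := by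
        rw [h3]
    _ = n.descFactorial k * Nat.multinomial Finset.univ y *
          ((∏ j, (y j).factorial) * ∏ j, (y j + t j).descFactorial (t j)) := by
        rw [← h2]; ring
    _ = n.descFactorial k * Nat.multinomial Finset.univ y * ∏ j, (y j + t j).factorial := by
        rw [← Finset.prod_mul_distrib]
        simp_rw [h1]

/-- Factorial-moment identity for the multinomial mass function. -/
lemma moment_identity {q : ℕ} (n : ℕ) (p : Fin q → ℝ) (hp1 : ∑ j, p j = 1)
    (t : Fin q → ℕ) (ht : ∑ j, t j ≤ n) :
    ∑ x ∈ Cnq n q, multinomialMass n p x * ∏ j, ((x j).descFactorial (t j) : ℝ)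
      = (n.descFactorial (∑ j, t j) : ℝ) * ∏ j, p j ^ t j := by
  classical
  set k := ∑ j, t j with hk
  -- restrict to x with t ≤ x
  have hrestrict : ∑ x ∈ Cnq n q, multinomialMass n p x * ∏ j, ((x j).descFactorial (t j) : ℝ)
      = ∑ x ∈ (Cnq n q).filter (fun x => ∀ j, t j ≤ x j),
          multinomialMass n p x * ∏ j, ((x j).descFactorial (t j) : ℝ) := by
    refine (Finset.sum_subset (Finset.filter_subset _ _) ?_).symm
    intro x hx hnx
    simp only [Finset.mem_filter, hx, true_and, not_forall, not_le] at hnx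
    obtain ⟨j, hj⟩ := hnx
    have : ((x j).descFactorial (t j) : ℝ) = 0 := by
      rw [Nat.descFactorial_eq_zero_iff_lt.mpr hj]; norm_num
    rw [Finset.prod_eq_zero (Finset.mem_univ j) this, mul_zero]
  rw [hrestrict]
  -- reindex by y = x - t
  have hbij : ∑ x ∈ (Cnq n q).filter (fun x => ∀ j, t j ≤ x j),
        multinomialMass n p x * ∏ j, ((x j).descFactorial (t j) : ℝ)
      = ∑ y ∈ Finset.piAntidiag Finset.univ (n - k),
          multinomialMass n p (fun j => y j + t j) *
            ∏ j, (((y j + t j).descFactorial (t j) : ℕ) : ℝ) := by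
    refine Finset.sum_nbij' (fun x => fun j => x j - t j) (fun y => fun j => y j + t j) ?_ ?_ ?_ ?_ ?_
    · intro x hx
      simp only [Finset.mem_filter, mem_Cnq] at hx
      simp only [Finset.mem_piAntidiag, Finset.mem_univ, implies_true, and_true]
      show ∑ j, (x j - t j) = n - k
      have : ∑ j, (x j - t j) = ∑ j, x j - ∑ j, t j :=
        Finset.sum_tsub_distrib _ fun j _ => hx.2 j
      rw [this, hx.1]
    · intro y hy
      simp only [Finset.mem_piAntidiag, Finset.mem_univ, implies_true, and_true] at hy
      simp only [Finset.mem_filter, mem_Cnq]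
      constructor
      · show ∑ j, (y j + t j) = n
        rw [Finset.sum_add_distrib, hy, ← hk]; omega
      · intro j
        show t j ≤ y j + t j
        omega
    · intro x hx
      simp only [Finset.mem_filter] at hx
      funext j
      show x j - t j + t j = x j
      have := hx.2 j
      omega
    · intro y hy
      funext j
      show y j + t j - t j = y j
      omega
    · intro x hx
      simp only [Finset.mem_filter] at hx
      have hxt : ∀ j, x j - t j + t j = x j := fun j => by have := hx.2 j; omega
      show multinomialMass n p x * ∏ j, ((x j).descFactorial (t j) : ℝ)
          = multinomialMass n p (fun j => x j - t j + t j) *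
              ∏ j, (((x j - t j + t j).descFactorial (t j) : ℕ) : ℝ)
      congr 1
      · congr 1
        funext j
        rw [hxt j]
      · exact Finset.prod_congr rfl fun j _ => by rw [hxt j]
  rw [hbij]
  -- now expand the RHS using the multinomial theorem
  have hpow : (1 : ℝ) = ∑ y ∈ Finset.piAntidiag Finset.univ (n - k),
      (Nat.multinomial Finset.univ y : ℝ) * ∏ j, p j ^ y j := by
    have := Finset.sum_pow_eq_sum_piAntidiag (Finset.univ : Finset (Fin q)) p (n - k)
    rw [hp1, one_pow] at this
    exact this
  rw [show (n.descFactorial k : ℝ) * ∏ j, p j ^ t j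
      = ∑ y ∈ Finset.piAntidiag Finset.univ (n - k),
          (n.descFactorial k : ℝ) * ((Nat.multinomial Finset.univ y : ℝ) * ∏ j, p j ^ y j)
            * ∏ j, p j ^ t j by
    rw [← Finset.sum_mul, ← Finset.mul_sum, ← hpow, mul_one]]
  refine Finset.sum_congr rfl fun y hy => ?_
  simp only [Finset.mem_piAntidiag, Finset.mem_univ, implies_true, and_true] at hy
  -- termwise identity
  unfold multinomialMass
  have hfac : ∀ j : Fin q, (0:ℝ) < ((y j + t j).factorial : ℝ) := fun j => by
    exact_mod_cast Nat.factorial_pos _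
  have hprodfac : (0:ℝ) < ∏ j, ((y j + t j).factorial : ℝ) :=
    Finset.prod_pos fun j _ => hfac j
  have hnat := nat_factorial_identity n k ht t y hy hk.symm
  have hcast : (n.factorial : ℝ) * ∏ j, ((y j + t j).descFactorial (t j) : ℝ)
      = (n.descFactorial k : ℝ) * (Nat.multinomial Finset.univ y : ℝ) *
          ∏ j, ((y j + t j).factorial : ℝ) := by
    exact_mod_cast congrArg (Nat.cast : ℕ → ℝ) hnat
  have hsplit : ∏ j, p j ^ (y j + t j) = (∏ j, p j ^ y j) * ∏ j, p j ^ t j := by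
    rw [← Finset.prod_mul_distrib]
    refine Finset.prod_congr rfl fun j _ => pow_add _ _ _
  rw [hsplit, div_mul_eq_mul_div, div_mul_eq_mul_div, div_eq_iff (ne_of_gt hprodfac)]
  linear_combination ((∏ j, p j ^ y j) * ∏ j, p j ^ t j) * hcast

/-- Determinedness of multinomial mixture models: if `n ≥ 2m`, two mixtures of multinomial
distributions `Q_{n,·,q}` (with distinct components and positive weights summing to one,
with no restriction relating the order `s` of the second mixture to `m`) that are equal as
measures on `C_{n,q}` must coincide up to a permutation. -/
theorem multinomial_mixture_determined
    (m s n q : ℕ) (hm : 0 < m) (hs : 0 < s) (hq : 0 < q) (hn0 : 0 < n)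
    (hn : 2 * m ≤ n)
    (a : Fin m → ℝ) (b : Fin s → ℝ)
    (p : Fin m → Fin q → ℝ) (r : Fin s → Fin q → ℝ)
    (hp0 : ∀ i j, 0 ≤ p i j) (hp1 : ∀ i, ∑ j, p i j = 1)
    (hr0 : ∀ i j, 0 ≤ r i j) (hr1 : ∀ i, ∑ j, r i j = 1)
    (hpd : ∀ i i', i ≠ i' →
      ∃ x ∈ Cnq n q, multinomialMass n (p i) x ≠ multinomialMass n (p i') x)
    (hrd : ∀ j j', j ≠ j' →
      ∃ x ∈ Cnq n q, multinomialMass n (r j) x ≠ multinomialMass n (r j') x)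
    (ha : ∀ i, 0 < a i) (hb : ∀ j, 0 < b j)
    (hsa : ∑ i, a i = 1) (hsb : ∑ j, b j = 1)
    (heq : ∀ x ∈ Cnq n q,
      ∑ i, a i * multinomialMass n (p i) x = ∑ j, b j * multinomialMass n (r j) x) :
    ∃ σ : Fin m ≃ Fin s, ∀ i, a i = b (σ i) ∧ p i = r (σ i) := by
  classical
  -- Step 1: moment equality
  have hmom : ∀ t : Fin q → ℕ, ∑ l, t l ≤ n →
      ∑ i, a i * ∏ l, p i l ^ t l = ∑ j, b j * ∏ l, r j l ^ t l := by
    intro t ht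
    have hL : ∀ (k' : ℕ) (c : Fin k' → ℝ) (u : Fin k' → Fin q → ℝ),
        (∀ i, ∑ l, u i l = 1) →
        ∑ x ∈ Cnq n q, (∑ i, c i * multinomialMass n (u i) x) *
            ∏ l, ((x l).descFactorial (t l) : ℝ)
          = (n.descFactorial (∑ l, t l) : ℝ) * ∑ i, c i * ∏ l, u i l ^ t l := by
      intro k' c u hu1
      calc ∑ x ∈ Cnq n q, (∑ i, c i * multinomialMass n (u i) x) *
              ∏ l, ((x l).descFactorial (t l) : ℝ)
          = ∑ x ∈ Cnq n q, ∑ i, c i *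
              (multinomialMass n (u i) x * ∏ l, ((x l).descFactorial (t l) : ℝ)) := by
            refine Finset.sum_congr rfl fun x _ => ?_
            rw [Finset.sum_mul]
            exact Finset.sum_congr rfl fun i _ => by ring
        _ = ∑ i, c i * ∑ x ∈ Cnq n q,
              multinomialMass n (u i) x * ∏ l, ((x l).descFactorial (t l) : ℝ) := by
            rw [Finset.sum_comm]
            exact Finset.sum_congr rfl fun i _ => (Finset.mul_sum _ _ _).symm
        _ = ∑ i, c i * ((n.descFactorial (∑ l, t l) : ℝ) * ∏ l, u i l ^ t l) := by
            refine Finset.sum_congr rfl fun i _ => ?_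
            rw [moment_identity n (u i) (hu1 i) t ht]
        _ = (n.descFactorial (∑ l, t l) : ℝ) * ∑ i, c i * ∏ l, u i l ^ t l := by
            rw [Finset.mul_sum]
            exact Finset.sum_congr rfl fun i _ => by ring
    have h1 : ∑ x ∈ Cnq n q, (∑ i, a i * multinomialMass n (p i) x) *
          ∏ l, ((x l).descFactorial (t l) : ℝ)
        = ∑ x ∈ Cnq n q, (∑ j, b j * multinomialMass n (r j) x) *
          ∏ l, ((x l).descFactorial (t l) : ℝ) :=
      Finset.sum_congr rfl fun x hx => by rw [heq x hx]
    rw [hL m a p hp1, hL s b r hr1] at h1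
    have hdF : (n.descFactorial (∑ l, t l) : ℝ) ≠ 0 := by
      have : n.descFactorial (∑ l, t l) ≠ 0 := fun h =>
        absurd (Nat.descFactorial_eq_zero_iff_lt.mp h) (not_lt.mpr ht)
      exact_mod_cast this
    exact mul_left_cancel₀ hdF h1
  -- Step 2: polynomial moment transfer
  have hpoly : ∀ P : MvPolynomial (Fin q) ℝ, P.totalDegree ≤ n →
      ∑ i, a i * MvPolynomial.eval (p i) P = ∑ j, b j * MvPolynomial.eval (r j) P := by
    intro P hP
    have hev : ∀ u : Fin q → ℝ, MvPolynomial.eval u P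
        = ∑ d ∈ P.support, MvPolynomial.coeff d P * ∏ l, u l ^ d l := by
      intro u
      conv_lhs => rw [P.as_sum]
      rw [map_sum]
      refine Finset.sum_congr rfl fun d _ => ?_
      rw [MvPolynomial.eval_monomial]
      congr 1
      exact Finsupp.prod_fintype _ _ fun l => pow_zero (u l)
    simp_rw [hev, Finset.mul_sum]
    rw [Finset.sum_comm]
    conv_rhs => rw [Finset.sum_comm]
    refine Finset.sum_congr rfl fun d hd => ?_
    have hdeg : ∑ l, d l ≤ n := by
      have h1 := MvPolynomial.le_totalDegree hd
      have h2 : (d.sum fun _ e => e) = ∑ l, d l := Finsupp.sum_fintype _ _ fun _ => rfl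
      omega
    have hmd := hmom (fun l => d l) hdeg
    calc ∑ i, a i * (MvPolynomial.coeff d P * ∏ l, p i l ^ d l)
        = MvPolynomial.coeff d P * ∑ i, a i * ∏ l, p i l ^ d l := by
          rw [Finset.mul_sum]; exact Finset.sum_congr rfl fun i _ => by ring
      _ = MvPolynomial.coeff d P * ∑ j, b j * ∏ l, r j l ^ d l := by rw [hmd]
      _ = ∑ j, b j * (MvPolynomial.coeff d P * ∏ l, r j l ^ d l) := by
          rw [Finset.mul_sum]; exact Finset.sum_congr rfl fun j _ => by ring
  -- distinctness of parameters
  have hpne : ∀ i i', i ≠ i' → p i ≠ p i' := by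
    intro i i' hne hEq
    obtain ⟨x, _, hx⟩ := hpd i i' hne
    exact hx (by rw [hEq])
  have hrne : ∀ j j', j ≠ j' → r j ≠ r j' := by
    intro j j' hne hEq
    obtain ⟨x, _, hx⟩ := hrd j j' hne
    exact hx (by rw [hEq])
  -- Step 3: every r j is some p i
  set P : MvPolynomial (Fin q) ℝ :=
    ∏ i, (∑ l, (MvPolynomial.X l - MvPolynomial.C (p i l)) ^ 2) with hPdef
  have hfacdeg : ∀ i : Fin m, (∑ l, (MvPolynomial.X l - MvPolynomial.C (p i l)) ^ 2 :
      MvPolynomial (Fin q) ℝ).totalDegree ≤ 2 := by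
    intro i
    refine le_trans (MvPolynomial.totalDegree_finset_sum _ _) (Finset.sup_le fun l _ => ?_)
    refine le_trans (MvPolynomial.totalDegree_pow _ _) ?_
    have : ((MvPolynomial.X l - MvPolynomial.C (p i l)) :
        MvPolynomial (Fin q) ℝ).totalDegree ≤ 1 := by
      refine le_trans (MvPolynomial.totalDegree_sub_C_le _ _) ?_
      rw [MvPolynomial.totalDegree_X]
    omega
  have hPdeg : P.totalDegree ≤ n := by
    refine le_trans (MvPolynomial.totalDegree_finset_prod _ _) (le_trans
      (Finset.sum_le_sum (fun i _ => hfacdeg i)) ?_)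
    simp only [Finset.sum_const, Finset.card_univ, Fintype.card_fin, smul_eq_mul]
    omega
  have hPeval : ∀ u : Fin q → ℝ,
      MvPolynomial.eval u P = ∏ i, ∑ l, (u l - p i l) ^ 2 := by
    intro u
    simp only [hPdef, map_prod, map_sum, map_pow, map_sub, MvPolynomial.eval_X,
      MvPolynomial.eval_C]
  have hL0 : ∀ i, MvPolynomial.eval (p i) P = 0 := by
    intro i
    rw [hPeval]
    refine Finset.prod_eq_zero (Finset.mem_univ i) ?_
    simp
  have hRnn : ∀ j, 0 ≤ MvPolynomial.eval (r j) P := fun j => by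
    rw [hPeval]
    exact Finset.prod_nonneg fun i _ => Finset.sum_nonneg fun l _ => sq_nonneg _
  have hsum0 : ∑ j, b j * MvPolynomial.eval (r j) P = 0 := by
    rw [← hpoly P hPdeg]
    simp [hL0]
  have hR0 : ∀ j, MvPolynomial.eval (r j) P = 0 := by
    intro j
    have h := (Finset.sum_eq_zero_iff_of_nonneg
      (fun j _ => mul_nonneg (hb j).le (hRnn j))).mp hsum0 j (Finset.mem_univ j)
    rcases mul_eq_zero.mp h with h | h
    · exact absurd h (ne_of_gt (hb j))
    · exact h
  have hτex : ∀ j, ∃ i, r j = p i := by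
    intro j
    have h := hR0 j
    rw [hPeval] at h
    obtain ⟨i, _, hi⟩ := Finset.prod_eq_zero_iff.mp h
    refine ⟨i, funext fun l => ?_⟩
    have h2 := (Finset.sum_eq_zero_iff_of_nonneg
      (fun l _ => sq_nonneg _)).mp hi l (Finset.mem_univ l)
    have h3 : r j l - p i l = 0 := by
      have := sq_eq_zero_iff.mp h2
      exact this
    linarith
  choose τ hτ using hτex
  have hτinj : Function.Injective τ := by
    intro j j' hjj
    by_contra hne
    exact hrne j j' hne (by rw [hτ j, hτ j', hjj])
  -- Step 4: Lagrange interpolation gives weights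
  have hLag : ∀ i0 : Fin m, a i0 = ∑ j, b j * (if τ j = i0 then 1 else 0) := by
    intro i0
    have hcoord : ∀ i : Fin m, ∃ l, i ≠ i0 → p i l ≠ p i0 l := by
      intro i
      by_cases hne : i = i0
      · exact ⟨⟨0, hq⟩, fun h => absurd hne h⟩
      · obtain ⟨l, hl⟩ : ∃ l, p i l ≠ p i0 l := by
          by_contra hall
          push_neg at hall
          exact hpne i i0 hne (funext hall)
        exact ⟨l, fun _ => hl⟩
    choose c hc using hcoord
    set L : MvPolynomial (Fin q) ℝ :=
      ∏ i ∈ Finset.univ.erase i0,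
        MvPolynomial.C (p i0 (c i) - p i (c i))⁻¹ *
          (MvPolynomial.X (c i) - MvPolynomial.C (p i (c i))) with hLdef
    have hLfacdeg : ∀ i : Fin m, (MvPolynomial.C (p i0 (c i) - p i (c i))⁻¹ *
        (MvPolynomial.X (c i) - MvPolynomial.C (p i (c i))) :
          MvPolynomial (Fin q) ℝ).totalDegree ≤ 1 := by
      intro i
      refine le_trans (MvPolynomial.totalDegree_mul _ _) ?_
      have h1 : (MvPolynomial.C (p i0 (c i) - p i (c i))⁻¹ :
          MvPolynomial (Fin q) ℝ).totalDegree = 0 := MvPolynomial.totalDegree_C _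
      have h2 : ((MvPolynomial.X (c i) - MvPolynomial.C (p i (c i))) :
          MvPolynomial (Fin q) ℝ).totalDegree ≤ 1 := by
        refine le_trans (MvPolynomial.totalDegree_sub_C_le _ _) ?_
        rw [MvPolynomial.totalDegree_X]
      omega
    have hLdeg : L.totalDegree ≤ n := by
      refine le_trans (MvPolynomial.totalDegree_finset_prod _ _) (le_trans
        (Finset.sum_le_sum (fun i _ => hLfacdeg i)) ?_)
      simp only [Finset.sum_const, smul_eq_mul, mul_one]
      have : (Finset.univ.erase i0).card ≤ m := by
        refine le_trans (Finset.card_le_card (Finset.erase_subset _ _)) ?_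
        simp
      omega
    have hLeval : ∀ u : Fin q → ℝ, MvPolynomial.eval u L
        = ∏ i ∈ Finset.univ.erase i0,
            (p i0 (c i) - p i (c i))⁻¹ * (u (c i) - p i (c i)) := by
      intro u
      simp only [hLdef, map_prod, map_mul, map_sub, MvPolynomial.eval_X, MvPolynomial.eval_C]
    have hL1 : MvPolynomial.eval (p i0) L = 1 := by
      rw [hLeval]
      refine Finset.prod_eq_one fun i hi => ?_
      have hne : i ≠ i0 := (Finset.mem_erase.mp hi).1
      have : p i0 (c i) - p i (c i) ≠ 0 := sub_ne_zero.mpr (Ne.symm (hc i hne))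
      field_simp
    have hL0' : ∀ i : Fin m, i ≠ i0 → MvPolynomial.eval (p i) L = 0 := by
      intro i hne
      rw [hLeval]
      refine Finset.prod_eq_zero (Finset.mem_erase.mpr ⟨hne, Finset.mem_univ i⟩) ?_
      simp
    have hkey := hpoly L hLdeg
    have hlhs : ∑ i, a i * MvPolynomial.eval (p i) L = a i0 := by
      rw [Finset.sum_eq_single i0]
      · rw [hL1, mul_one]
      · intro i _ hne
        rw [hL0' i hne, mul_zero]
      · intro h
        exact absurd (Finset.mem_univ i0) h
    have hrhs : ∀ j, MvPolynomial.eval (r j) L = if τ j = i0 then 1 else 0 := by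
      intro j
      rw [hτ j]
      by_cases h : τ j = i0
      · rw [if_pos h, h, hL1]
      · rw [if_neg h, hL0' (τ j) h]
    rw [hlhs] at hkey
    rw [hkey]
    exact Finset.sum_congr rfl fun j _ => by rw [hrhs j]
  have hτsurj : Function.Surjective τ := by
    intro i0
    by_contra hns
    push_neg at hns
    have h0 : a i0 = 0 := by
      rw [hLag i0]
      refine Finset.sum_eq_zero fun j _ => ?_
      rw [if_neg (hns j), mul_zero]
    exact absurd h0 (ne_of_gt (ha i0))
  have hbij : Function.Bijective τ := ⟨hτinj, hτsurj⟩
  let e := Equiv.ofBijective τ hbij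
  refine ⟨e.symm, fun i => ?_⟩
  have hti : τ (e.symm i) = i := e.apply_symm_apply i
  constructor
  · rw [hLag i, Finset.sum_eq_single (e.symm i)]
    · rw [if_pos hti, mul_one]
    · intro j _ hne
      rw [if_neg, mul_zero]
      intro hji
      exact hne (hτinj (hji.trans hti.symm))
    · intro h
      exact absurd (Finset.mem_univ _) h
  · rw [hτ (e.symm i), hti]
end
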